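/- arXiv:1906.00036 — 9 statements merged into one kernel-verified Lean document; each statement's English description precedes it below -/
import Mathlib

section
/- For the set partition lattice Πₙ ordered by refinement, the Möbius function from the bottom element (the partition into singletons) to a partition π = {B₁,...,B_k} equals (−1)^{n−k} ∏_{i=1}^{k} (#B_i − 1)!. -/
open scoped Classical

open Finset

namespace Stmt7Aux

variable {α : Type*} [DecidableEq α]

/-- signed weight of one block, depending only on its size. -/
def v (m : ℕ) : ℤ := (-1) ^ (m - 1) * Nat.factorial (m - 1)

/-- target value for one block of the coarser partition. -/
def f (m : ℕ) : ℤ := if m ≤ 1 then 1 else 0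

/-- weight of a partition. -/
def W {s : Finset α} (τ : Finpartition s) : ℤ := ∏ C ∈ τ.parts, v C.card

lemma avoid_parts_of_mem {s : Finset α} (τ : Finpartition s) {C : Finset α}
    (hC : C ∈ τ.parts) : (τ.avoid C).parts = τ.parts.erase C := by
  ext d
  rw [Finpartition.mem_avoid, mem_erase]
  constructor
  · rintro ⟨e, he, hne, rfl⟩
    have hec : e ≠ C := by rintro rfl; exact hne le_rfl
    have hdis : Disjoint e C := τ.disjoint he hC hec
    rw [Finset.sdiff_eq_self_of_disjoint hdis]
    exact ⟨hec, he⟩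
  · rintro ⟨hne, hd⟩
    have hdis : Disjoint d C := τ.disjoint hd hC hne
    exact ⟨d, hd, fun hle => τ.ne_bot hd (hdis.eq_bot_of_le hle),
      Finset.sdiff_eq_self_of_disjoint hdis⟩

lemma avoid_le_avoid {s : Finset α} {τ ρ : Finpartition s} (h : τ ≤ ρ) (C : Finset α) :
    τ.avoid C ≤ ρ.avoid C := by
  intro d hd
  rw [Finpartition.mem_avoid] at hd
  obtain ⟨e, he, hne, rfl⟩ := hd
  obtain ⟨g, hg, heg⟩ := h he
  refine ⟨g \ C, ?_, Finset.sdiff_subset_sdiff heg le_rfl⟩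
  rw [Finpartition.mem_avoid]
  exact ⟨g, hg, fun hle => hne (heg.trans hle), rfl⟩

lemma part_subset_part {s : Finset α} {τ ρ : Finpartition s} (h : τ ≤ ρ) {a : α}
    (ha : a ∈ s) : τ.part a ⊆ ρ.part a := by
  obtain ⟨e, he, hle⟩ := h (τ.part_mem.2 ha)
  have hae : a ∈ e := hle (τ.mem_part ha)
  rwa [← ρ.part_eq_of_mem he hae] at hle

/-- the one-block recurrence. -/
lemma v_add (k : ℕ) : v (k + 1) + (k : ℤ) * v k = f (k + 1) := by
  match k with
  | 0 => simp [v, f]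
  | (j+1) =>
    have h0 : f (j + 1 + 1) = 0 := by simp [f]
    rw [h0]
    show (-1 : ℤ) ^ (j + 1) * Nat.factorial (j + 1) + (↑(j + 1)) * ((-1) ^ j * Nat.factorial j) = 0
    rw [Nat.factorial_succ, pow_succ]
    push_cast
    ring

/-- Step 4: product of `f` over the parts of `ρ.avoid C`, when `C ⊆ B ∈ ρ.parts`. -/
lemma prod_f_avoid {s : Finset α} (ρ : Finpartition s) {B C : Finset α}
    (hB : B ∈ ρ.parts) (hCne : C.Nonempty) (hCB : C ⊆ B) :
    ∏ D ∈ (ρ.avoid C).parts, f D.card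
      = (∏ D ∈ ρ.parts.erase B, f D.card) * f ((B \ C).card) := by
  by_cases hBC : B ⊆ C
  · have hCB' : C = B := Finset.Subset.antisymm hCB hBC
    subst hCB'
    rw [avoid_parts_of_mem ρ hB]
    simp [f]
  · -- C ⊂ B, so B \ C is nonempty
    have hBCne : (B \ C).Nonempty := by
      rw [Finset.sdiff_nonempty]; exact hBC
    have hparts : (ρ.avoid C).parts = insert (B \ C) (ρ.parts.erase B) := by
      ext d
      rw [Finpartition.mem_avoid, mem_insert, mem_erase]
      constructor
      · rintro ⟨e, he, hne, rfl⟩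
        by_cases heB : e = B
        · subst heB; exact Or.inl rfl
        · have hdis : Disjoint e B := ρ.disjoint he hB heB
          rw [Finset.sdiff_eq_self_of_disjoint (hdis.mono_right hCB)]
          exact Or.inr ⟨heB, he⟩
      · rintro (rfl | ⟨hne, hd⟩)
        · exact ⟨B, hB, fun h => hBC h, rfl⟩
        · have hdis : Disjoint d B := ρ.disjoint hd hB hne
          refine ⟨d, hd, ?_, Finset.sdiff_eq_self_of_disjoint (hdis.mono_right hCB)⟩
          intro hle
          exact ρ.ne_bot hd ((hdis.mono_right hCB).eq_bot_of_le hle)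
    rw [hparts, Finset.prod_insert, mul_comm]
    intro hmem
    rw [mem_erase] at hmem
    obtain ⟨hne, hd⟩ := hmem
    have hdis : Disjoint (B \ C) B := ρ.disjoint hd hB hne
    exact hBCne.ne_empty (hdis.eq_bot_of_le Finset.sdiff_subset)

lemma sum_v_f {B : Finset α} {a : α} (ha : a ∈ B) :
    ∑ C ∈ B.powerset.filter (a ∈ ·), v C.card * f ((B \ C).card) = f B.card := by
  obtain ⟨k, hk⟩ : ∃ k, B.card = k + 1 :=
    ⟨B.card - 1, (Nat.succ_pred_eq_of_pos (Finset.card_pos.2 ⟨a, ha⟩)).symm⟩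
  have hsub : ∑ C ∈ (B.powerset.filter (a ∈ ·)).filter (fun C => (B \ C).card ≤ 1),
      v C.card * f ((B \ C).card) = ∑ C ∈ B.powerset.filter (a ∈ ·),
      v C.card * f ((B \ C).card) := by
    apply Finset.sum_filter_of_ne
    intro C _ hne
    by_contra h
    exact hne (by simp [f, h])
  rw [← hsub]
  have hset : (B.powerset.filter (a ∈ ·)).filter (fun C => (B \ C).card ≤ 1)
      = insert B ((B.erase a).image (fun x => B.erase x)) := by
    ext C
    simp only [Finset.mem_filter, Finset.mem_powerset, Finset.mem_insert, Finset.mem_image,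
      Finset.mem_erase]
    constructor
    · rintro ⟨⟨hCB, haC⟩, hcard⟩
      interval_cases h : (B \ C).card
      · left
        have : B \ C = ∅ := Finset.card_eq_zero.1 h
        have hBC : B ⊆ C := by
          intro x hx
          by_contra hxc
          exact (Finset.notMem_empty x) (this ▸ Finset.mem_sdiff.2 ⟨hx, hxc⟩)
        exact Finset.Subset.antisymm hCB hBC
      · right
        obtain ⟨x, hx⟩ := Finset.card_eq_one.1 h
        have hxB : x ∈ B := (Finset.mem_sdiff.1 (hx ▸ Finset.mem_singleton_self x)).1
        have hxa : x ≠ a := by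
          rintro rfl
          exact (Finset.mem_sdiff.1 (hx ▸ Finset.mem_singleton_self x)).2 haC
        refine ⟨x, ⟨hxa, hxB⟩, ?_⟩
        rw [← Finset.sdiff_singleton_eq_erase, ← hx, Finset.sdiff_sdiff_eq_self hCB]
    · rintro (rfl | ⟨x, ⟨hxa, hxB⟩, rfl⟩)
      · exact ⟨⟨le_rfl, ha⟩, by simp⟩
      · refine ⟨⟨Finset.erase_subset _ _, Finset.mem_erase.2 ⟨hxa.symm, ha⟩⟩, ?_⟩
        rw [Finset.sdiff_erase hxB]
        simp
  rw [hset]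
  have hBnotmem : B ∉ (B.erase a).image (fun x => B.erase x) := by
    intro h
    obtain ⟨x, hx, hBx⟩ := Finset.mem_image.1 h
    have hxB : x ∈ B := Finset.mem_of_mem_erase hx
    have : x ∉ B.erase x := Finset.notMem_erase x B
    rw [hBx] at this
    exact this hxB
  rw [Finset.sum_insert hBnotmem]
  have himg : ∑ C ∈ (B.erase a).image (fun x => B.erase x), v C.card * f ((B \ C).card)
      = ∑ x ∈ B.erase a, v (B.erase x).card * f ((B \ B.erase x).card) := by
    apply Finset.sum_image
    intro x hx y hy hxy
    by_contra hne
    have hxB : x ∈ B := Finset.mem_of_mem_erase hx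
    have : x ∉ B.erase x := Finset.notMem_erase x B
    rw [show B.erase x = B.erase y from hxy] at this
    exact this (Finset.mem_erase.2 ⟨hne, hxB⟩)
  rw [himg]
  have hterm : ∀ x ∈ B.erase a, v (B.erase x).card * f ((B \ B.erase x).card) = v k := by
    intro x hx
    have hxB : x ∈ B := Finset.mem_of_mem_erase hx
    rw [Finset.sdiff_erase hxB, Finset.sdiff_self, Finset.card_erase_of_mem hxB, hk]
    simp [f]
  rw [Finset.sum_congr rfl hterm, Finset.sum_const, Finset.card_erase_of_mem ha, hk,
    Finset.sdiff_self, Finset.card_empty]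
  have : f 0 = 1 := by simp [f]
  rw [this, mul_one, Nat.add_sub_cancel, nsmul_eq_mul]
  push_cast
  exact v_add k

/-- Reassemble a partition of `s` from a block `C` and a partition of `s \ C`. -/
def recombine {s : Finset α} (x : Σ C : Finset α, Finpartition (s \ C))
    (h1 : x.1.Nonempty) (h2 : x.1 ⊆ s) : Finpartition s :=
  x.2.extend (by simpa [Finset.bot_eq_empty] using h1.ne_empty) Finset.sdiff_disjoint
    (by rw [Finset.sup_eq_union, Finset.sdiff_union_of_subset h2])

lemma recombine_parts {s : Finset α} (x : Σ C : Finset α, Finpartition (s \ C))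
    (h1 : x.1.Nonempty) (h2 : x.1 ⊆ s) :
    (recombine x h1 h2).parts = insert x.1 x.2.parts := rfl

/-- The bijection step. -/
lemma sum_bijection {s : Finset α} (ρ : Finpartition s) {a : α} (ha : a ∈ s) :
    ∑ τ ∈ (univ : Finset (Finpartition s)).filter (· ≤ ρ), W τ
      = ∑ x ∈ ((ρ.part a).powerset.filter (a ∈ ·)).sigma
          (fun C => (univ : Finset (Finpartition (s \ C))).filter (· ≤ ρ.avoid C)),
          v x.1.card * W x.2 := by
  have hBs : ρ.part a ⊆ s := ρ.le (ρ.part_mem.2 ha)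
  refine Finset.sum_bij'
    (fun τ _ => (⟨τ.part a, τ.avoid (τ.part a)⟩ : Σ C : Finset α, Finpartition (s \ C)))
    (fun x hx => recombine x (show x.1.Nonempty from ⟨a, (Finset.mem_filter.1 (Finset.mem_sigma.1 hx).1).2⟩)
      ((Finset.mem_powerset.1 (Finset.mem_filter.1 (Finset.mem_sigma.1 hx).1).1).trans hBs))
    ?_ ?_ ?_ ?_ ?_
  · -- hi : image lands in the sigma set
    intro τ hτ
    rw [Finset.mem_filter] at hτ
    obtain ⟨-, hle⟩ := hτ
    rw [Finset.mem_sigma]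
    constructor
    · rw [Finset.mem_filter, Finset.mem_powerset]
      exact ⟨part_subset_part hle ha, τ.mem_part ha⟩
    · rw [Finset.mem_filter]
      exact ⟨Finset.mem_univ _, avoid_le_avoid hle _⟩
  · -- hj : recombine lands in the filter set
    intro x hx
    rw [Finset.mem_sigma] at hx
    obtain ⟨hx1, hx2⟩ := hx
    rw [Finset.mem_filter, Finset.mem_powerset] at hx1
    rw [Finset.mem_filter] at hx2 ⊢
    refine ⟨Finset.mem_univ _, ?_⟩
    intro d hd
    rw [recombine_parts, Finset.mem_insert] at hd
    rcases hd with rfl | hd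
    · exact ⟨ρ.part a, ρ.part_mem.2 ha, hx1.1⟩
    · obtain ⟨e, he, hde⟩ := hx2.2 hd
      rw [Finpartition.mem_avoid] at he
      obtain ⟨g, hg, -, rfl⟩ := he
      exact ⟨g, hg, hde.trans Finset.sdiff_subset⟩
  · -- left_inv
    intro τ hτ
    apply Finpartition.ext
    rw [recombine_parts]
    rw [avoid_parts_of_mem τ (τ.part_mem.2 ha)]
    exact Finset.insert_erase (τ.part_mem.2 ha)
  · -- right_inv
    intro x hx
    rw [Finset.mem_sigma] at hx
    obtain ⟨hx1, hx2⟩ := hx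
    rw [Finset.mem_filter, Finset.mem_powerset] at hx1
    have haC : a ∈ x.1 := hx1.2
    have hCmem : x.1 ∈ (recombine x (show x.1.Nonempty from ⟨a, haC⟩) (hx1.1.trans hBs)).parts := by
      rw [recombine_parts]; exact Finset.mem_insert_self _ _
    have hpart : (recombine x (show x.1.Nonempty from ⟨a, haC⟩) (hx1.1.trans hBs)).part a = x.1 :=
      Finpartition.part_eq_of_mem _ hCmem haC
    obtain ⟨C, P⟩ := x
    dsimp at haC hpart hCmem ⊢
    rw [hpart]
    congr 1
    apply Finpartition.ext
    rw [avoid_parts_of_mem _ hCmem, recombine_parts, Finset.erase_insert]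
    intro hCP
    have hsub : C ⊆ s \ C := P.le hCP
    have : a ∈ s \ C := hsub haC
    exact (Finset.mem_sdiff.1 this).2 haC
  · -- weights
    intro τ hτ
    dsimp only
    rw [W, W, avoid_parts_of_mem τ (τ.part_mem.2 ha),
      ← Finset.mul_prod_erase _ _ (τ.part_mem.2 ha)]

lemma key_empty (ρ : Finpartition (∅ : Finset α)) :
    (∑ τ : Finpartition (∅ : Finset α), if τ ≤ ρ then W τ else 0)
      = ∏ B ∈ ρ.parts, f B.card := by
  have hp : ∀ τ : Finpartition (∅ : Finset α), τ.parts = ∅ := fun τ =>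
    Finpartition.parts_eq_empty_iff.2 Finset.bot_eq_empty.symm
  have huniq : ∀ τ : Finpartition (∅ : Finset α), τ = ρ := fun τ =>
    Finpartition.ext (by rw [hp, hp])
  rw [Fintype.sum_eq_single ρ (fun τ hτ => absurd (huniq τ) hτ)]
  rw [if_pos le_rfl, W, hp ρ, Finset.prod_empty, Finset.prod_empty]

lemma key : ∀ (N : ℕ) (s : Finset α), s.card ≤ N → ∀ ρ : Finpartition s,
    (∑ τ : Finpartition s, if τ ≤ ρ then W τ else 0) = ∏ B ∈ ρ.parts, f B.card := by
  intro N
  induction N with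
  | zero =>
    intro s hs ρ
    have : s = ∅ := Finset.card_eq_zero.1 (Nat.le_zero.1 hs)
    subst this
    exact key_empty ρ
  | succ N ih =>
    intro s hs ρ
    rcases s.eq_empty_or_nonempty with rfl | ⟨a, ha⟩
    · exact key_empty ρ
    have hBmem : ρ.part a ∈ ρ.parts := ρ.part_mem.2 ha
    have haB : a ∈ ρ.part a := ρ.mem_part ha
    have hBs : ρ.part a ⊆ s := ρ.le hBmem
    rw [← Finset.sum_filter, sum_bijection ρ ha, Finset.sum_sigma]
    have hinner : ∀ C ∈ (ρ.part a).powerset.filter (a ∈ ·),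
        ∑ τ' ∈ (univ : Finset (Finpartition (s \ C))).filter (· ≤ ρ.avoid C),
          v C.card * W τ'
        = v C.card * ((∏ D ∈ ρ.parts.erase (ρ.part a), f D.card)
            * f ((ρ.part a \ C).card)) := by
      intro C hC
      rw [Finset.mem_filter, Finset.mem_powerset] at hC
      have hCne : C.Nonempty := ⟨a, hC.2⟩
      have hcard : (s \ C).card ≤ N := by
        have h1 : (s \ C).card = s.card - C.card :=
          Finset.card_sdiff_of_subset (hC.1.trans hBs)
        have h2 : 1 ≤ C.card := Finset.card_pos.2 hCne
        omega
      rw [← Finset.mul_sum, Finset.sum_filter, ih (s \ C) hcard (ρ.avoid C),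
        prod_f_avoid ρ hBmem hCne hC.1]
    rw [Finset.sum_congr rfl hinner]
    have : ∑ C ∈ (ρ.part a).powerset.filter (a ∈ ·),
        v C.card * ((∏ D ∈ ρ.parts.erase (ρ.part a), f D.card)
          * f ((ρ.part a \ C).card))
        = (∏ D ∈ ρ.parts.erase (ρ.part a), f D.card)
          * ∑ C ∈ (ρ.part a).powerset.filter (a ∈ ·),
              v C.card * f ((ρ.part a \ C).card) := by
      rw [Finset.mul_sum]
      exact Finset.sum_congr rfl fun C _ => by ring
    rw [this, sum_v_f haB, mul_comm]
    exact Finset.mul_prod_erase ρ.parts (fun D => f D.card) hBmem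

lemma W_bot {s : Finset α} : W (⊥ : Finpartition s) = 1 := by
  rw [W]
  apply Finset.prod_eq_one
  intro C hC
  rw [Finpartition.mem_bot_iff] at hC
  obtain ⟨x, -, rfl⟩ := hC
  simp [v]

lemma eq_bot_of_small {s : Finset α} (ρ : Finpartition s)
    (h : ∀ B ∈ ρ.parts, B.card ≤ 1) : ρ = ⊥ := by
  refine le_antisymm ?_ bot_le
  intro b hb
  obtain ⟨x, rfl⟩ := Finset.card_eq_one.1
    (le_antisymm (h b hb) (Finset.card_pos.2 (ρ.nonempty_of_mem_parts hb)))
  refine ⟨{x}, ?_, le_rfl⟩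
  rw [Finpartition.mem_bot_iff]
  exact ⟨x, ρ.le hb (Finset.mem_singleton_self x), rfl⟩

lemma W_eq {n : ℕ} (π : Finpartition (univ : Finset (Fin n))) :
    W π = (-1) ^ (n - π.parts.card) * ∏ B ∈ π.parts, (Nat.factorial (B.card - 1) : ℤ) := by
  rw [W]
  have : ∀ C ∈ π.parts, v C.card = (-1 : ℤ) ^ (C.card - 1) * Nat.factorial (C.card - 1) :=
    fun C _ => rfl
  rw [Finset.prod_congr rfl this, Finset.prod_mul_distrib, Finset.prod_pow_eq_pow_sum]
  congr 2
  have h1 : ∑ C ∈ π.parts, (C.card - 1) + π.parts.card = ∑ C ∈ π.parts, C.card := by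
    rw [Finset.card_eq_sum_ones, ← Finset.sum_add_distrib]
    refine Finset.sum_congr rfl fun C hC => ?_
    have := Finset.card_pos.2 (π.nonempty_of_mem_parts hC)
    omega
  have h2 : ∑ C ∈ π.parts, C.card = n := by
    rw [π.sum_card_parts, Finset.card_univ, Fintype.card_fin]
  omega


end Stmt7Aux


/-- In the lattice `Πₙ` of set partitions of `[n]` ordered by refinement (with bottom
element the partition into singletons), the Möbius function `μ(⊥, ·)` — characterized by
`μ(⊥,⊥) = 1` and `∑_{⊥ ≤ τ ≤ ρ} μ(⊥,τ) = 0` for `ρ > ⊥` — is given by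
`μ(⊥, π) = (−1)^{n−k} ∏_{i=1}^{k} (#B_i − 1)!` for `π = {B₁,…,B_k}`. -/
theorem stmt7 (n : ℕ)
    (μ : Finpartition (Finset.univ : Finset (Fin n)) → ℤ)
    (hbot : μ ⊥ = 1)
    (hrec : ∀ ρ : Finpartition (Finset.univ : Finset (Fin n)), ⊥ < ρ →
      ∑ τ : Finpartition (Finset.univ : Finset (Fin n)), (if τ ≤ ρ then μ τ else 0) = 0) :
    ∀ π : Finpartition (Finset.univ : Finset (Fin n)),
      μ π = (-1) ^ (n - π.parts.card) *
        ∏ B ∈ π.parts, (Nat.factorial (B.card - 1) : ℤ) := by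
  have main : ∀ π : Finpartition (Finset.univ : Finset (Fin n)), μ π = Stmt7Aux.W π := by
    intro π
    induction π using WellFoundedLT.induction with
    | _ π ih =>
      rcases eq_or_ne π ⊥ with rfl | hne
      · rw [hbot, Stmt7Aux.W_bot]
      · have hlt : ⊥ < π := bot_lt_iff_ne_bot.2 hne
        have h0 := hrec π hlt
        have hW0 : (∑ τ : Finpartition (Finset.univ : Finset (Fin n)),
            if τ ≤ π then Stmt7Aux.W τ else 0) = 0 := by
          rw [Stmt7Aux.key n Finset.univ (by simp) π]
          obtain ⟨B, hB, hB2⟩ : ∃ B ∈ π.parts, 1 < B.card := by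
            by_contra h
            push_neg at h
            exact hne (Stmt7Aux.eq_bot_of_small π h)
          exact Finset.prod_eq_zero hB (by simp [Stmt7Aux.f, Nat.not_le.2 hB2,
            Nat.lt_iff_add_one_le])
        have hπmem : π ∈ (Finset.univ : Finset (Finpartition
            (Finset.univ : Finset (Fin n)))).filter (· ≤ π) := by simp
        rw [← Finset.sum_filter, ← Finset.add_sum_erase _ _ hπmem] at h0 hW0
        have heq : ∑ τ ∈ ((Finset.univ : Finset (Finpartition
              (Finset.univ : Finset (Fin n)))).filter (· ≤ π)).erase π, μ τ
            = ∑ τ ∈ ((Finset.univ : Finset (Finpartition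
              (Finset.univ : Finset (Fin n)))).filter (· ≤ π)).erase π, Stmt7Aux.W τ := by
          refine Finset.sum_congr rfl fun τ hτ => ?_
          rw [Finset.mem_erase, Finset.mem_filter] at hτ
          exact ih τ (lt_of_le_of_ne hτ.2.2 hτ.1)
        rw [heq] at h0
        linarith
  intro π
  rw [main π, Stmt7Aux.W_eq]
end

section
/- Let P be a finite poset on [n] and π a set partition of [n]. The following are equivalent: (1) every block of π is an antichain of P and the quotient preposet P/π is antisymmetric (a poset); (2) there exists a point x ∈ ℝⁿ with x_i = x_j whenever i, j lie in a common block of π, and x_i < x_j whenever i <_P j. -/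
/-- The quotient preposet relation `P/π` on the blocks: the transitive closure of the
relation `B ≤ C` whenever some `p ∈ B`, `q ∈ C` satisfy `p ≤_P q`. -/
def QRel {α : Type*} (P : PartialOrder α) (parts : Finset (Finset α)) :
    Finset α → Finset α → Prop :=
  Relation.TransGen fun B C => B ∈ parts ∧ C ∈ parts ∧ ∃ p ∈ B, ∃ q ∈ C, P.le p q

/-- A collection of blocks is `P`-transverse if every block is an antichain of `P` and the
quotient preposet `P/π` is antisymmetric (i.e. a poset). -/
def PTransverseParts {α : Type*} (P : PartialOrder α) (parts : Finset (Finset α)) : Prop :=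
  (∀ B ∈ parts, ∀ i ∈ B, ∀ j ∈ B, P.le i j → i = j) ∧
  ∀ B C : Finset α, QRel P parts B C → QRel P parts C B → B = C

/-- Wrapper type for blocks of a partition, carrying no order structure. -/
structure BlockT {α : Type*} (parts : Finset (Finset α)) where
  val : Finset α
  mem : val ∈ parts

def blockTEquiv {α : Type*} (parts : Finset (Finset α)) :
    BlockT parts ≃ {B // B ∈ parts} where
  toFun B := ⟨B.val, B.mem⟩
  invFun B := ⟨B.1, B.2⟩
  left_inv B := rfl
  right_inv B := rfl

noncomputable instance {α : Type*} (parts : Finset (Finset α)) : Fintype (BlockT parts) :=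
  Fintype.ofEquiv _ (blockTEquiv parts).symm

theorem BlockT.ext' {α : Type*} {parts : Finset (Finset α)} {B C : BlockT parts}
    (h : B.val = C.val) : B = C := by cases B; cases C; cases h; rfl

/-- A set partition `π` of `[n]` is `P`-transverse iff there is a point `x ∈ ℝⁿ` constant on
the blocks of `π` with `x_i < x_j` whenever `i <_P j`. -/
theorem stmt9 (n : ℕ) (P : PartialOrder (Fin n))
    (π : Finpartition (Finset.univ : Finset (Fin n))) :
    PTransverseParts P π.parts ↔
    ∃ x : Fin n → ℝ,
      (∀ i j : Fin n, (∃ B ∈ π.parts, i ∈ B ∧ j ∈ B) → x i = x j) ∧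
      (∀ i j : Fin n, P.lt i j → x i < x j) := by
  constructor
  · rintro ⟨hanti, hantisym⟩
    -- build a poset structure on the blocks
    set σ := BlockT π.parts with hσ
    letI PO : PartialOrder σ :=
      { le := fun B C => B = C ∨ QRel P π.parts B.val C.val
        le_refl := fun B => Or.inl rfl
        le_trans := by
          rintro a b c (rfl | h) h'
          · exact h'
          · rcases h' with rfl | h'
            · exact Or.inr h
            · exact Or.inr (h.trans h')
        le_antisymm := by
          rintro a b (rfl | h) h'
          · rfl
          · rcases h' with rfl | h'
            · rfl
            · exact BlockT.ext' (hantisym _ _ h h') }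
    letI : Fintype (LinearExtension σ) := Fintype.ofEquiv σ (Equiv.refl σ)
    -- strictly monotone map from σ to ℝ
    let e := monoEquivOfFin (LinearExtension σ) rfl
    let g : σ → ℝ := fun B => ((e.symm (toLinearExtension B) : Fin _) : ℕ)
    have hg : ∀ B C : σ, B < C → g B < g C := by
      intro B C hBC
      have h1 : toLinearExtension B < toLinearExtension C := by
        rcases lt_iff_le_and_ne.1 hBC with ⟨hle, hne⟩
        refine lt_of_le_of_ne (toLinearExtension.monotone hle) ?_
        intro h
        exact hne (congrArg (fun y => (y : σ)) h)
      have h2 : e.symm (toLinearExtension B) < e.symm (toLinearExtension C) :=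
        e.symm.lt_iff_lt.2 h1
      exact_mod_cast Nat.cast_lt.2 h2
    -- the point x
    refine ⟨fun i => g ⟨π.part i, π.part_mem.2 (Finset.mem_univ i)⟩, ?_, ?_⟩
    · rintro i j ⟨B, hB, hiB, hjB⟩
      have h1 : π.part i = B := π.part_eq_of_mem hB hiB
      have h2 : π.part j = B := π.part_eq_of_mem hB hjB
      have key : (⟨π.part i, π.part_mem.2 (Finset.mem_univ i)⟩ : σ) =
          ⟨π.part j, π.part_mem.2 (Finset.mem_univ j)⟩ := BlockT.ext' (h1.trans h2.symm)
      exact congrArg g key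
    · intro i j hij
      apply hg
      have hiB := π.mem_part (Finset.mem_univ i)
      have hjB := π.mem_part (Finset.mem_univ j)
      have hijle : P.le i j := hij.le
      have hijne : i ≠ j := hij.ne
      have hne : π.part i ≠ π.part j := by
        intro h
        exact hijne (hanti _ (π.part_mem.2 (Finset.mem_univ i)) i hiB j (h ▸ hjB) hijle)
      refine lt_of_le_of_ne (Or.inr ?_) (fun h => hne (congrArg BlockT.val h))
      exact Relation.TransGen.single
        ⟨π.part_mem.2 (Finset.mem_univ i), π.part_mem.2 (Finset.mem_univ j),
          i, hiB, j, hjB, hijle⟩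
  · rintro ⟨x, hconst, hmono⟩
    -- a single step of the relation
    have hstep : ∀ B C : Finset (Fin n),
        (B ∈ π.parts ∧ C ∈ π.parts ∧ ∃ p ∈ B, ∃ q ∈ C, P.le p q) →
        ∀ p ∈ B, ∀ q ∈ C, x p ≤ x q ∧ (x p = x q → B = C) := by
      rintro B C ⟨hB, hC, p0, hp0, q0, hq0, hle⟩ p hp q hq
      have hxp : x p = x p0 := hconst _ _ ⟨B, hB, hp, hp0⟩
      have hxq : x q = x q0 := hconst _ _ ⟨C, hC, hq, hq0⟩
      by_cases hpq : p0 = q0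
      · subst hpq
        have hBC : B = C := π.eq_of_mem_parts hB hC hp0 hq0
        exact ⟨by rw [hxp, hxq], fun _ => hBC⟩
      · have hlt : P.lt p0 q0 :=
          (P.lt_iff_le_not_ge _ _).mpr ⟨hle, fun h => hpq (P.le_antisymm _ _ hle h)⟩
        have := hmono _ _ hlt
        constructor
        · rw [hxp, hxq]; exact this.le
        · intro h
          rw [hxp, hxq] at h
          exact absurd h this.ne
    have claim : ∀ B C, QRel P π.parts B C →
        ∀ p ∈ B, ∀ q ∈ C, x p ≤ x q ∧ (x p = x q → B = C) := by
      intro B C h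
      induction h with
      | single h => exact hstep _ _ h
      | tail h1 h2 ih =>
        obtain ⟨hC, hD, q0, hq0, r0, hr0, hle⟩ := h2
        intro p hp r hr
        obtain ⟨h3, h4⟩ := ih p hp q0 hq0
        obtain ⟨h5, h6⟩ := hstep _ _ ⟨hC, hD, q0, hq0, r0, hr0, hle⟩ q0 hq0 r hr
        refine ⟨h3.trans h5, fun h => ?_⟩
        have e1 : x p = x q0 := le_antisymm h3 (h ▸ h5)
        exact (h4 e1).trans (h6 (e1 ▸ h))
    have hmem : ∀ B C, QRel P π.parts B C → B ∈ π.parts ∧ C ∈ π.parts := by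
      intro B C h
      induction h with
      | single h => exact ⟨h.1, h.2.1⟩
      | tail h1 h2 ih => exact ⟨ih.1, h2.2.1⟩
    constructor
    · intro B hB i hi j hj hle
      by_contra hne
      have hlt : P.lt i j :=
        (P.lt_iff_le_not_ge _ _).mpr ⟨hle, fun h => hne (P.le_antisymm _ _ hle h)⟩
      have h1 : x i = x j := hconst _ _ ⟨B, hB, hi, hj⟩
      exact absurd h1 (hmono _ _ hlt).ne
    · intro B C h1 h2
      obtain ⟨hB, hC⟩ := hmem _ _ h1
      obtain ⟨p, hp⟩ := π.nonempty_of_mem_parts hB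
      obtain ⟨q, hq⟩ := π.nonempty_of_mem_parts hC
      obtain ⟨h3, h4⟩ := claim _ _ h1 p hp q hq
      obtain ⟨h5, _⟩ := claim _ _ h2 q hq p hp
      exact h4 (le_antisymm h3 h5)
end

section
/- Let P be a finite poset on [n] and π a set partition of [n]. Then π is P-transverse if and only if π contains a block B such that (a) B is a subset of the minimal elements of P, and (b) the partition π \ {B} of [n] \ B is P̂-transverse, where P̂ is the restriction of P to [n] \ B. -/
lemma QRel.mono' {α : Type*} {P : PartialOrder α} {s t : Finset (Finset α)} (h : s ⊆ t)
    {B C : Finset α} (hq : QRel P s B C) : QRel P t B C :=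
  Relation.TransGen.mono (fun _ _ ⟨hx, hy, he⟩ => ⟨h hx, h hy, he⟩) _ _ hq

lemma QRel.mem_left {α : Type*} {P : PartialOrder α} {s : Finset (Finset α)}
    {B C : Finset α} (hq : QRel P s B C) : B ∈ s := by
  induction hq with
  | single h => exact h.1
  | tail _ _ ih => exact ih

lemma QRel.mem_right {α : Type*} {P : PartialOrder α} {s : Finset (Finset α)}
    {B C : Finset α} (hq : QRel P s B C) : C ∈ s := by
  induction hq with
  | single h => exact h.2.1
  | tail _ h _ => exact h.2.1

/-- Recursive characterization: `π` is `P`-transverse iff it contains a block `B` consisting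
of minimal elements of `P` such that `π \ {B}` (a partition of `[n] \ B`) is transverse for
the restriction of `P` to `[n] \ B` (equivalently, for `P`, since the blocks of
`π \ {B}` only involve elements outside `B`). -/
theorem stmt10 (n : ℕ) (hn : 0 < n) (P : PartialOrder (Fin n))
    (π : Finpartition (Finset.univ : Finset (Fin n))) :
    PTransverseParts P π.parts ↔
    ∃ B ∈ π.parts,
      (∀ i ∈ B, ∀ j : Fin n, P.le j i → j = i) ∧
      PTransverseParts P (π.parts.erase B) := by
  haveI : NeZero n := ⟨hn.ne'⟩
  constructor
  · rintro ⟨hanti, hq⟩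
    -- find a minimal block wrt QRel
    set r : {x // x ∈ π.parts} → {x // x ∈ π.parts} → Prop :=
      fun x y => QRel P π.parts x.1 y.1 ∧ x.1 ≠ y.1 with hr
    haveI : IsTrans _ r := ⟨by
      rintro x y z ⟨q1, ne1⟩ ⟨q2, ne2⟩
      refine ⟨q1.trans q2, fun hxz => ?_⟩
      exact ne1 (hq x.1 y.1 q1 (hxz ▸ q2))⟩
    haveI : IsIrrefl _ r := ⟨fun x h => h.2 rfl⟩
    have hne : π.parts.Nonempty := π.parts_nonempty (by
      simpa [Finset.bot_eq_empty] using Finset.univ_nonempty.ne_empty)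
    obtain ⟨B0, hB0⟩ := hne
    obtain ⟨b, -, hmin⟩ := (Finite.wellFounded_of_trans_of_irrefl r).has_min Set.univ
      ⟨⟨B0, hB0⟩, trivial⟩
    have hminimal : ∀ C : Finset (Fin n), QRel P π.parts C b.1 → C = b.1 := by
      intro C hC
      by_contra hCne
      exact hmin ⟨C, hC.mem_left⟩ trivial ⟨hC, hCne⟩
    refine ⟨b.1, b.2, ?_, ?_, ?_⟩
    · intro i hi j hle
      obtain ⟨C, hC, hjC⟩ := π.exists_mem (Finset.mem_univ j)
      have : C = b.1 := hminimal C (Relation.TransGen.single ⟨hC, b.2, j, hjC, i, hi, hle⟩)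
      exact hanti b.1 b.2 j (this ▸ hjC) i hi hle
    · exact fun C hC => hanti C (Finset.mem_of_mem_erase hC)
    · intro C D h1 h2
      exact hq C D (h1.mono' (Finset.erase_subset _ _)) (h2.mono' (Finset.erase_subset _ _))
  · rintro ⟨B, hB, hmin, hanti', hq'⟩
    have hstep : ∀ X Y : Finset (Fin n),
        (X ∈ π.parts ∧ Y ∈ π.parts ∧ ∃ p ∈ X, ∃ q ∈ Y, P.le p q) → Y = B → X = B := by
      rintro X Y ⟨hX, hY, p, hp, q, hqY, hle⟩ rfl
      have hpq : p = q := hmin q hqY p hle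
      exact π.eq_of_mem_parts hX hB hp (hpq ▸ hqY)
    have key : ∀ C D : Finset (Fin n), QRel P π.parts C D → C ≠ B →
        QRel P (π.parts.erase B) C D ∧ D ≠ B := by
      intro C D hCD
      induction hCD with
      | single h =>
        intro hCne
        have hDne : _ ≠ B := fun hD => hCne (hstep _ _ h hD)
        exact ⟨Relation.TransGen.single
          ⟨Finset.mem_erase.mpr ⟨hCne, h.1⟩, Finset.mem_erase.mpr ⟨hDne, h.2.1⟩, h.2.2⟩, hDne⟩
      | tail _ h ih =>
        intro hCne
        obtain ⟨hchain, hEne⟩ := ih hCne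
        have hDne : _ ≠ B := fun hD => hEne (hstep _ _ h hD)
        exact ⟨hchain.tail
          ⟨Finset.mem_erase.mpr ⟨hEne, h.1⟩, Finset.mem_erase.mpr ⟨hDne, h.2.1⟩, h.2.2⟩, hDne⟩
    constructor
    · intro C hC i hi j hj hle
      by_cases hCB : C = B
      · subst hCB; exact hmin j hj i hle
      · exact hanti' C (Finset.mem_erase.mpr ⟨hCB, hC⟩) i hi j hj hle
    · intro C D q1 q2
      by_cases hCB : C = B
      · by_cases hDB : D = B
        · rw [hCB, hDB]
        · exact absurd hCB (key D C q2 hDB).2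
      · obtain ⟨e1, hDB⟩ := key C D q1 hCB
        obtain ⟨e2, -⟩ := key D C q2 hDB
        exact hq' C D e1 e2
end

section
/- For any finite poset P on [n], the number of linear extensions of P equals the number of P-transverse permutations, i.e., permutations σ ∈ Sₙ whose cycle partition is a P-transverse partition. -/
open scoped Classical

/-- The partition of `Fin n` into the cycles (orbits) of a permutation. -/
def cycleBlocks {n : ℕ} (σ : Equiv.Perm (Fin n)) : Finset (Finset (Fin n)) :=
  Finset.univ.image fun i => Finset.univ.filter fun j => σ.SameCycle i j

namespace Stmt11

open Finset Equiv Equiv.Perm Relation List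

variable {n : ℕ} (P : PartialOrder (Fin n))

/-! ### Basic definitions -/

noncomputable def blk (S : Finset (Fin n)) (σ : Equiv.Perm (Fin n)) (x : Fin n) : Finset (Fin n) :=
  S.filter fun j => σ.SameCycle x j

noncomputable def blocksOn (S : Finset (Fin n)) (σ : Equiv.Perm (Fin n)) : Finset (Finset (Fin n)) :=
  S.image (blk S σ)

noncomputable def Tset (S : Finset (Fin n)) : Finset (Equiv.Perm (Fin n)) :=
  Finset.univ.filter fun σ => (∀ x, x ∉ S → σ x = x) ∧ PTransverseParts P (blocksOn S σ)

noncomputable def Wset (S : Finset (Fin n)) : Finset (List (Fin n)) :=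
  ((S.sort (· ≤ ·)).permutations.toFinset).filter fun l => l.Pairwise fun a b => ¬ P.le b a

noncomputable def maxPset (S : Finset (Fin n)) : Finset (Fin n) :=
  S.filter fun m => ∀ x ∈ S, P.le m x → x = m

def Maxi (parts : Finset (Finset (Fin n))) (B : Finset (Fin n)) : Prop :=
  ∀ X, QRel P parts B X → X = B

noncomputable def MaxB (parts : Finset (Finset (Fin n))) : Finset (Finset (Fin n)) :=
  parts.filter (Maxi P parts)

def hasLT (m : Fin n) (C : Finset (Fin n)) : Prop :=
  ∃ q ∈ C, P.le q m ∧ q ≠ m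

def Clean (m : Fin n) (parts : Finset (Finset (Fin n))) (C : Finset (Fin n)) : Prop :=
  ∀ Z, (Z = C ∨ QRel P parts C Z) → ¬ hasLT P m Z

noncomputable def Kset (S : Finset (Fin n)) (m : Fin n) (σ' : Equiv.Perm (Fin n)) :
    Finset (Finset (Fin n)) :=
  (blocksOn (S.erase m) σ').filter fun C =>
    Maxi P (blocksOn (S.erase m) σ') C ∧ Clean P m (blocksOn (S.erase m) σ') C

noncomputable def uu (S : Finset (Fin n)) (m : Fin n) (σ' : Equiv.Perm (Fin n)) : Fin n :=
  (insert m ((Kset P S m σ').biUnion id)).max' (insert_nonempty _ _)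

def ABase (m : Fin n) (parts' : Finset (Finset (Fin n))) (Bu : Finset (Fin n))
    (B C : Finset (Fin n)) : Prop :=
  (B ∈ parts' ∧ C ∈ parts' ∧ ∃ p ∈ B, ∃ q ∈ C, P.le p q) ∨
  (B ∈ parts' ∧ C = Bu ∧ hasLT P m B)

def Aug (m : Fin n) (parts' : Finset (Finset (Fin n))) (Bu : Finset (Fin n)) :
    Finset (Fin n) → Finset (Fin n) → Prop :=
  Relation.TransGen (ABase P m parts' Bu)

/-! ### Generic lemmas -/

theorem exists_rel_max {β : Type*} (r : β → β → Prop)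
    (htr : ∀ {a b c}, r a b → r b c → r a c)
    (han : ∀ {a b}, r a b → r b a → a = b) :
    ∀ (F : Finset β), F.Nonempty → ∃ M ∈ F, ∀ X ∈ F, r M X → X = M := by
  classical
  intro F
  induction F using Finset.induction_on with
  | empty => intro h; exact absurd h (by simp)
  | @insert a F' ha ih =>
    intro _
    rcases F'.eq_empty_or_nonempty with h0 | h0
    · subst h0
      exact ⟨a, by simp, by intro X hX hr; simpa using hX⟩
    · obtain ⟨M, hM, hMmax⟩ := ih h0
      by_cases hra : r M a
      · refine ⟨a, mem_insert_self _ _, ?_⟩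
        intro X hX hrx
        rcases mem_insert.1 hX with rfl | hX'
        · rfl
        · have h1 : r M X := htr hra hrx
          have h2 : X = M := hMmax X hX' h1
          rw [h2] at hrx ⊢
          exact han hra hrx
      · refine ⟨M, mem_insert_of_mem hM, ?_⟩
        intro X hX hrx
        rcases mem_insert.1 hX with rfl | hX'
        · exact absurd hrx hra
        · exact hMmax X hX' hrx

theorem qrel_mem {parts : Finset (Finset (Fin n))} {B C : Finset (Fin n)}
    (h : QRel P parts B C) : B ∈ parts ∧ C ∈ parts := by
  induction h with
  | single h => exact ⟨h.1, h.2.1⟩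
  | tail _ h ih => exact ⟨ih.1, h.2.1⟩

/-! ### Permutation cycle basics -/

theorem fix_maps {S : Finset (Fin n)} {σ : Equiv.Perm (Fin n)}
    (hfix : ∀ x ∉ S, σ x = x) {x : Fin n} (hx : x ∈ S) : σ x ∈ S := by
  by_contra h
  have h1 : σ (σ x) = σ x := hfix _ h
  have h2 : σ x = x := σ.injective h1
  rw [h2] at h
  exact h hx

theorem fixed_sameCycle {σ : Equiv.Perm (Fin n)} {m y : Fin n} (hm : σ m = m)
    (h : σ.SameCycle m y) : y = m := by
  obtain ⟨k, hk⟩ := h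
  have := σ.zpow_apply_eq_self_of_apply_eq_self hm k
  rw [this] at hk
  exact hk.symm

theorem sameCycle_mem {S : Finset (Fin n)} {σ : Equiv.Perm (Fin n)}
    (hfix : ∀ x ∉ S, σ x = x) {x y : Fin n} (hx : x ∈ S) (h : σ.SameCycle x y) : y ∈ S := by
  by_contra hy
  have h1 : σ y = y := hfix _ hy
  have := fixed_sameCycle h1 h.symm
  subst this
  exact hy hx

theorem mem_blk {S : Finset (Fin n)} {σ : Equiv.Perm (Fin n)} {x y : Fin n} :
    y ∈ blk S σ x ↔ y ∈ S ∧ σ.SameCycle x y := by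
  simp [blk]

theorem self_mem_blk {S : Finset (Fin n)} {σ : Equiv.Perm (Fin n)} {x : Fin n} (hx : x ∈ S) :
    x ∈ blk S σ x := mem_blk.2 ⟨hx, Equiv.Perm.SameCycle.refl _ _⟩

theorem blk_mem_blocksOn {S : Finset (Fin n)} {σ : Equiv.Perm (Fin n)} {x : Fin n}
    (hx : x ∈ S) : blk S σ x ∈ blocksOn S σ := mem_image_of_mem _ hx

theorem blk_eq_of_mem {S : Finset (Fin n)} {σ : Equiv.Perm (Fin n)} {x y : Fin n}
    (hy : y ∈ blk S σ x) : blk S σ y = blk S σ x := by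
  obtain ⟨hyS, hxy⟩ := mem_blk.1 hy
  ext z
  simp only [mem_blk]
  exact and_congr_right fun _ => ⟨fun h => hxy.trans h, fun h => hxy.symm.trans h⟩

theorem blocksOn_mem {S : Finset (Fin n)} {σ : Equiv.Perm (Fin n)} {B : Finset (Fin n)}
    (hB : B ∈ blocksOn S σ) : ∃ x ∈ S, B = blk S σ x := by
  obtain ⟨x, hx, hB⟩ := mem_image.1 hB
  exact ⟨x, hx, hB.symm⟩

theorem blocksOn_sub {S : Finset (Fin n)} {σ : Equiv.Perm (Fin n)} {B : Finset (Fin n)}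
    (hB : B ∈ blocksOn S σ) : B ⊆ S := by
  obtain ⟨x, hx, rfl⟩ := blocksOn_mem hB
  exact filter_subset _ _

theorem blocksOn_nonempty {S : Finset (Fin n)} {σ : Equiv.Perm (Fin n)} {B : Finset (Fin n)}
    (hB : B ∈ blocksOn S σ) : B.Nonempty := by
  obtain ⟨x, hx, rfl⟩ := blocksOn_mem hB
  exact ⟨x, self_mem_blk hx⟩

theorem blk_eq_of_mem_blocksOn {S : Finset (Fin n)} {σ : Equiv.Perm (Fin n)}
    {B : Finset (Fin n)} {y : Fin n} (hB : B ∈ blocksOn S σ) (hy : y ∈ B) :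
    B = blk S σ y := by
  obtain ⟨x, hx, rfl⟩ := blocksOn_mem hB
  exact (blk_eq_of_mem hy).symm

/-! ### Splice lemmas -/

theorem splice_apply_u {σ' : Equiv.Perm (Fin n)} {u m : Fin n} (hm' : σ' m = m) :
    (σ' * Equiv.swap u m) u = m := by
  simp [Equiv.Perm.mul_apply, Equiv.swap_apply_left, hm']

theorem splice_apply_m {σ' : Equiv.Perm (Fin n)} {u m : Fin n} :
    (σ' * Equiv.swap u m) m = σ' u := by
  simp [Equiv.Perm.mul_apply, Equiv.swap_apply_right]

theorem splice_apply_other {σ' : Equiv.Perm (Fin n)} {u m x : Fin n}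
    (h1 : x ≠ u) (h2 : x ≠ m) : (σ' * Equiv.swap u m) x = σ' x := by
  simp [Equiv.Perm.mul_apply, Equiv.swap_apply_of_ne_of_ne h1 h2]

theorem splice_sc_um {σ' : Equiv.Perm (Fin n)} {u m : Fin n} (hm' : σ' m = m) :
    (σ' * Equiv.swap u m).SameCycle u m := by
  exact ⟨1, by simpa using splice_apply_u (u := u) hm'⟩

theorem splice_sameCycle {σ' : Equiv.Perm (Fin n)} {u m : Fin n} (hm' : σ' m = m)
    {x y : Fin n} (hx : x ≠ m) (hy : y ≠ m) :
    (σ'.SameCycle x y ↔ (σ' * Equiv.swap u m).SameCycle x y) := by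
  have hfixpow : ∀ j : ℕ, (σ' ^ j) m = m := fun j => by
    simpa using σ'.zpow_apply_eq_self_of_apply_eq_self hm' (j : ℤ)
  by_cases hum : u = m
  · have : σ' * Equiv.swap u m = σ' := by ext z; simp [hum, Equiv.swap_self]
    rw [this]
  set σ : Equiv.Perm (Fin n) := σ' * Equiv.swap u m with hσdef
  have hσu : σ u = m := splice_apply_u hm'
  have hσm : σ m = σ' u := splice_apply_m
  have hother : ∀ z, z ≠ u → z ≠ m → σ z = σ' z := fun z h1 h2 => splice_apply_other h1 h2
  have happ : ∀ (τ : Equiv.Perm (Fin n)) (i : ℕ) (w : Fin n), (τ ^ (i+1)) w = τ ((τ ^ i) w) :=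
    fun τ i w => by rw [pow_succ', Equiv.Perm.mul_apply]
  have hfixpowσ : ∀ j : ℕ, ∀ z, z ≠ m → (σ ^ j) z ≠ m → σ'.SameCycle z ((σ ^ j) z) := by
    intro j
    induction j using Nat.strong_induction_on with
    | _ j ih =>
      intro z hz hjz
      match j with
      | 0 => simpa using Equiv.Perm.SameCycle.refl σ' z
      | (i+1) =>
        by_cases hmid : (σ ^ i) z = m
        · match i with
          | 0 => simp at hmid; exact absurd hmid hz
          | (i'+1) =>
            have h1 : σ ((σ ^ i') z) = m := by
              rw [← happ σ i' z]; exact hmid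
            have h2 : (σ ^ i') z = u := by
              apply σ.injective; rw [h1, hσu]
            have h3 : σ'.SameCycle z u := by
              have := ih i' (by omega) z hz (by rw [h2]; intro hc; exact hum hc)
              rwa [h2] at this
            have h4 : (σ ^ (i'+1+1)) z = σ' u := by
              rw [happ, hmid, hσm]
            rw [h4]
            exact h3.trans ⟨1, by simp⟩
        · have h3 : σ'.SameCycle z ((σ ^ i) z) := ih i (by omega) z hz hmid
          have h5 : (σ ^ (i+1)) z = σ ((σ ^ i) z) := happ σ i z
          have h6 : (σ ^ i) z ≠ u := by
            intro hc
            apply hjz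
            rw [h5, hc, hσu]
          rw [h5, hother _ h6 hmid]
          exact h3.trans ⟨1, by simp⟩
  constructor
  · intro h
    obtain ⟨k, -, hk⟩ := h.exists_pow_eq'
    rw [← hk]
    clear hk hy
    induction k with
    | zero => simpa using Equiv.Perm.SameCycle.refl σ x
    | succ j ihj =>
      have hz : (σ' ^ j) x ≠ m := by
        intro h
        exact hx ((σ' ^ j).injective (h.trans (hfixpow j).symm))
      have hstep : σ.SameCycle ((σ' ^ j) x) (σ' ((σ' ^ j) x)) := by
        set z := (σ' ^ j) x
        by_cases hzu : z = u
        · rw [hzu]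
          exact (splice_sc_um hm').trans ⟨1, by simp [hσm]⟩
        · rw [← hother z hzu hz]
          exact ⟨1, by simp⟩
      have : (σ' ^ (j+1)) x = σ' ((σ' ^ j) x) := happ σ' j x
      rw [this]
      exact ihj.trans hstep
  · intro h
    obtain ⟨k, -, hk⟩ := h.exists_pow_eq'
    rw [← hk] at hy ⊢
    exact hfixpowσ k x hx hy

theorem splice_inv {σ' : Equiv.Perm (Fin n)} {u m : Fin n} (hm' : σ' m = m) :
    Equiv.swap m ((σ' * Equiv.swap u m) m) * (σ' * Equiv.swap u m) = σ' := by
  rw [splice_apply_m]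
  by_cases hum : u = m
  · subst hum; ext x; simp [hm', Equiv.Perm.mul_apply, Equiv.swap_self]
  · ext x
    rw [Equiv.Perm.mul_apply]
    by_cases hx1 : x = u
    · subst hx1; rw [splice_apply_u hm', Equiv.swap_apply_left]
    by_cases hx2 : x = m
    · subst hx2; rw [splice_apply_m, Equiv.swap_apply_right, hm']
    · rw [splice_apply_other hx1 hx2, Equiv.swap_apply_of_ne_of_ne ?_ ?_]
      · intro h; exact hx2 (σ'.injective (h.trans hm'.symm))
      · intro h; exact hx1 (σ'.injective h)

theorem forward_eq {σ : Equiv.Perm (Fin n)} {v m : Fin n} (hv : σ v = m) :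
    (Equiv.swap m (σ m) * σ) * Equiv.swap v m = σ ∧ (Equiv.swap m (σ m) * σ) m = m := by
  constructor
  · ext x
    by_cases hx1 : x = v
    · subst hx1
      rw [Equiv.Perm.mul_apply, Equiv.swap_apply_left, Equiv.Perm.mul_apply,
        Equiv.swap_apply_right, hv]
    by_cases hx2 : x = m
    · subst hx2
      rw [Equiv.Perm.mul_apply, Equiv.swap_apply_right, Equiv.Perm.mul_apply, hv,
        Equiv.swap_apply_left]
    · rw [Equiv.Perm.mul_apply, Equiv.swap_apply_of_ne_of_ne hx1 hx2, Equiv.Perm.mul_apply,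
        Equiv.swap_apply_of_ne_of_ne ?_ ?_]
      · intro h; exact hx1 (σ.injective (h.trans hv.symm))
      · intro h; exact hx2 (σ.injective h)
  · rw [Equiv.Perm.mul_apply, Equiv.swap_apply_right]

/-! ### Block correspondence -/

section Corr

variable {S : Finset (Fin n)} {m u : Fin n} {σ' : Equiv.Perm (Fin n)}

theorem corr_fix (hmS : m ∈ S) (hfix' : ∀ x ∉ S.erase m, σ' x = x)
    (hu : u ∈ S) : ∀ x ∉ S, (σ' * Equiv.swap u m) x = x := by
  intro x hx
  have h1 : x ≠ u := fun h => hx (h ▸ hu)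
  have h2 : x ≠ m := fun h => hx (h ▸ hmS)
  rw [splice_apply_other h1 h2]
  exact hfix' x (fun h => hx (mem_of_mem_erase h))

theorem corr_N (hmS : m ∈ S) (hfix' : ∀ x ∉ S.erase m, σ' x = x)
    (hum : u ≠ m) (huS : u ∈ S.erase m) :
    blk S (σ' * Equiv.swap u m) m = insert m (blk (S.erase m) σ' u) := by
  have hm' : σ' m = m := hfix' m (by simp)
  ext y
  simp only [mem_blk, mem_insert]
  constructor
  · rintro ⟨hyS, hsc⟩
    by_cases hym : y = m
    · exact Or.inl hym
    · refine Or.inr ⟨mem_erase.2 ⟨hym, hyS⟩, ?_⟩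
      have h1 : (σ' * Equiv.swap u m).SameCycle u y := (splice_sc_um hm').trans hsc
      exact ((splice_sameCycle hm' hum hym).2 h1)
  · rintro (rfl | ⟨hyS, hsc⟩)
    · exact ⟨hmS, Equiv.Perm.SameCycle.refl _ _⟩
    · refine ⟨mem_of_mem_erase hyS, ?_⟩
      have hym : y ≠ m := (mem_erase.1 hyS).1
      have h1 : (σ' * Equiv.swap u m).SameCycle u y := (splice_sameCycle hm' hum hym).1 hsc
      exact (splice_sc_um hm').symm.trans h1

theorem corr_N_eq (hmS : m ∈ S) (hm' : σ' m = m) (hfix' : ∀ x ∉ S.erase m, σ' x = x) :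
    blk S σ' m = {m} := by
  ext y
  simp only [mem_blk, Finset.mem_singleton]
  constructor
  · rintro ⟨hyS, hsc⟩
    exact fixed_sameCycle hm' hsc
  · rintro rfl
    exact ⟨hmS, Equiv.Perm.SameCycle.refl _ _⟩

theorem corr_old (hmS : m ∈ S) (hfix' : ∀ x ∉ S.erase m, σ' x = x)
    (hum : u ≠ m) (huS : u ∈ S.erase m) {x : Fin n} (hx : x ∈ S.erase m)
    (hnx : ¬ σ'.SameCycle u x) :
    blk S (σ' * Equiv.swap u m) x = blk (S.erase m) σ' x := by
  have hm' : σ' m = m := hfix' m (by simp)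
  have hxm : x ≠ m := (mem_erase.1 hx).1
  ext y
  simp only [mem_blk, mem_erase]
  constructor
  · rintro ⟨hyS, hsc⟩
    have hym : y ≠ m := by
      intro hy0
      rw [hy0] at hsc
      have h1 : (σ' * Equiv.swap u m).SameCycle x u := hsc.trans (splice_sc_um hm').symm
      exact hnx (((splice_sameCycle hm' hxm hum).2 h1).symm)
    exact ⟨⟨hym, hyS⟩, (splice_sameCycle hm' hxm hym).2 hsc⟩
  · rintro ⟨⟨hym, hyS⟩, hsc⟩
    exact ⟨hyS, (splice_sameCycle hm' hxm hym).1 hsc⟩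

theorem corr_old_eq (hmS : m ∈ S) (hm' : σ' m = m) (hfix' : ∀ x ∉ S.erase m, σ' x = x)
    {x : Fin n} (hx : x ∈ S.erase m) :
    blk S σ' x = blk (S.erase m) σ' x := by
  have hxm : x ≠ m := (mem_erase.1 hx).1
  ext y
  simp only [mem_blk, mem_erase]
  constructor
  · rintro ⟨hyS, hsc⟩
    have hym : y ≠ m := by
      rintro rfl
      exact hxm (fixed_sameCycle hm' hsc.symm)
    exact ⟨⟨hym, hyS⟩, hsc⟩
  · rintro ⟨⟨hym, hyS⟩, hsc⟩
    exact ⟨hyS, hsc⟩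

theorem corr_parts (hmS : m ∈ S) (hfix' : ∀ x ∉ S.erase m, σ' x = x)
    (hum : u ≠ m) (huS : u ∈ S.erase m) :
    blocksOn S (σ' * Equiv.swap u m) =
      insert (blk S (σ' * Equiv.swap u m) m)
        ((blocksOn (S.erase m) σ').erase (blk (S.erase m) σ' u)) := by
  have hm' : σ' m = m := hfix' m (by simp)
  ext B
  constructor
  · intro hB
    obtain ⟨x, hx, rfl⟩ := blocksOn_mem hB
    by_cases hxm : x = m
    · subst hxm; exact mem_insert_self _ _
    have hxS' : x ∈ S.erase m := mem_erase.2 ⟨hxm, hx⟩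
    by_cases hsc : σ'.SameCycle u x
    · have h1 : (σ' * Equiv.swap u m).SameCycle m x :=
        (splice_sc_um hm').symm.trans ((splice_sameCycle hm' hum hxm).1 hsc)
      have h2 : x ∈ blk S (σ' * Equiv.swap u m) m := mem_blk.2 ⟨hx, h1⟩
      rw [blk_eq_of_mem h2]
      exact mem_insert_self _ _
    · rw [corr_old hmS hfix' hum huS hxS' hsc]
      refine mem_insert_of_mem (mem_erase.2 ⟨?_, blk_mem_blocksOn hxS'⟩)
      intro hc
      have : x ∈ blk (S.erase m) σ' u := by
        rw [← hc]; exact self_mem_blk hxS'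
      exact hsc (mem_blk.1 this).2
  · intro hB
    rcases mem_insert.1 hB with rfl | hB'
    · exact blk_mem_blocksOn hmS
    · obtain ⟨hne, hB''⟩ := mem_erase.1 hB'
      obtain ⟨x, hx, rfl⟩ := blocksOn_mem hB''
      have hsc : ¬ σ'.SameCycle u x := by
        intro hc
        apply hne
        have : x ∈ blk (S.erase m) σ' u := mem_blk.2 ⟨hx, hc⟩
        exact blk_eq_of_mem this
      rw [← corr_old hmS hfix' hum huS hx hsc]
      exact blk_mem_blocksOn (mem_of_mem_erase hx)

theorem corr_parts_eq (hmS : m ∈ S) (hm' : σ' m = m) (hfix' : ∀ x ∉ S.erase m, σ' x = x) :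
    blocksOn S σ' = insert {m} (blocksOn (S.erase m) σ') := by
  ext B
  constructor
  · intro hB
    obtain ⟨x, hx, rfl⟩ := blocksOn_mem hB
    by_cases hxm : x = m
    · subst hxm
      rw [corr_N_eq hmS hm' hfix']
      exact mem_insert_self _ _
    have hxS' : x ∈ S.erase m := mem_erase.2 ⟨hxm, hx⟩
    rw [corr_old_eq hmS hm' hfix' hxS']
    exact mem_insert_of_mem (blk_mem_blocksOn hxS')
  · intro hB
    rcases mem_insert.1 hB with rfl | hB'
    · rw [← corr_N_eq hmS hm' hfix']
      exact blk_mem_blocksOn hmS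
    · obtain ⟨x, hx, rfl⟩ := blocksOn_mem hB'
      rw [← corr_old_eq hmS hm' hfix' hx]
      exact blk_mem_blocksOn (mem_of_mem_erase hx)

theorem notin_parts' (hfix' : ∀ x ∉ S.erase m, σ' x = x) {B : Finset (Fin n)}
    (hB : B ∈ blocksOn (S.erase m) σ') : m ∉ B := by
  intro hc
  exact (mem_erase.1 (blocksOn_sub hB hc)).1 rfl

end Corr

/-! ### Aug machinery -/

section AugSec

variable {m : Fin n} {parts' : Finset (Finset (Fin n))} {Bu : Finset (Fin n)}

theorem qrel_sub_aug {X Y : Finset (Fin n)} (h : QRel P parts' X Y) :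
    Aug P m parts' Bu X Y := by
  exact Relation.TransGen.mono (fun a b hab => Or.inl hab) _ _ h

theorem aug_clean {C : Finset (Fin n)} (hC : Clean P m parts' C) {X Y : Finset (Fin n)}
    (h : Aug P m parts' Bu X Y) (hX : X = C ∨ QRel P parts' C X) :
    QRel P parts' C Y := by
  induction h with
  | single hr =>
    rcases hr with hbase | ⟨hXp, rfl, hlt⟩
    · rcases hX with rfl | hq
      · exact Relation.TransGen.single hbase
      · exact hq.tail hbase
    · exact absurd hlt (hC _ hX)
  | tail hXZ hZY ih =>
    rcases hZY with hbase | ⟨hZp, rfl, hlt⟩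
    · exact ih.tail hbase
    · exact absurd hlt (hC _ (Or.inr ih))

theorem aug_decomp {X Y : Finset (Fin n)} (h : Aug P m parts' Bu X Y) :
    QRel P parts' X Y ∨
      ∃ E, (E = X ∨ Aug P m parts' Bu X E) ∧ hasLT P m E ∧
        (Y = Bu ∨ Aug P m parts' Bu Bu Y) := by
  induction h with
  | single hr =>
    rcases hr with hbase | ⟨hXp, rfl, hlt⟩
    · exact Or.inl (Relation.TransGen.single hbase)
    · exact Or.inr ⟨_, Or.inl rfl, hlt, Or.inl rfl⟩
  | @tail Z Y hXZ hZY ih =>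
    rcases hZY with hbase | ⟨hZp, hYBu, hlt⟩
    · rcases ih with hq | ⟨E, hE1, hE2, hE3⟩
      · exact Or.inl (hq.tail hbase)
      · refine Or.inr ⟨E, hE1, hE2, ?_⟩
        rcases hE3 with rfl | hBuZ
        · exact Or.inr (Relation.TransGen.single (Or.inl hbase))
        · exact Or.inr (hBuZ.tail (Or.inl hbase))
    · rcases ih with hq | ⟨E, hE1, hE2, hE3⟩
      · exact Or.inr ⟨Z, Or.inr (qrel_sub_aug P hq), hlt, Or.inl hYBu⟩
      · exact Or.inr ⟨E, hE1, hE2, Or.inl hYBu⟩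

theorem aug_antisymm (hanti : ∀ B C, QRel P parts' B C → QRel P parts' C B → B = C)
    (hclean : Clean P m parts' Bu) {X Y : Finset (Fin n)}
    (hXY : Aug P m parts' Bu X Y) (hYX : Aug P m parts' Bu Y X) : X = Y := by
  rcases aug_decomp P hXY with hq1 | ⟨E, hE1, hlt, hE3⟩
  · rcases aug_decomp P hYX with hq2 | ⟨F, hF1, hlt2, hF3⟩
    · exact hanti _ _ hq1 hq2
    · exfalso
      have hBuF : F = Bu ∨ Aug P m parts' Bu Bu F := by
        rcases hF3 with rfl | hBuX
        · rcases hF1 with rfl | hYF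
          · exact Or.inr hXY
          · exact Or.inr (hXY.trans hYF)
        · rcases hF1 with rfl | hYF
          · exact Or.inr (hBuX.trans hXY)
          · exact Or.inr ((hBuX.trans hXY).trans hYF)
      rcases hBuF with rfl | hBuF
      · exact hclean _ (Or.inl rfl) hlt2
      · exact hclean _ (Or.inr (aug_clean P hclean hBuF (Or.inl rfl))) hlt2
  · exfalso
    have hBuE : E = Bu ∨ Aug P m parts' Bu Bu E := by
      rcases hE3 with rfl | hBuY
      · rcases hE1 with rfl | hXE
        · exact Or.inr hYX
        · exact Or.inr (hYX.trans hXE)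
      · rcases hE1 with rfl | hXE
        · exact Or.inr (hBuY.trans hYX)
        · exact Or.inr ((hBuY.trans hYX).trans hXE)
    rcases hBuE with rfl | hBuE
    · exact hclean _ (Or.inl rfl) hlt
    · exact hclean _ (Or.inr (aug_clean P hclean hBuE (Or.inl rfl))) hlt

end AugSec

/-! ### Insertion analysis -/

noncomputable def projF (A Bu X : Finset (Fin n)) : Finset (Fin n) := if X = A then Bu else X

noncomputable def lftF (A Bu X : Finset (Fin n)) : Finset (Fin n) := if X = Bu then A else X

theorem projF_A {A Bu : Finset (Fin n)} : projF A Bu A = Bu := if_pos rfl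

theorem projF_ne {A Bu X : Finset (Fin n)} (h : X ≠ A) : projF A Bu X = X := if_neg h

theorem lftF_Bu {A Bu : Finset (Fin n)} : lftF A Bu Bu = A := if_pos rfl

theorem lftF_ne {A Bu X : Finset (Fin n)} (h : X ≠ Bu) : lftF A Bu X = X := if_neg h

theorem mem_maxB {P : PartialOrder (Fin n)} {parts : Finset (Finset (Fin n))}
    {B : Finset (Fin n)} : B ∈ MaxB P parts ↔ B ∈ parts ∧ Maxi P parts B :=
  Finset.mem_filter

section GSec

variable {m : Fin n} {parts' : Finset (Finset (Fin n))} {Bu : Finset (Fin n)}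

-- context: A = insert m Bu, parts = insert A (parts'.erase Bu)

theorem g_mem_parts (hnm : ∀ B ∈ parts', m ∉ B) {X : Finset (Fin n)}
    (hX : X ∈ insert (insert m Bu) (parts'.erase Bu)) :
    X = insert m Bu ∨ (X ∈ parts' ∧ X ≠ Bu ∧ X ≠ insert m Bu) := by
  rcases mem_insert.1 hX with rfl | hX'
  · exact Or.inl rfl
  · obtain ⟨hne, hXp⟩ := mem_erase.1 hX'
    refine Or.inr ⟨hXp, hne, ?_⟩
    intro hc
    exact hnm X hXp (hc ▸ mem_insert_self m Bu)

theorem g_base (hnm : ∀ B ∈ parts', m ∉ B) (hBu : Bu ∈ parts')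
    (hmq : ∀ B ∈ parts', ∀ q ∈ B, ¬ P.le m q) {X Y : Finset (Fin n)}
    (h : X ∈ insert (insert m Bu) (parts'.erase Bu) ∧
         Y ∈ insert (insert m Bu) (parts'.erase Bu) ∧ ∃ p ∈ X, ∃ q ∈ Y, P.le p q) :
    ABase P m parts' Bu (projF (insert m Bu) Bu X) (projF (insert m Bu) Bu Y) ∨
      (X = insert m Bu ∧ Y = insert m Bu) := by
  obtain ⟨hX, hY, p, hp, q, hq, hle⟩ := h
  rcases g_mem_parts hnm hX with rfl | ⟨hXp, hXne, hXne2⟩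
  · rcases g_mem_parts hnm hY with rfl | ⟨hYp, hYne, hYne2⟩
    · exact Or.inr ⟨rfl, rfl⟩
    · -- X = A, Y old
      rcases mem_insert.1 hp with rfl | hpBu
      · exact absurd hle (hmq Y hYp q hq)
      · rw [projF_A, projF_ne hYne2]
        exact Or.inl (Or.inl ⟨hBu, hYp, p, hpBu, q, hq, hle⟩)
  · rcases g_mem_parts hnm hY with rfl | ⟨hYp, hYne, hYne2⟩
    · -- X old, Y = A
      rw [projF_ne hXne2, projF_A]
      rcases mem_insert.1 hq with hqm | hqBu
      · have hpne : p ≠ m := fun hc => hnm X hXp (hc ▸ hp)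
        exact Or.inl (Or.inr ⟨hXp, rfl, p, hp, hqm ▸ hle, hpne⟩)
      · exact Or.inl (Or.inl ⟨hXp, hBu, p, hp, q, hqBu, hle⟩)
    · rw [projF_ne hXne2, projF_ne hYne2]
      exact Or.inl (Or.inl ⟨hXp, hYp, p, hp, q, hq, hle⟩)

theorem g_qrel (hnm : ∀ B ∈ parts', m ∉ B) (hBu : Bu ∈ parts')
    (hmq : ∀ B ∈ parts', ∀ q ∈ B, ¬ P.le m q) {X Y : Finset (Fin n)}
    (h : QRel P (insert (insert m Bu) (parts'.erase Bu)) X Y) :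
    Aug P m parts' Bu (projF (insert m Bu) Bu X) (projF (insert m Bu) Bu Y) ∨
      projF (insert m Bu) Bu X = projF (insert m Bu) Bu Y := by
  induction h with
  | single hr =>
    rcases g_base P hnm hBu hmq hr with hab | ⟨rfl, rfl⟩
    · exact Or.inl (Relation.TransGen.single hab)
    · exact Or.inr rfl
  | @tail Z Y hXZ hZY ih =>
    rcases g_base P hnm hBu hmq hZY with hab | ⟨rfl, rfl⟩
    · rcases ih with haug | heq
      · exact Or.inl (haug.tail hab)
      · exact Or.inl (heq ▸ Relation.TransGen.single hab)
    · exact ih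

theorem g_proj_inj (hnm : ∀ B ∈ parts', m ∉ B) {X Y : Finset (Fin n)}
    (hX : X ∈ insert (insert m Bu) (parts'.erase Bu))
    (hY : Y ∈ insert (insert m Bu) (parts'.erase Bu))
    (h : projF (insert m Bu) Bu X = projF (insert m Bu) Bu Y) : X = Y := by
  rcases g_mem_parts hnm hX with rfl | ⟨hXp, hXne, hXne2⟩ <;>
    rcases g_mem_parts hnm hY with h' | ⟨hYp, hYne, hYne2⟩
  · exact h'.symm
  · rw [projF_A, projF_ne hYne2] at h
    exact absurd h.symm hYne
  · rw [projF_ne hXne2, h', projF_A] at h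
    exact absurd h hXne
  · rwa [projF_ne hXne2, projF_ne hYne2] at h

theorem g_antisymm (hnm : ∀ B ∈ parts', m ∉ B) (hBu : Bu ∈ parts')
    (hmq : ∀ B ∈ parts', ∀ q ∈ B, ¬ P.le m q)
    (hanti : ∀ B C, QRel P parts' B C → QRel P parts' C B → B = C)
    (hclean : Clean P m parts' Bu) {X Y : Finset (Fin n)}
    (h1 : QRel P (insert (insert m Bu) (parts'.erase Bu)) X Y)
    (h2 : QRel P (insert (insert m Bu) (parts'.erase Bu)) Y X) : X = Y := by
  have hXmem := (qrel_mem P h1).1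
  have hYmem := (qrel_mem P h1).2
  rcases g_qrel P hnm hBu hmq h1 with ha1 | he1
  · rcases g_qrel P hnm hBu hmq h2 with ha2 | he2
    · exact g_proj_inj hnm hXmem hYmem (aug_antisymm P hanti hclean ha1 ha2)
    · exact g_proj_inj hnm hXmem hYmem he2.symm
  · exact g_proj_inj hnm hXmem hYmem he1

theorem g_maxi_A (hnm : ∀ B ∈ parts', m ∉ B) (hBu : Bu ∈ parts')
    (hmq : ∀ B ∈ parts', ∀ q ∈ B, ¬ P.le m q)
    (hBumax : Maxi P parts' Bu) (hclean : Clean P m parts' Bu) :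
    Maxi P (insert (insert m Bu) (parts'.erase Bu)) (insert m Bu) := by
  intro X hq
  have hXmem := (qrel_mem P hq).2
  have hproj : projF (insert m Bu) Bu X = Bu := by
    rcases g_qrel P hnm hBu hmq hq with ha | he
    · rw [projF_A] at ha
      exact hBumax _ (aug_clean P hclean ha (Or.inl rfl))
    · rw [projF_A] at he
      exact he.symm
  rcases g_mem_parts hnm hXmem with rfl | ⟨hXp, hXne, hXne2⟩
  · rfl
  · rw [projF_ne hXne2] at hproj
    exact absurd hproj hXne

theorem g_maxi_old (hnm : ∀ B ∈ parts', m ∉ B) (hBu : Bu ∈ parts')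
    (hmq : ∀ B ∈ parts', ∀ q ∈ B, ¬ P.le m q)
    (hBumax : Maxi P parts' Bu) {C : Finset (Fin n)}
    (hCp : C ∈ parts') (hCBu : C ≠ Bu) (hCmax : Maxi P parts' C)
    (hCclean : Clean P m parts' C) :
    Maxi P (insert (insert m Bu) (parts'.erase Bu)) C := by
  intro X hq
  have hXmem := (qrel_mem P hq).2
  have hCA : C ≠ insert m Bu := fun hc => hnm C hCp (hc ▸ mem_insert_self m Bu)
  have hproj : projF (insert m Bu) Bu X = C := by
    rcases g_qrel P hnm hBu hmq hq with ha | he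
    · rw [projF_ne hCA] at ha
      exact hCmax _ (aug_clean P hCclean ha (Or.inl rfl))
    · rw [projF_ne hCA] at he
      exact he.symm
  rcases g_mem_parts hnm hXmem with rfl | ⟨hXp, hXne, hXne2⟩
  · rw [projF_A] at hproj
    exact absurd hproj.symm hCBu
  · rwa [projF_ne hXne2] at hproj

theorem g_lift_base (hnm : ∀ B ∈ parts', m ∉ B) (hBu : Bu ∈ parts') {X Y : Finset (Fin n)}
    (h : X ∈ parts' ∧ Y ∈ parts' ∧ ∃ p ∈ X, ∃ q ∈ Y, P.le p q) :
    (lftF (insert m Bu) Bu X) ∈ insert (insert m Bu) (parts'.erase Bu) ∧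
    (lftF (insert m Bu) Bu Y) ∈ insert (insert m Bu) (parts'.erase Bu) ∧
    ∃ p ∈ lftF (insert m Bu) Bu X, ∃ q ∈ lftF (insert m Bu) Bu Y, P.le p q := by
  obtain ⟨hX, hY, p, hp, q, hq, hle⟩ := h
  have hmemlft : ∀ Z, Z ∈ parts' → lftF (insert m Bu) Bu Z ∈ insert (insert m Bu) (parts'.erase Bu) := by
    intro Z hZ
    by_cases hZBu : Z = Bu
    · rw [hZBu, lftF_Bu]; exact mem_insert_self _ _
    · rw [lftF_ne hZBu]; exact mem_insert_of_mem (mem_erase.2 ⟨hZBu, hZ⟩)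
  have hsublft : ∀ Z, Z ⊆ lftF (insert m Bu) Bu Z := by
    intro Z
    by_cases hZBu : Z = Bu
    · rw [hZBu, lftF_Bu]; exact subset_insert _ _
    · rw [lftF_ne hZBu]
  exact ⟨hmemlft X hX, hmemlft Y hY, p, hsublft X hp, q, hsublft Y hq, hle⟩

theorem g_lift (hnm : ∀ B ∈ parts', m ∉ B) (hBu : Bu ∈ parts') {X Y : Finset (Fin n)}
    (h : QRel P parts' X Y) :
    QRel P (insert (insert m Bu) (parts'.erase Bu)) (lftF (insert m Bu) Bu X)
      (lftF (insert m Bu) Bu Y) := by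
  induction h with
  | single hr => exact Relation.TransGen.single (g_lift_base P hnm hBu hr)
  | tail hXZ hZY ih => exact ih.tail (g_lift_base P hnm hBu hZY)

theorem g_maxi_conv (hnm : ∀ B ∈ parts', m ∉ B) (hBu : Bu ∈ parts')
    {B : Finset (Fin n)} (hBp : B ∈ parts') (hBBu : B ≠ Bu)
    (hBmax : Maxi P (insert (insert m Bu) (parts'.erase Bu)) B) :
    Maxi P parts' B ∧ Clean P m parts' B := by
  have hBlft : lftF (insert m Bu) Bu B = B := lftF_ne hBBu
  have hBparts : B ∈ insert (insert m Bu) (parts'.erase Bu) :=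
    mem_insert_of_mem (mem_erase.2 ⟨hBBu, hBp⟩)
  have hBA : B ≠ insert m Bu := fun hc => hnm B hBp (hc ▸ mem_insert_self m Bu)
  constructor
  · intro X hq
    have hXp := (qrel_mem P hq).2
    have h1 := g_lift P hnm hBu hq
    rw [hBlft] at h1
    have h2 := hBmax _ h1
    by_cases hXBu : X = Bu
    · rw [hXBu, lftF_Bu] at h2
      exact absurd h2 (Ne.symm hBA)
    · rwa [lftF_ne hXBu] at h2
  · intro Z hZ hlt
    obtain ⟨q, hqZ, hqle, hqne⟩ := hlt
    have hZp : Z ∈ parts' := by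
      rcases hZ with rfl | hq
      · exact hBp
      · exact (qrel_mem P hq).2
    have hedge : (lftF (insert m Bu) Bu Z) ∈ insert (insert m Bu) (parts'.erase Bu) ∧
        (insert m Bu) ∈ insert (insert m Bu) (parts'.erase Bu) ∧
        ∃ p ∈ lftF (insert m Bu) Bu Z, ∃ r ∈ (insert m Bu : Finset (Fin n)), P.le p r := by
      have hsublft : Z ⊆ lftF (insert m Bu) Bu Z := by
        by_cases hZBu : Z = Bu
        · rw [hZBu, lftF_Bu]; exact subset_insert _ _
        · rw [lftF_ne hZBu]
      have hmemlft : lftF (insert m Bu) Bu Z ∈ insert (insert m Bu) (parts'.erase Bu) := by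
        by_cases hZBu : Z = Bu
        · rw [hZBu, lftF_Bu]; exact mem_insert_self _ _
        · rw [lftF_ne hZBu]; exact mem_insert_of_mem (mem_erase.2 ⟨hZBu, hZp⟩)
      exact ⟨hmemlft, mem_insert_self _ _, q, hsublft hqZ, m, mem_insert_self m Bu, hqle⟩
    have hq2 : QRel P (insert (insert m Bu) (parts'.erase Bu)) B (insert m Bu) := by
      rcases hZ with rfl | hq
      · rw [← hBlft]
        exact Relation.TransGen.single hedge
      · have h1 := g_lift P hnm hBu hq
        rw [hBlft] at h1
        exact h1.tail hedge
    have := hBmax _ hq2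
    exact hBA this.symm

theorem g_maxb (hnm : ∀ B ∈ parts', m ∉ B) (hBu : Bu ∈ parts')
    (hmq : ∀ B ∈ parts', ∀ q ∈ B, ¬ P.le m q)
    (hBumax : Maxi P parts' Bu) (hclean : Clean P m parts' Bu) :
    MaxB P (insert (insert m Bu) (parts'.erase Bu)) =
      insert (insert m Bu)
        ((parts'.filter fun C => Maxi P parts' C ∧ Clean P m parts' C).erase Bu) := by
  ext B
  constructor
  · intro hB
    obtain ⟨hBmem, hBmax⟩ := mem_maxB.1 hB
    rcases g_mem_parts hnm hBmem with rfl | ⟨hBp, hBBu, hBA⟩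
    · exact mem_insert_self _ _
    · obtain ⟨h1, h2⟩ := g_maxi_conv P hnm hBu hBp hBBu hBmax
      exact mem_insert_of_mem (mem_erase.2 ⟨hBBu, Finset.mem_filter.2 ⟨hBp, h1, h2⟩⟩)
  · intro hB
    rw [mem_maxB]
    rcases mem_insert.1 hB with rfl | hB'
    · exact ⟨mem_insert_self _ _, g_maxi_A P hnm hBu hmq hBumax hclean⟩
    · obtain ⟨hBBu, hB''⟩ := mem_erase.1 hB'
      obtain ⟨hBp, h1, h2⟩ := Finset.mem_filter.1 hB''
      exact ⟨mem_insert_of_mem (mem_erase.2 ⟨hBBu, hBp⟩),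
        g_maxi_old P hnm hBu hmq hBumax hBp hBBu h1 h2⟩
end GSec

section ESec

variable {m : Fin n} {parts' : Finset (Finset (Fin n))}

theorem e_lift {X Y : Finset (Fin n)} (h : QRel P parts' X Y) :
    QRel P (insert ({m} : Finset (Fin n)) parts') X Y :=
  Relation.TransGen.mono (p := fun B C => B ∈ insert ({m} : Finset (Fin n)) parts' ∧
      C ∈ insert ({m} : Finset (Fin n)) parts' ∧ ∃ p ∈ B, ∃ q ∈ C, P.le p q)
    (fun a b hab => ⟨mem_insert_of_mem hab.1, mem_insert_of_mem hab.2.1, hab.2.2⟩) _ _ h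

theorem e_base (hmq : ∀ B ∈ parts', ∀ q ∈ B, ¬ P.le m q) {X Y : Finset (Fin n)}
    (h : X ∈ insert ({m} : Finset (Fin n)) parts' ∧
         Y ∈ insert ({m} : Finset (Fin n)) parts' ∧ ∃ p ∈ X, ∃ q ∈ Y, P.le p q)
    (hX : X = {m}) : Y = {m} := by
  obtain ⟨hXm, hY, p, hp, q, hq, hle⟩ := h
  rw [hX] at hp
  have hpm : p = m := Finset.mem_singleton.1 hp
  rcases mem_insert.1 hY with h' | hYp
  · exact h'
  · exact absurd (hpm ▸ hle) (hmq Y hYp q hq)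

theorem e_from_m (hmq : ∀ B ∈ parts', ∀ q ∈ B, ¬ P.le m q) {X Y : Finset (Fin n)}
    (h : QRel P (insert ({m} : Finset (Fin n)) parts') X Y) (hX : X = {m}) : Y = {m} := by
  induction h with
  | single hr => exact e_base P hmq hr hX
  | tail hXZ hZY ih => exact e_base P hmq hZY ih

theorem e_base_old (hnm : ∀ B ∈ parts', m ∉ B) {X Y : Finset (Fin n)}
    (h : X ∈ insert ({m} : Finset (Fin n)) parts' ∧
         Y ∈ insert ({m} : Finset (Fin n)) parts' ∧ ∃ p ∈ X, ∃ q ∈ Y, P.le p q)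
    (hX : X ≠ {m}) (hY : Y ≠ {m}) :
    X ∈ parts' ∧ Y ∈ parts' ∧ ∃ p ∈ X, ∃ q ∈ Y, P.le p q := by
  obtain ⟨hXm, hYm, hpq⟩ := h
  exact ⟨(mem_insert.1 hXm).resolve_left hX, (mem_insert.1 hYm).resolve_left hY, hpq⟩

theorem e_old (hnm : ∀ B ∈ parts', m ∉ B) (hmq : ∀ B ∈ parts', ∀ q ∈ B, ¬ P.le m q)
    {X Y : Finset (Fin n)}
    (h : QRel P (insert ({m} : Finset (Fin n)) parts') X Y) :
    X ≠ {m} → Y ≠ {m} → QRel P parts' X Y := by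
  induction h with
  | single hr =>
    intro hX hY
    exact Relation.TransGen.single (e_base_old P hnm hr hX hY)
  | @tail Z Y hXZ hZY ih =>
    intro hX hY
    by_cases hZm : Z = {m}
    · exact absurd (e_base P hmq hZY hZm) hY
    · exact (ih hX hZm).tail (e_base_old P hnm hZY hZm hY)

theorem e_base_lt (hnm : ∀ B ∈ parts', m ∉ B) {Z Y : Finset (Fin n)}
    (h : Z ∈ insert ({m} : Finset (Fin n)) parts' ∧
         Y ∈ insert ({m} : Finset (Fin n)) parts' ∧ ∃ p ∈ Z, ∃ q ∈ Y, P.le p q)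
    (hZ : Z ≠ {m}) (hY : Y = {m}) : hasLT P m Z := by
  obtain ⟨hZm, hYm, p, hp, q, hq, hle⟩ := h
  rw [hY] at hq
  have hqm : q = m := Finset.mem_singleton.1 hq
  have hZp : Z ∈ parts' := (mem_insert.1 hZm).resolve_left hZ
  exact ⟨p, hp, hqm ▸ hle, fun hc => hnm Z hZp (hc ▸ hp)⟩

theorem e_to_m (hnm : ∀ B ∈ parts', m ∉ B) (hmq : ∀ B ∈ parts', ∀ q ∈ B, ¬ P.le m q)
    {X Y : Finset (Fin n)}
    (h : QRel P (insert ({m} : Finset (Fin n)) parts') X Y) :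
    X ≠ {m} → Y = {m} →
      ∃ Z, (Z = X ∨ QRel P parts' X Z) ∧ hasLT P m Z := by
  induction h with
  | single hr =>
    intro hX hY
    exact ⟨_, Or.inl rfl, e_base_lt P hnm hr hX hY⟩
  | @tail Z Y hXZ hZY ih =>
    intro hX hY
    by_cases hZm : Z = {m}
    · exact ih hX hZm
    · exact ⟨Z, Or.inr (e_old P hnm hmq hXZ hX hZm), e_base_lt P hnm hZY hZm hY⟩

theorem e_antisymm (hnm : ∀ B ∈ parts', m ∉ B) (hmq : ∀ B ∈ parts', ∀ q ∈ B, ¬ P.le m q)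
    (hanti : ∀ B C, QRel P parts' B C → QRel P parts' C B → B = C)
    {B C : Finset (Fin n)}
    (h1 : QRel P (insert ({m} : Finset (Fin n)) parts') B C)
    (h2 : QRel P (insert ({m} : Finset (Fin n)) parts') C B) : B = C := by
  by_cases hB : B = {m}
  · have hC := e_from_m P hmq h1 hB
    rw [hB, hC]
  · by_cases hC : C = {m}
    · have hB2 := e_from_m P hmq h2 hC
      rw [hC, hB2]
    · exact hanti _ _ (e_old P hnm hmq h1 hB hC) (e_old P hnm hmq h2 hC hB)

theorem e_maxb (hnm : ∀ B ∈ parts', m ∉ B) (hmq : ∀ B ∈ parts', ∀ q ∈ B, ¬ P.le m q) :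
    MaxB P (insert ({m} : Finset (Fin n)) parts') =
      insert ({m} : Finset (Fin n))
        (parts'.filter fun C => Maxi P parts' C ∧ Clean P m parts' C) := by
  ext B
  constructor
  · intro hB
    obtain ⟨hBmem, hBmax⟩ := mem_maxB.1 hB
    by_cases hBm : B = {m}
    · rw [hBm]; exact mem_insert_self _ _
    have hBp : B ∈ parts' := (mem_insert.1 hBmem).resolve_left hBm
    refine mem_insert_of_mem (Finset.mem_filter.2 ⟨hBp, ?_, ?_⟩)
    · intro X hq
      have h1 := e_lift P (m := m) hq
      exact hBmax _ h1
    · intro Z hZ hlt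
      obtain ⟨q, hqZ, hqle, hqne⟩ := hlt
      have hZp : Z ∈ parts' := by
        rcases hZ with rfl | hq
        · exact hBp
        · exact (qrel_mem P hq).2
      have hedge : Z ∈ insert ({m} : Finset (Fin n)) parts' ∧
          ({m} : Finset (Fin n)) ∈ insert ({m} : Finset (Fin n)) parts' ∧
          ∃ p ∈ Z, ∃ r ∈ ({m} : Finset (Fin n)), P.le p r :=
        ⟨mem_insert_of_mem hZp, mem_insert_self _ _, q, hqZ, m, Finset.mem_singleton_self m,
          hqle⟩
      have hq2 : QRel P (insert ({m} : Finset (Fin n)) parts') B {m} := by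
        rcases hZ with rfl | hq
        · exact Relation.TransGen.single hedge
        · exact (e_lift P hq).tail hedge
      have := hBmax _ hq2
      exact hnm B hBp (this ▸ Finset.mem_singleton_self m)
  · intro hB
    rw [mem_maxB]
    rcases mem_insert.1 hB with rfl | hB'
    · refine ⟨mem_insert_self _ _, ?_⟩
      intro X hq
      exact e_from_m P hmq hq rfl
    · obtain ⟨hBp, hBmaxi, hBclean⟩ := Finset.mem_filter.1 hB'
      refine ⟨mem_insert_of_mem hBp, ?_⟩
      intro X hq
      have hBm : B ≠ {m} := fun hc => hnm B hBp (hc ▸ Finset.mem_singleton_self m)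
      by_cases hXm : X = {m}
      · obtain ⟨Z, hZ, hlt⟩ := e_to_m P hnm hmq hq hBm hXm
        exact absurd hlt (hBclean _ hZ)
      · exact hBmaxi _ (e_old P hnm hmq hq hBm hXm)

end ESec

theorem mem_Tset {S : Finset (Fin n)} {σ : Equiv.Perm (Fin n)} :
    σ ∈ Tset P S ↔ (∀ x ∉ S, σ x = x) ∧ PTransverseParts P (blocksOn S σ) := by
  rw [Tset, Finset.mem_filter]
  exact ⟨fun h => h.2, fun h => ⟨mem_univ _, h⟩⟩

theorem mem_maxPset {S : Finset (Fin n)} {m : Fin n} :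
    m ∈ maxPset P S ↔ m ∈ S ∧ ∀ x ∈ S, P.le m x → x = m :=
  Finset.mem_filter

theorem mem_Kset {S : Finset (Fin n)} {m : Fin n} {σ' : Equiv.Perm (Fin n)}
    {C : Finset (Fin n)} :
    C ∈ Kset P S m σ' ↔ C ∈ blocksOn (S.erase m) σ' ∧
      Maxi P (blocksOn (S.erase m) σ') C ∧ Clean P m (blocksOn (S.erase m) σ') C :=
  Finset.mem_filter

/-! ### Central lemma -/

section Central

variable {S : Finset (Fin n)} {m u : Fin n} {σ' : Equiv.Perm (Fin n)}

theorem central_mem (hm : m ∈ maxPset P S) (hσ' : σ' ∈ Tset P (S.erase m))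
    (hu : u = m ∨ (u ∈ S.erase m ∧ blk (S.erase m) σ' u ∈ Kset P S m σ')) :
    σ' * Equiv.swap u m ∈ Tset P S := by
  obtain ⟨hmS, hmax⟩ := (mem_maxPset P).1 hm
  obtain ⟨hfix', hT'⟩ := (mem_Tset P).1 hσ'
  have hm' : σ' m = m := hfix' m (by simp)
  have hnm : ∀ B ∈ blocksOn (S.erase m) σ', m ∉ B := fun B hB => notin_parts' hfix' hB
  have hmq : ∀ B ∈ blocksOn (S.erase m) σ', ∀ q ∈ B, ¬ P.le m q := by
    intro B hB q hq hle
    obtain ⟨hqne, hqS⟩ := mem_erase.1 (blocksOn_sub hB hq)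
    exact hqne (hmax q hqS hle)
  rcases hu with hueq | ⟨huS, hK⟩
  · have hσeq : σ' * Equiv.swap u m = σ' := by
      ext z; simp [hueq, Equiv.swap_self]
    rw [hσeq]
    refine (mem_Tset P).2 ⟨fun x hx => hfix' x (fun hc => hx (mem_of_mem_erase hc)), ?_⟩
    rw [corr_parts_eq hmS hm' hfix']
    constructor
    · intro B hB i hi j hj hle
      rcases mem_insert.1 hB with rfl | hB'
      · rw [Finset.mem_singleton.1 hi, Finset.mem_singleton.1 hj]
      · exact hT'.1 B hB' i hi j hj hle
    · intro B C h1 h2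
      exact e_antisymm P hnm hmq hT'.2 h1 h2
  · have hum : u ≠ m := (mem_erase.1 huS).1
    obtain ⟨hBu, hBumax, hBuclean⟩ := (mem_Kset P).1 hK
    refine (mem_Tset P).2 ⟨corr_fix hmS hfix' (mem_of_mem_erase huS), ?_⟩
    rw [corr_parts hmS hfix' hum huS, corr_N hmS hfix' hum huS]
    constructor
    · intro B hB i hi j hj hle
      rcases g_mem_parts hnm hB with rfl | ⟨hBp, _, _⟩
      · rcases mem_insert.1 hi with hi' | hiBu
        · rcases mem_insert.1 hj with hj' | hjBu
          · rw [hi', hj']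
          · exact absurd (hi' ▸ hle) (hmq _ hBu j hjBu)
        · rcases mem_insert.1 hj with hj' | hjBu
          · have hine : i ≠ m := fun hc => hnm _ hBu (hc ▸ hiBu)
            exact absurd ⟨i, hiBu, hj' ▸ hle, hine⟩ (hBuclean _ (Or.inl rfl))
          · exact hT'.1 _ hBu i hiBu j hjBu hle
      · exact hT'.1 B hBp i hi j hj hle
    · intro B C h1 h2
      exact g_antisymm P hnm hBu hmq hT'.2 hBuclean h1 h2

theorem central_union (hm : m ∈ maxPset P S) (hσ' : σ' ∈ Tset P (S.erase m))
    (hu : u = m ∨ (u ∈ S.erase m ∧ blk (S.erase m) σ' u ∈ Kset P S m σ')) :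
    (MaxB P (blocksOn S (σ' * Equiv.swap u m))).biUnion id =
      insert m ((Kset P S m σ').biUnion id) := by
  obtain ⟨hmS, hmax⟩ := (mem_maxPset P).1 hm
  obtain ⟨hfix', hT'⟩ := (mem_Tset P).1 hσ'
  have hm' : σ' m = m := hfix' m (by simp)
  have hnm : ∀ B ∈ blocksOn (S.erase m) σ', m ∉ B := fun B hB => notin_parts' hfix' hB
  have hmq : ∀ B ∈ blocksOn (S.erase m) σ', ∀ q ∈ B, ¬ P.le m q := by
    intro B hB q hq hle
    obtain ⟨hqne, hqS⟩ := mem_erase.1 (blocksOn_sub hB hq)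
    exact hqne (hmax q hqS hle)
  have hKeq : (blocksOn (S.erase m) σ').filter
      (fun C => Maxi P (blocksOn (S.erase m) σ') C ∧ Clean P m (blocksOn (S.erase m) σ') C) =
      Kset P S m σ' := rfl
  rcases hu with hueq | ⟨huS, hK⟩
  · have hσeq : σ' * Equiv.swap u m = σ' := by
      ext z; simp [hueq, Equiv.swap_self]
    rw [hσeq, corr_parts_eq hmS hm' hfix', e_maxb P hnm hmq, hKeq]
    ext y
    constructor
    · intro hy
      obtain ⟨B, hB, hyB⟩ := mem_biUnion.1 hy
      rcases mem_insert.1 hB with rfl | hB'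
      · exact mem_insert.2 (Or.inl (Finset.mem_singleton.1 hyB))
      · exact mem_insert.2 (Or.inr (mem_biUnion.2 ⟨B, hB', hyB⟩))
    · intro hy
      rcases mem_insert.1 hy with rfl | hy'
      · exact mem_biUnion.2 ⟨{y}, mem_insert_self _ _, Finset.mem_singleton_self y⟩
      · obtain ⟨B, hB, hyB⟩ := mem_biUnion.1 hy'
        exact mem_biUnion.2 ⟨B, mem_insert_of_mem hB, hyB⟩
  · have hum : u ≠ m := (mem_erase.1 huS).1
    obtain ⟨hBu, hBumax, hBuclean⟩ := (mem_Kset P).1 hK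
    rw [corr_parts hmS hfix' hum huS, corr_N hmS hfix' hum huS,
      g_maxb P hnm hBu hmq hBumax hBuclean, hKeq]
    ext y
    constructor
    · intro hy
      obtain ⟨B, hB, hyB⟩ := mem_biUnion.1 hy
      rcases mem_insert.1 hB with rfl | hB'
      · rcases mem_insert.1 hyB with rfl | hyBu
        · exact mem_insert_self _ _
        · exact mem_insert_of_mem (mem_biUnion.2 ⟨_, hK, hyBu⟩)
      · exact mem_insert_of_mem (mem_biUnion.2 ⟨B, mem_of_mem_erase hB', hyB⟩)
    · intro hy
      rcases mem_insert.1 hy with rfl | hy'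
      · exact mem_biUnion.2 ⟨insert y (blk (S.erase y) σ' u), mem_insert_self _ _,
          mem_insert_self _ _⟩
      · obtain ⟨B, hB, hyB⟩ := mem_biUnion.1 hy'
        by_cases hBBu : B = blk (S.erase m) σ' u
        · exact mem_biUnion.2 ⟨insert m (blk (S.erase m) σ' u), mem_insert_self _ _,
            mem_insert_of_mem (hBBu ▸ hyB)⟩
        · exact mem_biUnion.2 ⟨B, mem_insert_of_mem (mem_erase.2 ⟨hBBu, hB⟩), hyB⟩

end Central

/-! ### Forward direction -/

section Fwd

variable {S : Finset (Fin n)} {σ : Equiv.Perm (Fin n)} {v : Fin n}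

theorem maxb_union_nonempty (hS : S.Nonempty) (hσ : σ ∈ Tset P S) :
    ((MaxB P (blocksOn S σ)).biUnion id).Nonempty := by
  obtain ⟨hfix, hT⟩ := (mem_Tset P).1 hσ
  obtain ⟨x, hx⟩ := hS
  have hpne : (blocksOn S σ).Nonempty := ⟨blk S σ x, blk_mem_blocksOn hx⟩
  obtain ⟨M, hM, hMmax⟩ := exists_rel_max (QRel P (blocksOn S σ))
    (fun hab hbc => hab.trans hbc) (fun hab hba => hT.2 _ _ hab hba) _ hpne
  have hMaxi : Maxi P (blocksOn S σ) M := by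
    intro X hq
    exact hMmax X (qrel_mem P hq).2 hq
  obtain ⟨y, hy⟩ := blocksOn_nonempty hM
  exact ⟨y, mem_biUnion.2 ⟨M, mem_maxB.2 ⟨hM, hMaxi⟩, hy⟩⟩

theorem fwd_m_max (hσ : σ ∈ Tset P S)
    (hv : v ∈ (MaxB P (blocksOn S σ)).biUnion id) : σ v ∈ maxPset P S := by
  obtain ⟨hfix, hT⟩ := (mem_Tset P).1 hσ
  obtain ⟨Bv, hBvM, hvBv⟩ := mem_biUnion.1 hv
  obtain ⟨hBvp, hBvmax⟩ := mem_maxB.1 hBvM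
  have hvS : v ∈ S := blocksOn_sub hBvp hvBv
  have hBveq : Bv = blk S σ v := blk_eq_of_mem_blocksOn hBvp hvBv
  have hmS : σ v ∈ S := fix_maps hfix hvS
  have hmBv : σ v ∈ Bv := by
    rw [hBveq]; exact mem_blk.2 ⟨hmS, ⟨1, by simp⟩⟩
  refine (mem_maxPset P).2 ⟨hmS, ?_⟩
  intro x hx hle
  have hBx : blk S σ x ∈ blocksOn S σ := blk_mem_blocksOn hx
  have hedge : QRel P (blocksOn S σ) Bv (blk S σ x) :=
    Relation.TransGen.single ⟨hBvp, hBx, σ v, hmBv, x, self_mem_blk hx, hle⟩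
  have hxBv : x ∈ Bv := by
    have h2 := hBvmax _ hedge
    rw [← h2]; exact self_mem_blk hx
  exact (hT.1 Bv hBvp (σ v) hmBv x hxBv hle).symm

theorem fwd_splice_mem (hσ : σ ∈ Tset P S)
    (hv : v ∈ (MaxB P (blocksOn S σ)).biUnion id) :
    Equiv.swap (σ v) (σ (σ v)) * σ ∈ Tset P (S.erase (σ v)) := by
  obtain ⟨hfix, hT⟩ := (mem_Tset P).1 hσ
  obtain ⟨Bv, hBvM, hvBv⟩ := mem_biUnion.1 hv
  obtain ⟨hBvp, hBvmax⟩ := mem_maxB.1 hBvM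
  have hvS : v ∈ S := blocksOn_sub hBvp hvBv
  have hmS : σ v ∈ S := fix_maps hfix hvS
  obtain ⟨hre, hm''⟩ := forward_eq (σ := σ) (v := v) (m := σ v) rfl
  have hfix'' : ∀ x ∉ S.erase (σ v), (Equiv.swap (σ v) (σ (σ v)) * σ) x = x := by
    intro x hx
    by_cases hxm : x = σ v
    · rw [hxm]; exact hm''
    · have hxS : x ∉ S := fun hc => hx (mem_erase.2 ⟨hxm, hc⟩)
      have h1 : σ x = x := hfix x hxS
      show Equiv.swap (σ v) (σ (σ v)) (σ x) = x
      rw [h1, Equiv.swap_apply_of_ne_of_ne hxm ?_]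
      intro hc
      exact hxS (hc ▸ fix_maps hfix hmS)
  refine (mem_Tset P).2 ⟨hfix'', ?_⟩
  have hnm'' : ∀ B ∈ blocksOn (S.erase (σ v)) (Equiv.swap (σ v) (σ (σ v)) * σ), (σ v) ∉ B :=
    fun B hB => notin_parts' hfix'' hB
  by_cases hvm : v = σ v
  · have h0 : σ (σ v) = σ v := congrArg σ hvm.symm
    have hσeq : Equiv.swap (σ v) (σ (σ v)) * σ = σ := by
      refine Equiv.ext fun z => ?_
      show Equiv.swap (σ v) (σ (σ v)) (σ z) = σ z
      rw [h0, Equiv.swap_self]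
      rfl
    rw [hσeq]
    rw [hσeq] at hfix''
    have hPeq : blocksOn S σ = insert {σ v} (blocksOn (S.erase (σ v)) σ) :=
      corr_parts_eq hmS h0 hfix''
    rw [hPeq] at hT
    exact ⟨fun B hB i hi j hj hle => hT.1 B (mem_insert_of_mem hB) i hi j hj hle,
      fun B C h1 h2 => hT.2 B C (e_lift P h1) (e_lift P h2)⟩
  · have hvS' : v ∈ S.erase (σ v) := mem_erase.2 ⟨hvm, hvS⟩
    have hPeq := corr_parts (u := v) (σ' := Equiv.swap (σ v) (σ (σ v)) * σ) hmS hfix'' hvm hvS'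
    rw [corr_N hmS hfix'' hvm hvS', hre] at hPeq
    rw [hPeq] at hT
    have hBu''mem : blk (S.erase (σ v)) (Equiv.swap (σ v) (σ (σ v)) * σ) v ∈
        blocksOn (S.erase (σ v)) (Equiv.swap (σ v) (σ (σ v)) * σ) := blk_mem_blocksOn hvS'
    constructor
    · intro B hB i hi j hj hle
      by_cases hBBu : B = blk (S.erase (σ v)) (Equiv.swap (σ v) (σ (σ v)) * σ) v
      · refine hT.1 _ (mem_insert_self _ _) i ?_ j ?_ hle
        · exact mem_insert_of_mem (hBBu ▸ hi)
        · exact mem_insert_of_mem (hBBu ▸ hj)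
      · exact hT.1 B (mem_insert_of_mem (mem_erase.2 ⟨hBBu, hB⟩)) i hi j hj hle
    · intro B C h1 h2
      have hBp := (qrel_mem P h1).1
      have hCp := (qrel_mem P h1).2
      have hl1 := g_lift P hnm'' hBu''mem h1
      have hl2 := g_lift P hnm'' hBu''mem h2
      have heq := hT.2 _ _ hl1 hl2
      by_cases hBBu : B = blk (S.erase (σ v)) (Equiv.swap (σ v) (σ (σ v)) * σ) v <;>
        by_cases hCBu : C = blk (S.erase (σ v)) (Equiv.swap (σ v) (σ (σ v)) * σ) v
      · rw [hBBu, hCBu]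
      · rw [hBBu, lftF_Bu, lftF_ne hCBu] at heq
        exact absurd (heq ▸ mem_insert_self (σ v) _ : (σ v) ∈ C) (hnm'' C hCp)
      · rw [hCBu, lftF_Bu, lftF_ne hBBu] at heq
        exact absurd (heq.symm ▸ mem_insert_self (σ v) _ : (σ v) ∈ B) (hnm'' B hBp)
      · rwa [lftF_ne hBBu, lftF_ne hCBu] at heq

theorem fwd_clause (hσ : σ ∈ Tset P S)
    (hv : v ∈ (MaxB P (blocksOn S σ)).biUnion id) :
    v = σ v ∨ (v ∈ S.erase (σ v) ∧
      blk (S.erase (σ v)) (Equiv.swap (σ v) (σ (σ v)) * σ) v ∈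
        Kset P S (σ v) (Equiv.swap (σ v) (σ (σ v)) * σ)) := by
  by_cases hvm : v = σ v
  · exact Or.inl hvm
  obtain ⟨hfix, hT⟩ := (mem_Tset P).1 hσ
  obtain ⟨Bv, hBvM, hvBv⟩ := mem_biUnion.1 hv
  obtain ⟨hBvp, hBvmax⟩ := mem_maxB.1 hBvM
  have hvS : v ∈ S := blocksOn_sub hBvp hvBv
  have hmS : σ v ∈ S := fix_maps hfix hvS
  obtain ⟨hre, hm''⟩ := forward_eq (σ := σ) (v := v) (m := σ v) rfl
  have hfix'' : ∀ x ∉ S.erase (σ v), (Equiv.swap (σ v) (σ (σ v)) * σ) x = x := by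
    intro x hx
    by_cases hxm : x = σ v
    · rw [hxm]; exact hm''
    · have hxS : x ∉ S := fun hc => hx (mem_erase.2 ⟨hxm, hc⟩)
      have h1 : σ x = x := hfix x hxS
      show Equiv.swap (σ v) (σ (σ v)) (σ x) = x
      rw [h1, Equiv.swap_apply_of_ne_of_ne hxm ?_]
      intro hc
      exact hxS (hc ▸ fix_maps hfix hmS)
  have hvS' : v ∈ S.erase (σ v) := mem_erase.2 ⟨hvm, hvS⟩
  have hnm'' : ∀ B ∈ blocksOn (S.erase (σ v)) (Equiv.swap (σ v) (σ (σ v)) * σ), (σ v) ∉ B :=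
    fun B hB => notin_parts' hfix'' hB
  have hBu''mem : blk (S.erase (σ v)) (Equiv.swap (σ v) (σ (σ v)) * σ) v ∈
      blocksOn (S.erase (σ v)) (Equiv.swap (σ v) (σ (σ v)) * σ) := blk_mem_blocksOn hvS'
  have hPeq := corr_parts (u := v) (σ' := Equiv.swap (σ v) (σ (σ v)) * σ) hmS hfix'' hvm hvS'
  rw [corr_N hmS hfix'' hvm hvS', hre] at hPeq
  -- Bv is the new big block
  have hmBv : σ v ∈ Bv := by
    rw [blk_eq_of_mem_blocksOn hBvp hvBv]
    exact mem_blk.2 ⟨hmS, ⟨1, by simp⟩⟩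
  have hBvA : Bv = insert (σ v) (blk (S.erase (σ v)) (Equiv.swap (σ v) (σ (σ v)) * σ) v) := by
    have h1 : Bv = blk S σ (σ v) := blk_eq_of_mem_blocksOn hBvp hmBv
    have h2 := corr_N (u := v) (σ' := Equiv.swap (σ v) (σ (σ v)) * σ) hmS hfix'' hvm hvS'
    rw [hre] at h2
    rw [h1, h2]
  rw [hPeq] at hT hBvmax
  rw [hBvA] at hBvmax
  refine Or.inr ⟨hvS', (mem_Kset P).2 ⟨hBu''mem, ?_, ?_⟩⟩
  · intro X hq
    have hXp := (qrel_mem P hq).2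
    have hl := g_lift P hnm'' hBu''mem hq
    rw [lftF_Bu] at hl
    have h2 := hBvmax _ hl
    by_cases hXBu : X = blk (S.erase (σ v)) (Equiv.swap (σ v) (σ (σ v)) * σ) v
    · exact hXBu
    · rw [lftF_ne hXBu] at h2
      exact absurd (h2 ▸ mem_insert_self (σ v) _ : (σ v) ∈ X) (hnm'' X hXp)
  · intro Z hZ hlt
    obtain ⟨q, hqZ, hqle, hqne⟩ := hlt
    by_cases hZBu : Z = blk (S.erase (σ v)) (Equiv.swap (σ v) (σ (σ v)) * σ) v
    · have hq1 : q ∈ insert (σ v) (blk (S.erase (σ v)) (Equiv.swap (σ v) (σ (σ v)) * σ) v) :=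
        mem_insert_of_mem (hZBu ▸ hqZ)
      exact hqne (hT.1 _ (mem_insert_self _ _) q hq1 (σ v) (mem_insert_self _ _) hqle)
    · have hq0 : QRel P (blocksOn (S.erase (σ v)) (Equiv.swap (σ v) (σ (σ v)) * σ))
          (blk (S.erase (σ v)) (Equiv.swap (σ v) (σ (σ v)) * σ) v) Z := by
        rcases hZ with h' | h'
        · exact absurd h' hZBu
        · exact h'
      have hZp := (qrel_mem P hq0).2
      have hl := g_lift P hnm'' hBu''mem hq0
      rw [lftF_Bu, lftF_ne hZBu] at hl
      have h2 := hBvmax _ hl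
      exact hnm'' Z hZp (h2 ▸ mem_insert_self (σ v) _)

end Fwd

/-! ### Counting steps -/

theorem max'_congr {s t : Finset (Fin n)} (h : s = t) (hs : s.Nonempty) (ht : t.Nonempty) :
    s.max' hs = t.max' ht := by subst h; rfl

theorem maxPset_nonempty {S : Finset (Fin n)} (hS : S.Nonempty) :
    (maxPset P S).Nonempty := by
  obtain ⟨M, hM, hMmax⟩ := exists_rel_max P.le (fun hab hbc => P.le_trans _ _ _ hab hbc)
    (fun hab hba => P.le_antisymm _ _ hab hba) S hS
  exact ⟨M, (mem_maxPset P).2 ⟨hM, fun x hx hle => hMmax x hx hle⟩⟩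

theorem step2 {S : Finset (Fin n)} (hS : S.Nonempty) :
    (Tset P S).card = ∑ m ∈ maxPset P S, (Tset P (S.erase m)).card := by
  have huu : ∀ m σ', m ∈ maxPset P S → σ' ∈ Tset P (S.erase m) →
      (uu P S m σ' = m ∨ (uu P S m σ' ∈ S.erase m ∧
        blk (S.erase m) σ' (uu P S m σ') ∈ Kset P S m σ')) := by
    intro m σ' hm hσ'
    have hmem : uu P S m σ' ∈ insert m ((Kset P S m σ').biUnion id) := max'_mem _ _
    rcases mem_insert.1 hmem with h | h
    · exact Or.inl h
    · obtain ⟨C, hC, hyC⟩ := mem_biUnion.1 h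
      have hC' := (mem_Kset P).1 hC
      have hCeq : C = blk (S.erase m) σ' (uu P S m σ') := blk_eq_of_mem_blocksOn hC'.1 hyC
      refine Or.inr ⟨blocksOn_sub hC'.1 hyC, ?_⟩
      rw [← hCeq]; exact hC
  have hfixm : ∀ m (σ' : Equiv.Perm (Fin n)), σ' ∈ Tset P (S.erase m) → σ' m = m := by
    intro m σ' hσ'
    exact ((mem_Tset P).1 hσ').1 m (by simp)
  rw [← Finset.card_sigma]
  refine (Finset.card_bij
    (fun (p : (_ : Fin n) × Equiv.Perm (Fin n)) _ => p.2 * Equiv.swap (uu P S p.1 p.2) p.1)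
    ?_ ?_ ?_).symm
  · rintro ⟨m, σ'⟩ hp
    obtain ⟨hm, hσ'⟩ := Finset.mem_sigma.1 hp
    exact central_mem P hm hσ' (huu m σ' hm hσ')
  · rintro ⟨m1, σ1⟩ hp1 ⟨m2, σ2⟩ hp2 heq
    obtain ⟨hm1, hσ1⟩ := Finset.mem_sigma.1 hp1
    obtain ⟨hm2, hσ2⟩ := Finset.mem_sigma.1 hp2
    dsimp only at heq
    have hcu1 := central_union P hm1 hσ1 (huu m1 σ1 hm1 hσ1)
    have hcu2 := central_union P hm2 hσ2 (huu m2 σ2 hm2 hσ2)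
    rw [heq] at hcu1
    have hueq : uu P S m1 σ1 = uu P S m2 σ2 :=
      max'_congr (hcu1.symm.trans hcu2) _ _
    have happ1 : (σ1 * Equiv.swap (uu P S m1 σ1) m1) (uu P S m1 σ1) = m1 :=
      splice_apply_u (hfixm m1 σ1 hσ1)
    have happ2 : (σ2 * Equiv.swap (uu P S m2 σ2) m2) (uu P S m2 σ2) = m2 :=
      splice_apply_u (hfixm m2 σ2 hσ2)
    have hmeq : m1 = m2 := by
      rw [← happ1, ← happ2, heq, hueq]
    subst hmeq
    rw [hueq] at heq
    have hσeq : σ1 = σ2 := by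
      have h2 : σ1 * (Equiv.swap (uu P S m1 σ2) m1 * Equiv.swap (uu P S m1 σ2) m1) =
          σ2 * (Equiv.swap (uu P S m1 σ2) m1 * Equiv.swap (uu P S m1 σ2) m1) := by
        rw [← mul_assoc, ← mul_assoc, heq]
      rwa [Equiv.swap_mul_self, mul_one, mul_one] at h2
    rw [hσeq]
  · intro σ hσ
    have hne := maxb_union_nonempty P hS hσ
    set v := ((MaxB P (blocksOn S σ)).biUnion id).max' hne with hvdef
    have hv : v ∈ (MaxB P (blocksOn S σ)).biUnion id := max'_mem _ _
    have hmmax := fwd_m_max P hσ hv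
    have hsp := fwd_splice_mem P hσ hv
    have hcl := fwd_clause P hσ hv
    obtain ⟨hre, hm''⟩ := forward_eq (σ := σ) (v := v) (m := σ v) rfl
    have hcu := central_union P hmmax hsp hcl
    rw [hre] at hcu
    have huv : uu P S (σ v) (Equiv.swap (σ v) (σ (σ v)) * σ) = v := by
      show (insert (σ v) ((Kset P S (σ v) (Equiv.swap (σ v) (σ (σ v)) * σ)).biUnion id)).max'
        (insert_nonempty _ _) = v
      exact (max'_congr hcu hne (insert_nonempty _ _)).symm
    refine ⟨⟨σ v, Equiv.swap (σ v) (σ (σ v)) * σ⟩, Finset.mem_sigma.2 ⟨hmmax, hsp⟩, ?_⟩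
    dsimp only
    rw [huv, hre]

theorem wset_mem {S : Finset (Fin n)} {l : List (Fin n)} :
    l ∈ Wset P S ↔ l.Nodup ∧ l.toFinset = S ∧ l.Pairwise fun a b => ¬ P.le b a := by
  rw [Wset, Finset.mem_filter, List.mem_toFinset, List.mem_permutations]
  constructor
  · rintro ⟨hperm, hpw⟩
    refine ⟨hperm.nodup_iff.2 (Finset.sort_nodup S _), ?_, hpw⟩
    ext a
    rw [List.mem_toFinset, hperm.mem_iff]
    exact Finset.mem_sort _
  · rintro ⟨hnd, hfin, hpw⟩
    refine ⟨List.perm_of_nodup_nodup_toFinset_eq hnd (Finset.sort_nodup S _) ?_, hpw⟩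
    rw [hfin, Finset.sort_toFinset]

theorem step1 {S : Finset (Fin n)} (hS : S.Nonempty) :
    (Wset P S).card = ∑ m ∈ maxPset P S, (Wset P (S.erase m)).card := by
  rw [← Finset.card_sigma]
  refine (Finset.card_bij (fun (p : (_ : Fin n) × List (Fin n)) _ => p.2 ++ [p.1])
    ?_ ?_ ?_).symm
  · rintro ⟨m, l⟩ hp
    obtain ⟨hm, hl⟩ := Finset.mem_sigma.1 hp
    obtain ⟨hmS, hmax⟩ := (mem_maxPset P).1 hm
    obtain ⟨hnd, hfin, hpw⟩ := (wset_mem P).1 hl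
    have hml : m ∉ l := by
      intro hc
      have : m ∈ S.erase m := hfin ▸ List.mem_toFinset.2 hc
      exact (mem_erase.1 this).1 rfl
    refine (wset_mem P).2 ⟨?_, ?_, ?_⟩
    · rw [List.nodup_append]
      exact ⟨hnd, List.nodup_singleton m, fun a ha b hb hab => hml (by have hb' : b = m := List.mem_singleton.1 hb; rw [← hb', ← hab]; exact ha)⟩
    · rw [List.toFinset_append]
      ext x
      simp only [Finset.mem_union, List.mem_toFinset, List.mem_singleton]
      constructor
      · rintro (hx | rfl)
        · exact mem_of_mem_erase (hfin ▸ List.mem_toFinset.2 hx)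
        · exact hmS
      · intro hx
        by_cases hxm : x = m
        · exact Or.inr hxm
        · exact Or.inl (List.mem_toFinset.1 (hfin ▸ (mem_erase.2 ⟨hxm, hx⟩ : x ∈ S.erase m)))
    · rw [List.pairwise_append]
      refine ⟨hpw, List.pairwise_singleton _ _, ?_⟩
      intro a ha b hb hle
      rw [List.mem_singleton.1 hb] at hle
      have haS : a ∈ S.erase m := hfin ▸ List.mem_toFinset.2 ha
      exact (mem_erase.1 haS).1 (hmax a (mem_of_mem_erase haS) hle)
  · rintro ⟨m1, l1⟩ hp1 ⟨m2, l2⟩ hp2 heq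
    dsimp only at heq
    obtain ⟨hl, hm⟩ := List.append_inj' heq rfl
    have hm12 : m1 = m2 := by
      have := List.cons.injEq m1 [] m2 [] ▸ hm
      exact (List.cons.inj hm).1
    subst hm12
    rw [hl]
  · intro l hl
    obtain ⟨hnd, hfin, hpw⟩ := (wset_mem P).1 hl
    have hlen : l.length = S.card := by
      rw [← hfin, List.toFinset_card_of_nodup hnd]
    have hlne : l ≠ [] := by
      intro hc
      rw [hc] at hlen
      simp only [List.length_nil] at hlen
      exact Finset.card_ne_zero_of_mem hS.choose_spec hlen.symm
    set m := l.getLast hlne with hmdef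
    have hdec : l.dropLast ++ [m] = l := List.dropLast_append_getLast hlne
    have hmS : m ∈ S := hfin ▸ List.mem_toFinset.2 (List.getLast_mem hlne)
    have hnd2 : (l.dropLast ++ [m]).Nodup := hdec.symm ▸ hnd
    rw [List.nodup_append] at hnd2
    have hpw2 : (l.dropLast ++ [m]).Pairwise fun a b => ¬ P.le b a := hdec.symm ▸ hpw
    rw [List.pairwise_append] at hpw2
    have hmmax : m ∈ maxPset P S := by
      refine (mem_maxPset P).2 ⟨hmS, ?_⟩
      intro x hx hle
      by_contra hxm
      have hxl : x ∈ l := List.mem_toFinset.1 (hfin ▸ hx)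
      have hxl' : x ∈ l.dropLast := by
        rw [← hdec] at hxl
        rcases List.mem_append.1 hxl with h | h
        · exact h
        · exact absurd (List.mem_singleton.1 h) hxm
      exact hpw2.2.2 x hxl' m (List.mem_singleton_self m) hle
    have hfin' : l.dropLast.toFinset = S.erase m := by
      ext x
      constructor
      · intro hx
        have hx' := List.mem_toFinset.1 hx
        refine mem_erase.2 ⟨?_, ?_⟩
        · intro hc
          exact hnd2.2.2 x hx' m (List.mem_singleton_self m) hc
        · exact hfin ▸ List.mem_toFinset.2 (List.mem_of_mem_dropLast hx')
      · intro hx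
        obtain ⟨hxm, hxS⟩ := mem_erase.1 hx
        have hxl : x ∈ l := List.mem_toFinset.1 (hfin ▸ hxS)
        rw [← hdec] at hxl
        rcases List.mem_append.1 hxl with h | h
        · exact List.mem_toFinset.2 h
        · exact absurd (List.mem_singleton.1 h) hxm
    have hmem : l.dropLast ∈ Wset P (S.erase m) :=
      (wset_mem P).2 ⟨hnd2.1, hfin', hpw2.1⟩
    exact ⟨⟨m, l.dropLast⟩, Finset.mem_sigma.2 ⟨hmmax, hmem⟩, hdec⟩

theorem tset_empty : (Tset P (∅ : Finset (Fin n))).card = 1 := by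
  have : Tset P (∅ : Finset (Fin n)) = {1} := by
    ext σ
    rw [mem_Tset, Finset.mem_singleton]
    constructor
    · rintro ⟨hfix, -⟩
      exact Equiv.ext fun x => hfix x (notMem_empty x)
    · rintro rfl
      refine ⟨fun x _ => rfl, ?_, ?_⟩
      · intro B hB
        simp [blocksOn] at hB
      · intro B C h1 h2
        have := (qrel_mem P h1).1
        simp [blocksOn] at this
  rw [this, Finset.card_singleton]

theorem wset_empty : (Wset P (∅ : Finset (Fin n))).card = 1 := by
  have : Wset P (∅ : Finset (Fin n)) = {[]} := by
    ext l
    rw [wset_mem, Finset.mem_singleton]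
    constructor
    · rintro ⟨-, hfin, -⟩
      exact (List.toFinset_eq_empty_iff l).1 hfin
    · rintro rfl
      exact ⟨List.nodup_nil, rfl, List.Pairwise.nil⟩
  rw [this, Finset.card_singleton]

theorem key (S : Finset (Fin n)) : (Wset P S).card = (Tset P S).card := by
  induction S using Finset.strongInduction with
  | _ S ih =>
    rcases S.eq_empty_or_nonempty with rfl | hS
    · rw [wset_empty, tset_empty]
    · rw [step1 P hS, step2 P hS]
      refine Finset.sum_congr rfl fun m hm => ?_
      exact ih _ (erase_ssubset ((mem_maxPset P).1 hm).1)

end Stmt11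

/-- For any finite poset `P` on `[n]`, the number of linear extensions of `P` (bijective
listings `σ` of `[n]` such that `σ i ≤_P σ j` implies `i ≤ j`) equals the number of
`P`-transverse permutations (permutations whose cycle partition is `P`-transverse). -/
theorem stmt11 (n : ℕ) (P : PartialOrder (Fin n)) :
    (Finset.univ.filter fun σ : Equiv.Perm (Fin n) =>
        ∀ i j : Fin n, P.le (σ i) (σ j) → i ≤ j).card =
    (Finset.univ.filter fun σ : Equiv.Perm (Fin n) =>
        PTransverseParts P (cycleBlocks σ)).card := by
  classical
  have h2 : (Finset.univ.filter fun σ : Equiv.Perm (Fin n) =>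
      PTransverseParts P (cycleBlocks σ)).card = (Stmt11.Tset P Finset.univ).card := by
    congr 1
    ext σ
    rw [Stmt11.mem_Tset, Finset.mem_filter]
    constructor
    · rintro ⟨-, hT⟩
      exact ⟨fun x hx => absurd (Finset.mem_univ x) hx, hT⟩
    · rintro ⟨-, hT⟩
      exact ⟨Finset.mem_univ _, hT⟩
  have h1 : (Finset.univ.filter fun σ : Equiv.Perm (Fin n) =>
      ∀ i j : Fin n, P.le (σ i) (σ j) → i ≤ j).card = (Stmt11.Wset P Finset.univ).card := by
    refine Finset.card_bij (fun σ _ => List.ofFn σ) ?_ ?_ ?_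
    · intro σ hσ
      have hp := (Finset.mem_filter.1 hσ).2
      refine (Stmt11.wset_mem P).2 ⟨List.nodup_ofFn.2 σ.injective, ?_, ?_⟩
      · ext x
        simp only [List.mem_toFinset, List.mem_ofFn, Finset.mem_univ, iff_true]
        exact ⟨σ.symm x, σ.apply_symm_apply x⟩
      · rw [List.pairwise_ofFn]
        intro i j hij hle
        exact absurd (hp j i hle) (not_le.2 hij)
    · intro σ1 h1 σ2 h2 heq
      have := List.ofFn_inj.1 heq
      exact Equiv.coe_fn_injective this
    · intro l hl
      obtain ⟨hnd, hfin, hpw⟩ := (Stmt11.wset_mem P).1 hl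
      have hlen : l.length = n := by
        rw [← List.toFinset_card_of_nodup hnd, hfin, Finset.card_univ, Fintype.card_fin]
      have hinj : Function.Injective (fun i : Fin n => l.get (Fin.cast hlen.symm i)) := by
        intro a b hab
        have := List.nodup_iff_injective_get.1 hnd hab
        exact Fin.cast_injective _ (by exact this)
      have hbij : Function.Bijective (fun i : Fin n => l.get (Fin.cast hlen.symm i)) :=
        Finite.injective_iff_bijective.1 hinj
      refine ⟨Equiv.ofBijective _ hbij, ?_, ?_⟩
      · rw [Finset.mem_filter]
        refine ⟨Finset.mem_univ _, ?_⟩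
        intro i j hle
        by_contra hij
        rw [not_le] at hij
        rw [List.pairwise_iff_get] at hpw
        exact hpw (Fin.cast hlen.symm j) (Fin.cast hlen.symm i) (by simpa using hij) hle
      · refine List.ext_get (by simp [hlen]) ?_
        intro k h1 h2
        rw [List.get_ofFn]
        rfl
  rw [h1, h2, Stmt11.key]
end

section
/- For nonnegative integers a and b, the number of set partitions of the disjoint union of two chains C_a and C_b (with a and b elements) that are transverse to the poset C_a ⊔ C_b and have exactly k two-element blocks equals C(a,k)·C(b,k); consequently ∑_{k=0}^{min(a,b)} C(a,k)·C(b,k) = C(a+b, a). -/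
/-- The disjoint union of two incomparable chains of sizes `a` and `b`, as a poset on
`Fin (a+b)`: the first `a` elements form a chain (in index order), the last `b` elements
form a chain, and there are no other relations. -/
def chainsTwo (a b : ℕ) : PartialOrder (Fin (a + b)) where
  le i j := (i.1 < a ∧ j.1 < a ∧ i.1 ≤ j.1) ∨ (a ≤ i.1 ∧ a ≤ j.1 ∧ i.1 ≤ j.1)
  lt i j := ((i.1 < a ∧ j.1 < a ∧ i.1 ≤ j.1) ∨ (a ≤ i.1 ∧ a ≤ j.1 ∧ i.1 ≤ j.1)) ∧
    ¬ ((j.1 < a ∧ i.1 < a ∧ j.1 ≤ i.1) ∨ (a ≤ j.1 ∧ a ≤ i.1 ∧ j.1 ≤ i.1))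
  le_refl i := by
    show (i.1 < a ∧ i.1 < a ∧ i.1 ≤ i.1) ∨ (a ≤ i.1 ∧ a ≤ i.1 ∧ i.1 ≤ i.1)
    omega
  le_trans i j k h1 h2 := by
    have h1' : (i.1 < a ∧ j.1 < a ∧ i.1 ≤ j.1) ∨ (a ≤ i.1 ∧ a ≤ j.1 ∧ i.1 ≤ j.1) := h1
    have h2' : (j.1 < a ∧ k.1 < a ∧ j.1 ≤ k.1) ∨ (a ≤ j.1 ∧ a ≤ k.1 ∧ j.1 ≤ k.1) := h2
    clear h1 h2
    show (i.1 < a ∧ k.1 < a ∧ i.1 ≤ k.1) ∨ (a ≤ i.1 ∧ a ≤ k.1 ∧ i.1 ≤ k.1)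
    omega
  le_antisymm i j h1 h2 := by
    have h1' : (i.1 < a ∧ j.1 < a ∧ i.1 ≤ j.1) ∨ (a ≤ i.1 ∧ a ≤ j.1 ∧ i.1 ≤ j.1) := h1
    have h2' : (j.1 < a ∧ i.1 < a ∧ j.1 ≤ i.1) ∨ (a ≤ j.1 ∧ a ≤ i.1 ∧ j.1 ≤ i.1) := h2
    clear h1 h2
    exact Fin.ext (by omega)

open scoped Classical

namespace Stmt13Aux
open Finset

variable {a b : ℕ}

lemma le_iff {z w : Fin (a+b)} : (chainsTwo a b).le z w ↔
    ((z.1 < a ∧ w.1 < a ∧ z.1 ≤ w.1) ∨ (a ≤ z.1 ∧ a ≤ w.1 ∧ z.1 ≤ w.1)) := Iff.rfl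

/-- the first chain, as a finset -/
def Afin (a b : ℕ) : Finset (Fin (a+b)) := univ.filter (fun z => z.1 < a)
/-- the second chain -/
def Bfin (a b : ℕ) : Finset (Fin (a+b)) := univ.filter (fun z => a ≤ z.1)

lemma mem_Afin {z : Fin (a+b)} : z ∈ Afin a b ↔ z.1 < a := by simp [Afin]
lemma mem_Bfin {z : Fin (a+b)} : z ∈ Bfin a b ↔ a ≤ z.1 := by simp [Bfin]

lemma card_Afin : (Afin a b).card = a := by
  classical
  have : Afin a b = (univ : Finset (Fin a)).map (Fin.castAddEmb b) := by
    ext z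
    simp only [mem_Afin, mem_map, mem_univ, true_and]
    constructor
    · intro hz; exact ⟨⟨z.1, hz⟩, Fin.ext rfl⟩
    · rintro ⟨i, rfl⟩; exact i.2
  rw [this, card_map, card_univ, Fintype.card_fin]

lemma card_Bfin : (Bfin a b).card = b := by
  classical
  have : Bfin a b = (univ : Finset (Fin b)).map (Fin.natAddEmb a) := by
    ext z
    simp only [mem_Bfin, mem_map, mem_univ, true_and]
    constructor
    · intro hz; exact ⟨⟨z.1 - a, by omega⟩, Fin.ext (by simp [Fin.natAdd]; omega)⟩
    · rintro ⟨i, rfl⟩; simp [Fin.natAdd]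
  rw [this, card_map, card_univ, Fintype.card_fin]

/-- the `i`-th matched pair -/
def pairAt (SA SB : Finset (Fin (a+b))) (i : Fin (min SA.card SB.card)) :
    Finset (Fin (a+b)) :=
  {SA.orderEmbOfFin rfl (Fin.castLE (Nat.min_le_left _ _) i),
   SB.orderEmbOfFin rfl (Fin.castLE (Nat.min_le_right _ _) i)}

/-- the blocks of the partition built from a pair of subsets -/
def buildParts (SA SB : Finset (Fin (a+b))) : Finset (Finset (Fin (a+b))) :=
  (univ.image (pairAt SA SB)) ∪ ((SA ∪ SB)ᶜ.image fun z => ({z} : Finset (Fin (a+b))))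

lemma mem_buildParts {SA SB : Finset (Fin (a+b))} {B : Finset (Fin (a+b))} :
    B ∈ buildParts SA SB ↔
      (∃ i, B = pairAt SA SB i) ∨ (∃ z, z ∉ SA ∧ z ∉ SB ∧ B = {z}) := by
  simp only [buildParts, mem_union, mem_image, mem_univ, true_and, mem_compl,
    Finset.mem_union, not_or]
  constructor
  · rintro (⟨i, hi⟩ | ⟨z, ⟨h1, h2⟩, hz⟩)
    · exact Or.inl ⟨i, hi.symm⟩
    · exact Or.inr ⟨z, h1, h2, hz.symm⟩
  · rintro (⟨i, hi⟩ | ⟨z, h1, h2, hz⟩)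
    · exact Or.inl ⟨i, hi.symm⟩
    · exact Or.inr ⟨z, ⟨h1, h2⟩, hz.symm⟩


section Build
variable (SA SB : Finset (Fin (a+b)))

/-- `i`-th element of `SA` -/
def xA (i : Fin (min SA.card SB.card)) : Fin (a+b) :=
  SA.orderEmbOfFin rfl (Fin.castLE (Nat.min_le_left _ _) i)

/-- `i`-th element of `SB` -/
def xB (i : Fin (min SA.card SB.card)) : Fin (a+b) :=
  SB.orderEmbOfFin rfl (Fin.castLE (Nat.min_le_right _ _) i)

lemma pairAt_eq (i : Fin (min SA.card SB.card)) :
    pairAt SA SB i = {xA SA SB i, xB SA SB i} := rfl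

lemma xA_mem (i) : xA SA SB i ∈ SA := Finset.orderEmbOfFin_mem _ _ _
lemma xB_mem (i) : xB SA SB i ∈ SB := Finset.orderEmbOfFin_mem _ _ _

lemma xA_strictMono : StrictMono (xA SA SB) := by
  intro i j h
  exact (SA.orderEmbOfFin rfl).strictMono (show (i : ℕ) < j from h)

lemma xB_strictMono : StrictMono (xB SA SB) := by
  intro i j h
  exact (SB.orderEmbOfFin rfl).strictMono (show (i : ℕ) < j from h)

lemma exists_xA (hk : SA.card = SB.card) {z : Fin (a+b)} (hz : z ∈ SA) :
    ∃ i, xA SA SB i = z := by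
  have hmin : min SA.card SB.card = SA.card := by omega
  have : z ∈ Set.range (SA.orderEmbOfFin rfl) := by
    rw [Finset.range_orderEmbOfFin]; exact_mod_cast hz
  obtain ⟨j, hj⟩ := this
  refine ⟨⟨j.1, by omega⟩, ?_⟩
  show SA.orderEmbOfFin rfl (Fin.castLE (Nat.min_le_left _ _) ⟨j.1, _⟩) = z
  rw [show Fin.castLE (Nat.min_le_left SA.card SB.card) ⟨j.1, _⟩ = j from Fin.ext rfl]
  exact hj

lemma exists_xB (hk : SA.card = SB.card) {z : Fin (a+b)} (hz : z ∈ SB) :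
    ∃ i, xB SA SB i = z := by
  have hmin : min SA.card SB.card = SB.card := by omega
  have : z ∈ Set.range (SB.orderEmbOfFin rfl) := by
    rw [Finset.range_orderEmbOfFin]; exact_mod_cast hz
  obtain ⟨j, hj⟩ := this
  refine ⟨⟨j.1, by omega⟩, ?_⟩
  show SB.orderEmbOfFin rfl (Fin.castLE (Nat.min_le_right _ _) ⟨j.1, _⟩) = z
  rw [show Fin.castLE (Nat.min_le_right SA.card SB.card) ⟨j.1, _⟩ = j from Fin.ext rfl]
  exact hj

variable {SA SB}

lemma notmem_of_disj (hA : SA ⊆ Afin a b) (hB : SB ⊆ Bfin a b) {z : Fin (a+b)}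
    (h1 : z ∈ SA) (h2 : z ∈ SB) : False := by
  have := mem_Afin.mp (hA h1); have := mem_Bfin.mp (hB h2); omega

lemma xA_ne_xB (hA : SA ⊆ Afin a b) (hB : SB ⊆ Bfin a b) (i j) :
    xA SA SB i ≠ xB SA SB j := by
  intro h
  exact notmem_of_disj hA hB (xA_mem SA SB i) (h ▸ xB_mem SA SB j)

/-- the built partition -/
def buildFP (hA : SA ⊆ Afin a b) (hB : SB ⊆ Bfin a b) (hk : SA.card = SB.card) :
    Finpartition (univ : Finset (Fin (a+b))) where
  parts := buildParts SA SB
  supIndep := by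
    rw [Finset.supIndep_iff_pairwiseDisjoint]
    intro B hB' C hC' hne
    simp only [Function.onFun, id]
    rw [Finset.disjoint_left]
    intro z hzB hzC
    rw [Finset.mem_coe, mem_buildParts] at hB' hC'
    rcases hB' with ⟨i, rfl⟩ | ⟨u, hu1, hu2, rfl⟩ <;>
      rcases hC' with ⟨j, rfl⟩ | ⟨v, hv1, hv2, rfl⟩
    · rw [pairAt_eq] at hzB hzC
      simp only [Finset.mem_insert, Finset.mem_singleton] at hzB hzC
      have hij : i = j := by
        rcases hzB with rfl | rfl <;> rcases hzC with h | h
        · exact (xA_strictMono SA SB).injective h.symm ▸ rfl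
        · exact absurd h (xA_ne_xB hA hB _ _)
        · exact absurd h.symm (xA_ne_xB hA hB _ _)
        · exact (xB_strictMono SA SB).injective h.symm ▸ rfl
      exact hne (by rw [hij])
    · rw [pairAt_eq] at hzB
      simp only [Finset.mem_insert, Finset.mem_singleton] at hzB
      rw [Finset.mem_singleton] at hzC
      subst hzC
      rcases hzB with rfl | rfl
      · exact hv1 (xA_mem SA SB i)
      · exact hv2 (xB_mem SA SB i)
    · rw [pairAt_eq] at hzC
      simp only [Finset.mem_insert, Finset.mem_singleton] at hzC
      rw [Finset.mem_singleton] at hzB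
      subst hzB
      rcases hzC with rfl | rfl
      · exact hu1 (xA_mem SA SB j)
      · exact hu2 (xB_mem SA SB j)
    · rw [Finset.mem_singleton] at hzB hzC
      exact hne (by rw [hzB] at hzC; rw [hzC])
  sup_parts := by
    apply Finset.Subset.antisymm (Finset.sup_le fun B _ => Finset.subset_univ B)
    intro z _
    rw [Finset.mem_sup]
    by_cases h1 : z ∈ SA
    · obtain ⟨i, hi⟩ := exists_xA SA SB hk h1
      exact ⟨pairAt SA SB i, mem_buildParts.mpr (Or.inl ⟨i, rfl⟩),
        by rw [pairAt_eq, ← hi]; exact Finset.mem_insert_self _ _⟩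
    by_cases h2 : z ∈ SB
    · obtain ⟨i, hi⟩ := exists_xB SA SB hk h2
      exact ⟨pairAt SA SB i, mem_buildParts.mpr (Or.inl ⟨i, rfl⟩),
        by rw [pairAt_eq, ← hi]; simp⟩
    · exact ⟨{z}, mem_buildParts.mpr (Or.inr ⟨z, h1, h2, rfl⟩), Finset.mem_singleton_self z⟩
  bot_notMem := by
    intro h
    rw [show (⊥ : Finset (Fin (a+b))) = ∅ from rfl, mem_buildParts] at h
    rcases h with ⟨i, hi⟩ | ⟨z, _, _, hz⟩
    · rw [pairAt_eq] at hi
      exact absurd hi.symm (Finset.insert_ne_empty _ _)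
    · exact absurd hz.symm (Finset.singleton_ne_empty _)

lemma buildFP_parts (hA : SA ⊆ Afin a b) (hB : SB ⊆ Bfin a b) (hk : SA.card = SB.card) :
    (buildFP hA hB hk).parts = buildParts SA SB := rfl

lemma pairAt_card (hA : SA ⊆ Afin a b) (hB : SB ⊆ Bfin a b) (i) :
    (pairAt SA SB i).card = 2 := by
  rw [pairAt_eq, Finset.card_insert_of_notMem (by simpa using xA_ne_xB hA hB i i),
    Finset.card_singleton]

lemma twoBlocks_build (hA : SA ⊆ Afin a b) (hB : SB ⊆ Bfin a b) :
    (buildParts SA SB).filter (fun B => B.card = 2) = univ.image (pairAt SA SB) := by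
  ext B
  simp only [Finset.mem_filter, mem_buildParts, Finset.mem_image, mem_univ, true_and]
  constructor
  · rintro ⟨⟨i, rfl⟩ | ⟨z, _, _, rfl⟩, hcard⟩
    · exact ⟨i, rfl⟩
    · simp at hcard
  · rintro ⟨i, rfl⟩
    exact ⟨Or.inl ⟨i, rfl⟩, pairAt_card hA hB i⟩

lemma pairAt_injective (hA : SA ⊆ Afin a b) (hB : SB ⊆ Bfin a b) :
    Function.Injective (pairAt SA SB) := by
  intro i j h
  rw [pairAt_eq, pairAt_eq] at h
  have : xA SA SB i ∈ ({xA SA SB j, xB SA SB j} : Finset (Fin (a+b))) := by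
    rw [← h]; exact Finset.mem_insert_self _ _
  simp only [Finset.mem_insert, Finset.mem_singleton] at this
  rcases this with h' | h'
  · exact (xA_strictMono SA SB).injective h'
  · exact absurd h' (xA_ne_xB hA hB _ _)

lemma twoBlocks_build_card (hA : SA ⊆ Afin a b) (hB : SB ⊆ Bfin a b) :
    ((buildParts SA SB).filter (fun B => B.card = 2)).card = min SA.card SB.card := by
  rw [twoBlocks_build hA hB, Finset.card_image_of_injective _ (pairAt_injective hA hB),
    card_univ, Fintype.card_fin]

end Build

/-- weight function used to prove the quotient is a poset -/
def gfun (SA SB : Finset (Fin (a+b))) (z : Fin (a+b)) : ℕ :=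
  if z.1 < a then
    (SA.filter fun s => s.1 ≤ z.1).card * (a+b+2) + (if z ∈ SA then 0 else z.1 + 1)
  else
    (SB.filter fun s => s.1 ≤ z.1).card * (a+b+2) + (if z ∈ SB then 0 else z.1 + 1)

lemma ghelp (S : Finset (Fin (a+b))) {z w : Fin (a+b)} (hzw : z.1 < w.1) :
    (S.filter fun s => s.1 ≤ z.1).card * (a+b+2) + (if z ∈ S then 0 else z.1 + 1)
    < (S.filter fun s => s.1 ≤ w.1).card * (a+b+2) + (if w ∈ S then 0 else w.1 + 1) := by
  have hsub : (S.filter fun s => s.1 ≤ z.1) ⊆ (S.filter fun s => s.1 ≤ w.1) := by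
    intro s hs
    rw [Finset.mem_filter] at hs ⊢
    exact ⟨hs.1, by omega⟩
  have hle : (S.filter fun s => s.1 ≤ z.1).card ≤ (S.filter fun s => s.1 ≤ w.1).card :=
    Finset.card_le_card hsub
  have hz1 : z.1 < a + b := z.isLt
  have hw1 : w.1 < a + b := w.isLt
  by_cases hw : w ∈ S
  · have hlt : (S.filter fun s => s.1 ≤ z.1).card < (S.filter fun s => s.1 ≤ w.1).card := by
      apply Finset.card_lt_card
      refine ⟨hsub, fun hsub' => ?_⟩
      have : w ∈ S.filter fun s => s.1 ≤ z.1 :=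
        hsub' (Finset.mem_filter.mpr ⟨hw, le_refl _⟩)
      rw [Finset.mem_filter] at this
      omega
    split_ifs <;> nlinarith
  · rw [if_neg hw]
    split_ifs with hz
    · nlinarith
    · nlinarith

lemma gfun_mono {SA SB : Finset (Fin (a+b))} {z w : Fin (a+b)}
    (h : (chainsTwo a b).le z w) : z = w ∨ gfun SA SB z < gfun SA SB w := by
  rw [le_iff] at h
  by_cases hzw : z.1 = w.1
  · exact Or.inl (Fin.ext hzw)
  right
  have hlt : z.1 < w.1 := by omega
  rcases h with ⟨h1, h2, _⟩ | ⟨h1, h2, _⟩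
  · rw [gfun, gfun, if_pos h1, if_pos h2]
    exact ghelp SA hlt
  · rw [gfun, gfun, if_neg (show ¬ z.1 < a by omega), if_neg (show ¬ w.1 < a by omega)]
    exact ghelp SB hlt

lemma count_le_orderEmbOfFin (S : Finset (Fin (a+b))) {k : ℕ} (h : S.card = k) (i : Fin k) :
    (S.filter fun s => s.1 ≤ (S.orderEmbOfFin h i).1).card = i.1 + 1 := by
  have himg : (S.filter fun s => s.1 ≤ (S.orderEmbOfFin h i).1)
      = (Finset.Iic i).image (S.orderEmbOfFin h) := by
    ext s
    simp only [Finset.mem_filter, Finset.mem_image, Finset.mem_Iic]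
    constructor
    · rintro ⟨hs, hle⟩
      have : s ∈ Set.range (S.orderEmbOfFin h) := by
        rw [Finset.range_orderEmbOfFin]; exact_mod_cast hs
      obtain ⟨j, rfl⟩ := this
      exact ⟨j, (S.orderEmbOfFin h).le_iff_le.mp (by exact hle), rfl⟩
    · rintro ⟨j, hj, rfl⟩
      exact ⟨Finset.orderEmbOfFin_mem _ _ _, (S.orderEmbOfFin h).le_iff_le.mpr hj⟩
  rw [himg, Finset.card_image_of_injective _ (S.orderEmbOfFin h).injective, Fin.card_Iic]

lemma gfun_pair {SA SB : Finset (Fin (a+b))} (hA : SA ⊆ Afin a b) (hB : SB ⊆ Bfin a b)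
    (i : Fin (min SA.card SB.card)) :
    gfun SA SB (xA SA SB i) = gfun SA SB (xB SA SB i) := by
  have hxa : (xA SA SB i).1 < a := mem_Afin.mp (hA (xA_mem SA SB i))
  have hxb : a ≤ (xB SA SB i).1 := mem_Bfin.mp (hB (xB_mem SA SB i))
  have h1 : gfun SA SB (xA SA SB i)
      = (SA.filter fun s => s.1 ≤ (xA SA SB i).1).card * (a+b+2) := by
    rw [gfun, if_pos hxa, if_pos (xA_mem SA SB i)]
    omega
  have h2 : gfun SA SB (xB SA SB i)
      = (SB.filter fun s => s.1 ≤ (xB SA SB i).1).card * (a+b+2) := by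
    rw [gfun, if_neg (show ¬ (xB SA SB i).1 < a by omega), if_pos (xB_mem SA SB i)]
    omega
  rw [h1, h2,
    show xA SA SB i = SA.orderEmbOfFin rfl (Fin.castLE (Nat.min_le_left _ _) i) from rfl,
    show xB SA SB i = SB.orderEmbOfFin rfl (Fin.castLE (Nat.min_le_right _ _) i) from rfl,
    count_le_orderEmbOfFin, count_le_orderEmbOfFin]
  simp [Fin.coe_castLE]

/-- Antisymmetry of the quotient from a weight function. -/
lemma antisymm_of_g (π : Finpartition (univ : Finset (Fin (a+b)))) (g : Fin (a+b) → ℕ)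
    (hmono : ∀ z w, (chainsTwo a b).le z w → z = w ∨ g z < g w)
    (hconst : ∀ B ∈ π.parts, ∀ p ∈ B, ∀ q ∈ B, g p = g q) :
    ∀ B C, QRel (chainsTwo a b) π.parts B C → QRel (chainsTwo a b) π.parts C B → B = C := by
  have step : ∀ B C, (B ∈ π.parts ∧ C ∈ π.parts ∧ ∃ p ∈ B, ∃ q ∈ C, (chainsTwo a b).le p q) →
      B ∈ π.parts ∧ C ∈ π.parts ∧ (B = C ∨ ∀ p ∈ B, ∀ q ∈ C, g p < g q) := by
    rintro B C ⟨hB, hC, p, hp, q, hq, hle⟩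
    refine ⟨hB, hC, ?_⟩
    rcases hmono _ _ hle with rfl | hlt
    · exact Or.inl (π.eq_of_mem_parts hB hC hp hq)
    · exact Or.inr fun p' hp' q' hq' =>
        (hconst B hB p' hp' p hp) ▸ (hconst C hC q hq q' hq') ▸ hlt
  have main : ∀ B C, QRel (chainsTwo a b) π.parts B C →
      B ∈ π.parts ∧ C ∈ π.parts ∧ (B = C ∨ ∀ p ∈ B, ∀ q ∈ C, g p < g q) := by
    intro B C h
    induction h with
    | single h => exact step _ _ h
    | tail _ h2 ih =>
      obtain ⟨hB, hC, hBC⟩ := ih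
      obtain ⟨_, hD, hCD⟩ := step _ _ h2
      refine ⟨hB, hD, ?_⟩
      rcases hBC with rfl | hBC
      · exact hCD
      rcases hCD with rfl | hCD
      · exact Or.inr hBC
      obtain ⟨r, hr⟩ := π.nonempty_of_mem_parts hC
      exact Or.inr fun p hp q hq => lt_trans (hBC p hp r hr) (hCD r hr q hq)
  intro B C h1 h2
  obtain ⟨hB, hC, hBC⟩ := main B C h1
  obtain ⟨_, _, hCB⟩ := main C B h2
  rcases hBC with rfl | hBC
  · rfl
  rcases hCB with rfl | hCB
  · rfl
  obtain ⟨p, hp⟩ := π.nonempty_of_mem_parts hB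
  obtain ⟨q, hq⟩ := π.nonempty_of_mem_parts hC
  exact absurd (lt_trans (hBC p hp q hq) (hCB q hq p hp)) (lt_irrefl _)

lemma gfun_const_on_build {SA SB : Finset (Fin (a+b))} (hA : SA ⊆ Afin a b)
    (hB : SB ⊆ Bfin a b) :
    ∀ B ∈ buildParts SA SB, ∀ p ∈ B, ∀ q ∈ B, gfun SA SB p = gfun SA SB q := by
  intro B hBmem p hp q hq
  rw [mem_buildParts] at hBmem
  rcases hBmem with ⟨i, rfl⟩ | ⟨z, _, _, rfl⟩
  · rw [pairAt_eq] at hp hq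
    simp only [Finset.mem_insert, Finset.mem_singleton] at hp hq
    have := gfun_pair hA hB i
    rcases hp with rfl | rfl <;> rcases hq with h | h <;> rw [h] <;> omega
  · rw [Finset.mem_singleton] at hp hq
    rw [hp, hq]

lemma buildFP_transverse {SA SB : Finset (Fin (a+b))} (hA : SA ⊆ Afin a b)
    (hB : SB ⊆ Bfin a b) (hk : SA.card = SB.card) :
    PTransverseParts (chainsTwo a b) (buildFP hA hB hk).parts := by
  constructor
  · intro B hBmem p hp q hq hle
    rw [buildFP_parts, mem_buildParts] at hBmem
    rcases hBmem with ⟨i, rfl⟩ | ⟨z, _, _, rfl⟩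
    · rw [pairAt_eq] at hp hq
      simp only [Finset.mem_insert, Finset.mem_singleton] at hp hq
      have hxa : (xA SA SB i).1 < a := mem_Afin.mp (hA (xA_mem SA SB i))
      have hxb : a ≤ (xB SA SB i).1 := mem_Bfin.mp (hB (xB_mem SA SB i))
      rw [le_iff] at hle
      rcases hp with rfl | rfl <;> rcases hq with rfl | rfl
      · rfl
      · exfalso; omega
      · exfalso; omega
      · rfl
    · rw [Finset.mem_singleton] at hp hq
      rw [hp, hq]
  · exact antisymm_of_g (buildFP hA hB hk) (gfun SA SB)
      (fun z w h => gfun_mono h) (gfun_const_on_build hA hB)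

section Structure
variable {π : Finpartition (univ : Finset (Fin (a+b)))}

lemma eq_of_same_chain (hT : PTransverseParts (chainsTwo a b) π.parts) {B : Finset (Fin (a+b))}
    (hB : B ∈ π.parts) {p q : Fin (a+b)} (hp : p ∈ B) (hq : q ∈ B)
    (hc : (p.1 < a ∧ q.1 < a) ∨ (a ≤ p.1 ∧ a ≤ q.1)) : p = q := by
  rcases le_total p.1 q.1 with h | h
  · exact hT.1 B hB p hp q hq (le_iff.mpr (by omega))
  · exact (hT.1 B hB q hq p hp (le_iff.mpr (by omega))).symm

lemma block_structure (hT : PTransverseParts (chainsTwo a b) π.parts)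
    {B : Finset (Fin (a+b))} (hB : B ∈ π.parts) :
    (∃ z, B = {z}) ∨ (∃ x y, x.1 < a ∧ a ≤ y.1 ∧ B = {x, y}) := by
  obtain ⟨z, hz⟩ := π.nonempty_of_mem_parts hB
  by_cases hza : z.1 < a
  · by_cases hy : ∃ y ∈ B, a ≤ y.1
    · obtain ⟨y, hyB, hya⟩ := hy
      refine Or.inr ⟨z, y, hza, hya, ?_⟩
      ext w
      simp only [Finset.mem_insert, Finset.mem_singleton]
      constructor
      · intro hw
        by_cases hwa : w.1 < a
        · exact Or.inl (eq_of_same_chain hT hB hw hz (Or.inl ⟨hwa, hza⟩))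
        · exact Or.inr (eq_of_same_chain hT hB hw hyB (Or.inr (by omega)))
      · rintro (rfl | rfl) <;> assumption
    · push_neg at hy
      refine Or.inl ⟨z, ?_⟩
      ext w
      simp only [Finset.mem_singleton]
      constructor
      · intro hw
        exact eq_of_same_chain hT hB hw hz (Or.inl ⟨by have := hy w hw; omega, hza⟩)
      · rintro rfl; assumption
  · by_cases hx : ∃ x ∈ B, x.1 < a
    · obtain ⟨x, hxB, hxa⟩ := hx
      refine Or.inr ⟨x, z, hxa, by omega, ?_⟩
      ext w
      simp only [Finset.mem_insert, Finset.mem_singleton]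
      constructor
      · intro hw
        by_cases hwa : w.1 < a
        · exact Or.inl (eq_of_same_chain hT hB hw hxB (Or.inl ⟨hwa, hxa⟩))
        · exact Or.inr (eq_of_same_chain hT hB hw hz (Or.inr (by omega)))
      · rintro (rfl | rfl) <;> assumption
    · push_neg at hx
      refine Or.inl ⟨z, ?_⟩
      ext w
      simp only [Finset.mem_singleton]
      constructor
      · intro hw
        exact eq_of_same_chain hT hB hw hz (Or.inr ⟨by have := hx w hw; omega, by omega⟩)
      · rintro rfl; assumption

/-- order preservation of the matching -/
lemma matching_mono (hT : PTransverseParts (chainsTwo a b) π.parts)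
    {x y x' y' : Fin (a+b)} (hxy : ({x, y} : Finset (Fin (a+b))) ∈ π.parts)
    (hxy' : ({x', y'} : Finset (Fin (a+b))) ∈ π.parts)
    (hxa : x.1 < a) (hya : a ≤ y.1) (hxa' : x'.1 < a) (hya' : a ≤ y'.1)
    (hxx : x.1 < x'.1) : y.1 < y'.1 := by
  by_contra hyy
  push_neg at hyy
  have hne : ({x, y} : Finset (Fin (a+b))) ≠ {x', y'} := by
    intro h
    have : x ∈ ({x', y'} : Finset (Fin (a+b))) := h ▸ Finset.mem_insert_self _ _
    simp only [Finset.mem_insert, Finset.mem_singleton] at this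
    rcases this with rfl | rfl <;> omega
  apply hne
  apply hT.2
  · exact Relation.TransGen.single ⟨hxy, hxy', x, Finset.mem_insert_self _ _,
      x', Finset.mem_insert_self _ _, le_iff.mpr (Or.inl ⟨hxa, hxa', by omega⟩)⟩
  · exact Relation.TransGen.single ⟨hxy', hxy, y', by simp,
      y, by simp, le_iff.mpr (Or.inr ⟨hya', hya, hyy⟩)⟩

/-- chosen subset of the first chain: elements lying in 2-blocks -/
def SAof (π : Finpartition (univ : Finset (Fin (a+b)))) : Finset (Fin (a+b)) :=
  (Afin a b).filter fun x => (π.part x).card = 2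

def SBof (π : Finpartition (univ : Finset (Fin (a+b)))) : Finset (Fin (a+b)) :=
  (Bfin a b).filter fun x => (π.part x).card = 2

lemma mem_SAof {x : Fin (a+b)} : x ∈ SAof π ↔ x.1 < a ∧ (π.part x).card = 2 := by
  simp [SAof, mem_Afin]

lemma mem_SBof {x : Fin (a+b)} : x ∈ SBof π ↔ a ≤ x.1 ∧ (π.part x).card = 2 := by
  simp [SBof, mem_Bfin]

lemma SAof_subset : SAof π ⊆ Afin a b := Finset.filter_subset _ _
lemma SBof_subset : SBof π ⊆ Bfin a b := Finset.filter_subset _ _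

lemma card_SAof (hT : PTransverseParts (chainsTwo a b) π.parts) :
    (SAof π).card = (π.parts.filter fun B => B.card = 2).card := by
  apply Finset.card_bij (fun x _ => π.part x)
  · intro x hx
    rw [mem_SAof] at hx
    exact Finset.mem_filter.mpr ⟨π.part_mem.2 (mem_univ x), hx.2⟩
  · intro x hx x' hx' h
    rw [mem_SAof] at hx hx'
    exact eq_of_same_chain hT (π.part_mem.2 (mem_univ x))
      (π.mem_part (mem_univ x)) (h ▸ π.mem_part (mem_univ x'))
      (Or.inl ⟨hx.1, hx'.1⟩)
  · intro B hBmem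
    rw [Finset.mem_filter] at hBmem
    obtain ⟨hB, hcard⟩ := hBmem
    rcases block_structure hT hB with ⟨z, rfl⟩ | ⟨x, y, hxa, hya, rfl⟩
    · simp at hcard
    · have hxB : x ∈ ({x, y} : Finset (Fin (a+b))) := Finset.mem_insert_self _ _
      have hpart : π.part x = {x, y} := π.part_eq_of_mem hB hxB
      exact ⟨x, mem_SAof.mpr ⟨hxa, by rw [hpart]; exact hcard⟩, hpart⟩

lemma card_SBof (hT : PTransverseParts (chainsTwo a b) π.parts) :
    (SBof π).card = (π.parts.filter fun B => B.card = 2).card := by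
  apply Finset.card_bij (fun y _ => π.part y)
  · intro y hy
    rw [mem_SBof] at hy
    exact Finset.mem_filter.mpr ⟨π.part_mem.2 (mem_univ y), hy.2⟩
  · intro y hy y' hy' h
    rw [mem_SBof] at hy hy'
    exact eq_of_same_chain hT (π.part_mem.2 (mem_univ y))
      (π.mem_part (mem_univ y)) (h ▸ π.mem_part (mem_univ y'))
      (Or.inr ⟨hy.1, hy'.1⟩)
  · intro B hBmem
    rw [Finset.mem_filter] at hBmem
    obtain ⟨hB, hcard⟩ := hBmem
    rcases block_structure hT hB with ⟨z, rfl⟩ | ⟨x, y, hxa, hya, rfl⟩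
    · simp at hcard
    · have hyB : y ∈ ({x, y} : Finset (Fin (a+b))) := by simp
      have hpart : π.part y = {x, y} := π.part_eq_of_mem hB hyB
      exact ⟨y, mem_SBof.mpr ⟨hya, by rw [hpart]; exact hcard⟩, hpart⟩

/-- the partner of an element of the first chain in a 2-block -/
noncomputable def ptr (π : Finpartition (univ : Finset (Fin (a+b)))) (x : Fin (a+b)) :
    Fin (a+b) :=
  if h : ∃ y, a ≤ y.1 ∧ π.part x = {x, y} then h.choose else x

lemma part_of_mem_SAof (hT : PTransverseParts (chainsTwo a b) π.parts) {x : Fin (a+b)}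
    (hx : x ∈ SAof π) : ∃ y, a ≤ y.1 ∧ π.part x = {x, y} := by
  rw [mem_SAof] at hx
  have hB := π.part_mem.2 (mem_univ x)
  rcases block_structure hT hB with ⟨z, hz⟩ | ⟨x', y, hxa', hya, hz⟩
  · rw [hz] at hx; simp at hx
  · have hxmem : x ∈ π.part x := π.mem_part (mem_univ x)
    rw [hz] at hxmem
    simp only [Finset.mem_insert, Finset.mem_singleton] at hxmem
    rcases hxmem with rfl | rfl
    · exact ⟨y, hya, hz⟩
    · omega

lemma ptr_spec (hT : PTransverseParts (chainsTwo a b) π.parts) {x y : Fin (a+b)}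
    (hx : x.1 < a) (hy : a ≤ y.1) (hpart : π.part x = {x, y}) : ptr π x = y := by
  have h : ∃ y', a ≤ y'.1 ∧ π.part x = {x, y'} := ⟨y, hy, hpart⟩
  rw [ptr, dif_pos h]
  obtain ⟨hc1, hc2⟩ := h.choose_spec
  have : y ∈ ({x, h.choose} : Finset (Fin (a+b))) := by
    rw [← hc2, hpart]; simp
  simp only [Finset.mem_insert, Finset.mem_singleton] at this
  rcases this with rfl | h'
  · omega
  · exact h'.symm

lemma ptr_part (hT : PTransverseParts (chainsTwo a b) π.parts) {x : Fin (a+b)}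
    (hx : x ∈ SAof π) :
    a ≤ (ptr π x).1 ∧ π.part x = {x, ptr π x} ∧ ptr π x ∈ SBof π := by
  obtain ⟨y, hy, hpart⟩ := part_of_mem_SAof hT hx
  rw [mem_SAof] at hx
  have := ptr_spec hT hx.1 hy hpart
  rw [this]
  refine ⟨hy, hpart, mem_SBof.mpr ⟨hy, ?_⟩⟩
  have hymem : y ∈ π.part x := by rw [hpart]; simp
  rw [π.part_eq_of_mem (π.part_mem.2 (mem_univ x)) hymem]
  exact hx.2

end Structure

section Reconstruct
variable {π : Finpartition (univ : Finset (Fin (a+b)))}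

lemma hcard_of (hT : PTransverseParts (chainsTwo a b) π.parts) :
    (SBof π).card = (SAof π).card := by
  rw [card_SBof hT, card_SAof hT]

lemma ptr_orderEmb (hT : PTransverseParts (chainsTwo a b) π.parts)
    (j : Fin (SAof π).card) :
    ptr π ((SAof π).orderEmbOfFin rfl j) = (SBof π).orderEmbOfFin (hcard_of hT) j := by
  have := Finset.orderEmbOfFin_unique (hcard_of hT)
    (f := fun j => ptr π ((SAof π).orderEmbOfFin rfl j)) ?_ ?_
  · exact congrFun this j
  · intro j'
    exact (ptr_part hT (Finset.orderEmbOfFin_mem _ _ _)).2.2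
  · intro j1 j2 hj
    have hmem1 := Finset.orderEmbOfFin_mem (SAof π) rfl j1
    have hmem2 := Finset.orderEmbOfFin_mem (SAof π) rfl j2
    obtain ⟨hy1, hp1, _⟩ := ptr_part hT hmem1
    obtain ⟨hy2, hp2, _⟩ := ptr_part hT hmem2
    have hx1 : ((SAof π).orderEmbOfFin rfl j1).1 < a := mem_Afin.mp (SAof_subset hmem1)
    have hx2 : ((SAof π).orderEmbOfFin rfl j2).1 < a := mem_Afin.mp (SAof_subset hmem2)
    have hlt : ((SAof π).orderEmbOfFin rfl j1).1 < ((SAof π).orderEmbOfFin rfl j2).1 :=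
      ((SAof π).orderEmbOfFin rfl).strictMono hj
    have := matching_mono hT (hp1 ▸ π.part_mem.2 (mem_univ _))
      (hp2 ▸ π.part_mem.2 (mem_univ _)) hx1 hy1 hx2 hy2 hlt
    exact this

lemma exists_index {S : Finset (Fin (a+b))} {z : Fin (a+b)} (hz : z ∈ S) :
    ∃ j : Fin S.card, S.orderEmbOfFin rfl j = z := by
  have : z ∈ Set.range (S.orderEmbOfFin rfl) := by
    rw [Finset.range_orderEmbOfFin]; exact_mod_cast hz
  exact this

lemma reconstruction (hT : PTransverseParts (chainsTwo a b) π.parts) :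
    π.parts = buildParts (SAof π) (SBof π) := by
  have hk : (SAof π).card = (SBof π).card := (hcard_of hT).symm
  have hmin : min (SAof π).card (SBof π).card = (SAof π).card := by omega
  ext B
  rw [mem_buildParts]
  constructor
  · intro hB
    rcases block_structure hT hB with ⟨z, rfl⟩ | ⟨x, y, hxa, hya, rfl⟩
    · right
      have hpz : π.part z = {z} := π.part_eq_of_mem hB (by simp)
      refine ⟨z, ?_, ?_, rfl⟩
      · intro hz; rw [mem_SAof, hpz] at hz; simp at hz
      · intro hz; rw [mem_SBof, hpz] at hz; simp at hz
    · left
      have hxy : x ≠ y := by intro h; subst h; omega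
      have hpart : π.part x = {x, y} := π.part_eq_of_mem hB (by simp)
      have hcard2 : (π.part x).card = 2 := by rw [hpart]; exact Finset.card_pair hxy
      have hxS : x ∈ SAof π := mem_SAof.mpr ⟨hxa, hcard2⟩
      obtain ⟨j, hj⟩ := exists_index hxS
      refine ⟨⟨j.1, by omega⟩, ?_⟩
      have hy' : y = ptr π x := (ptr_spec hT hxa hya hpart).symm
      have hyy : y = (SBof π).orderEmbOfFin (hcard_of hT) j := by
        rw [hy', ← hj, ptr_orderEmb hT]
      rw [pairAt_eq]
      have e1 : xA (SAof π) (SBof π) ⟨j.1, by omega⟩ = x := by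
        rw [← hj]
        exact Finset.orderEmbOfFin_eq_orderEmbOfFin_iff.mpr rfl
      have e2 : xB (SAof π) (SBof π) ⟨j.1, by omega⟩ = y := by
        rw [hyy]
        exact Finset.orderEmbOfFin_eq_orderEmbOfFin_iff.mpr rfl
      rw [e1, e2]
  · rintro (⟨i, rfl⟩ | ⟨z, hz1, hz2, rfl⟩)
    · set j : Fin (SAof π).card := ⟨i.1, by omega⟩ with hjdef
      have e1 : xA (SAof π) (SBof π) i = (SAof π).orderEmbOfFin rfl j :=
        Finset.orderEmbOfFin_eq_orderEmbOfFin_iff.mpr rfl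
      have e2 : xB (SAof π) (SBof π) i = (SBof π).orderEmbOfFin (hcard_of hT) j :=
        Finset.orderEmbOfFin_eq_orderEmbOfFin_iff.mpr rfl
      have hxS : (SAof π).orderEmbOfFin rfl j ∈ SAof π := Finset.orderEmbOfFin_mem _ _ _
      obtain ⟨_, hp, _⟩ := ptr_part hT hxS
      rw [pairAt_eq, e1, e2, ← ptr_orderEmb hT j, ← hp]
      exact π.part_mem.2 (mem_univ _)
    · have hB := π.part_mem.2 (mem_univ z)
      rcases block_structure hT hB with ⟨w, hw⟩ | ⟨x, y, hxa, hya, hw⟩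
      · have hzw : z = w := by
          have := π.mem_part (mem_univ z)
          rw [hw] at this; simpa using this
        rw [show ({z} : Finset (Fin (a+b))) = π.part z by rw [hw, hzw]]
        exact hB
      · exfalso
        have hxy : x ≠ y := by intro h; subst h; omega
        have hcard2 : (π.part z).card = 2 := by rw [hw]; exact Finset.card_pair hxy
        have hzmem := π.mem_part (mem_univ z)
        rw [hw] at hzmem
        simp only [Finset.mem_insert, Finset.mem_singleton] at hzmem
        rcases hzmem with rfl | rfl
        · exact hz1 (mem_SAof.mpr ⟨hxa, hcard2⟩)
        · exact hz2 (mem_SBof.mpr ⟨hya, hcard2⟩)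

lemma SAof_build {SA SB : Finset (Fin (a+b))} (hA : SA ⊆ Afin a b) (hB : SB ⊆ Bfin a b)
    (hk : SA.card = SB.card) : SAof (buildFP hA hB hk) = SA := by
  ext x
  rw [mem_SAof]
  constructor
  · rintro ⟨hxa, hcard2⟩
    by_contra hx
    have hx2 : x ∉ SB := fun h => by have := mem_Bfin.mp (hB h); omega
    have : ({x} : Finset (Fin (a+b))) ∈ buildParts SA SB :=
      mem_buildParts.mpr (Or.inr ⟨x, hx, hx2, rfl⟩)
    have := (buildFP hA hB hk).part_eq_of_mem this (Finset.mem_singleton_self x)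
    rw [this] at hcard2
    simp at hcard2
  · intro hx
    obtain ⟨i, hi⟩ := exists_xA SA SB hk hx
    have hmem : pairAt SA SB i ∈ buildParts SA SB := mem_buildParts.mpr (Or.inl ⟨i, rfl⟩)
    have hpe := (buildFP hA hB hk).part_eq_of_mem hmem
      (show x ∈ pairAt SA SB i by rw [pairAt_eq, ← hi]; exact Finset.mem_insert_self _ _)
    refine ⟨mem_Afin.mp (hA hx), ?_⟩
    rw [hpe]
    exact pairAt_card hA hB i
lemma SBof_build {SA SB : Finset (Fin (a+b))} (hA : SA ⊆ Afin a b) (hB : SB ⊆ Bfin a b)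
    (hk : SA.card = SB.card) : SBof (buildFP hA hB hk) = SB := by
  ext x
  rw [mem_SBof]
  constructor
  · rintro ⟨hxa, hcard2⟩
    by_contra hx
    have hx2 : x ∉ SA := fun h => by have := mem_Afin.mp (hA h); omega
    have : ({x} : Finset (Fin (a+b))) ∈ buildParts SA SB :=
      mem_buildParts.mpr (Or.inr ⟨x, hx2, hx, rfl⟩)
    have := (buildFP hA hB hk).part_eq_of_mem this (Finset.mem_singleton_self x)
    rw [this] at hcard2
    simp at hcard2
  · intro hx
    obtain ⟨i, hi⟩ := exists_xB SA SB hk hx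
    have hmem : pairAt SA SB i ∈ buildParts SA SB := mem_buildParts.mpr (Or.inl ⟨i, rfl⟩)
    have hpe := (buildFP hA hB hk).part_eq_of_mem hmem
      (show x ∈ pairAt SA SB i by rw [pairAt_eq, ← hi]; simp)
    refine ⟨mem_Bfin.mp (hB hx), ?_⟩
    rw [hpe]
    exact pairAt_card hA hB i

end Reconstruct

end Stmt13Aux

open Stmt13Aux Finset in
/-- For the disjoint union of two chains of sizes `a` and `b`, the number of transverse
partitions with exactly `k` two-element blocks is `C(a,k)·C(b,k)`; consequently
`∑_{k=0}^{min(a,b)} C(a,k)·C(b,k) = C(a+b, a)` (Chu–Vandermonde). -/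
theorem stmt13 (a b : ℕ) :
    (∀ k : ℕ,
      (Finset.univ.filter fun π : Finpartition (Finset.univ : Finset (Fin (a + b))) =>
          PTransverseParts (chainsTwo a b) π.parts ∧
          (π.parts.filter fun B => B.card = 2).card = k).card
        = a.choose k * b.choose k) ∧
    ∑ k ∈ Finset.range (min a b + 1), a.choose k * b.choose k = (a + b).choose a := by
  constructor
  · intro k
    have hrhs : a.choose k * b.choose k
        = ((Afin a b).powersetCard k ×ˢ (Bfin a b).powersetCard k).card := by
      rw [Finset.card_product, Finset.card_powersetCard, Finset.card_powersetCard,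
        card_Afin, card_Bfin]
    rw [hrhs]
    refine Finset.card_bij' (fun π _ => (SAof π, SBof π))
      (fun p hp => buildFP (SA := p.1) (SB := p.2)
        (fun x hx => (Finset.mem_powersetCard.mp (Finset.mem_product.mp hp).1).1 hx)
        (fun x hx => (Finset.mem_powersetCard.mp (Finset.mem_product.mp hp).2).1 hx)
        (by rw [(Finset.mem_powersetCard.mp (Finset.mem_product.mp hp).1).2,
          (Finset.mem_powersetCard.mp (Finset.mem_product.mp hp).2).2]))
      ?_ ?_ ?_ ?_
    · intro π hπ
      have hT := (Finset.mem_filter.mp hπ).2.1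
      have hk2 := (Finset.mem_filter.mp hπ).2.2
      rw [Finset.mem_product]
      exact ⟨Finset.mem_powersetCard.mpr ⟨SAof_subset, by rw [card_SAof hT]; exact hk2⟩,
        Finset.mem_powersetCard.mpr ⟨SBof_subset, by rw [card_SBof hT]; exact hk2⟩⟩
    · intro p hp
      have hA : p.1 ⊆ Afin a b := (Finset.mem_powersetCard.mp (Finset.mem_product.mp hp).1).1
      have hB : p.2 ⊆ Bfin a b := (Finset.mem_powersetCard.mp (Finset.mem_product.mp hp).2).1
      have hc1 := (Finset.mem_powersetCard.mp (Finset.mem_product.mp hp).1).2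
      have hc2 := (Finset.mem_powersetCard.mp (Finset.mem_product.mp hp).2).2
      rw [Finset.mem_filter]
      refine ⟨Finset.mem_univ _, buildFP_transverse _ _ _, ?_⟩
      rw [buildFP_parts, twoBlocks_build_card hA hB]
      omega
    · intro π hπ
      have hT := (Finset.mem_filter.mp hπ).2.1
      apply Finpartition.ext
      rw [buildFP_parts]
      exact (reconstruction hT).symm
    · rintro ⟨SA, SB⟩ hp
      refine Prod.ext ?_ ?_
      · exact SAof_build _ _ _
      · exact SBof_build _ _ _
  · have hv := Nat.add_choose_eq a b a
    rw [Finset.Nat.sum_antidiagonal_eq_sum_range_succ_mk] at hv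
    have h2 : ∑ k ∈ Finset.range (a+1), a.choose k * b.choose (a - k)
        = ∑ k ∈ Finset.range (a+1), a.choose (a - k) * b.choose (a - k) := by
      refine Finset.sum_congr rfl fun k hk => ?_
      rw [Finset.mem_range] at hk
      rw [Nat.choose_symm (by omega)]
    have h3 : ∑ k ∈ Finset.range (a+1), a.choose (a - k) * b.choose (a - k)
        = ∑ k ∈ Finset.range (a+1), a.choose k * b.choose k := by
      simpa using Finset.sum_range_reflect (fun j => a.choose j * b.choose j) (a+1)
    have h4 : ∑ k ∈ Finset.range (min a b + 1), a.choose k * b.choose k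
        = ∑ k ∈ Finset.range (a+1), a.choose k * b.choose k := by
      apply Finset.sum_subset (Finset.range_subset_range.mpr (by omega))
      intro x hx hnx
      rw [Finset.mem_range] at hx hnx
      have : b < x := by omega
      rw [Nat.choose_eq_zero_of_lt this, mul_zero]
    rw [h4, ← h3, ← h2, ← hv]
end

section
/- If P is a finite poset of width two (every antichain has at most two elements), then every P-transverse set partition of the underlying set has all blocks of cardinality 1 or 2, and the map sending a P-transverse permutation to its cycle partition is a bijection from P-transverse permutations to P-transverse partitions. -/
open Finset Equiv Equiv.Perm in
lemma sameCycle_apply_self' {n : ℕ} (σ : Perm (Fin n)) (x : Fin n) :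
    σ.SameCycle x (σ x) := ⟨1, by simp⟩

open Finset Equiv Equiv.Perm in
lemma sameCycle_apply_apply_self {n : ℕ} (σ : Perm (Fin n)) (x : Fin n) :
    σ.SameCycle x (σ (σ x)) :=
  ⟨(2 : ℕ), by rw [zpow_natCast, pow_succ, pow_one, Equiv.Perm.mul_apply]⟩

open Finset Equiv Equiv.Perm in
lemma invol_pow {n : ℕ} {σ : Perm (Fin n)} (hσ : ∀ x, σ (σ x) = x) (k : ℕ) (i : Fin n) :
    (σ ^ k) i = i ∨ (σ ^ k) i = σ i := by
  induction k with
  | zero => left; rfl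
  | succ m ih =>
    rw [pow_succ', Equiv.Perm.mul_apply]
    rcases ih with h | h
    · right; rw [h]
    · left; rw [h, hσ]

open Finset Equiv Equiv.Perm in
lemma block_eq_pair {n : ℕ} {σ : Perm (Fin n)} (hσ : ∀ x, σ (σ x) = x) (i : Fin n) :
    (Finset.univ.filter fun j => σ.SameCycle i j) = {i, σ i} := by
  ext j
  simp only [mem_filter, mem_univ, true_and, mem_insert, mem_singleton]
  constructor
  · intro h
    obtain ⟨k, -, rfl⟩ := h.exists_pow_eq'
    rcases invol_pow hσ k i with h' | h' <;> simp [h']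
  · rintro (rfl | rfl)
    · exact Equiv.Perm.SameCycle.refl σ j
    · exact sameCycle_apply_self' σ i

open Finset Equiv Equiv.Perm in
lemma invol_of_trans {n : ℕ} {P : PartialOrder (Fin n)}
    (hwidth : ∀ s : Finset (Fin n),
      (∀ i ∈ s, ∀ j ∈ s, P.le i j → i = j) → s.card ≤ 2)
    {σ : Perm (Fin n)} (hT : PTransverseParts P (cycleBlocks σ)) (x : Fin n) :
    σ (σ x) = x := by
  set B : Finset (Fin n) := Finset.univ.filter fun j => σ.SameCycle x j with hBdef
  have hB : B ∈ cycleBlocks σ := Finset.mem_image_of_mem _ (Finset.mem_univ x)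
  have hcard : B.card ≤ 2 := hwidth B (hT.1 B hB)
  by_contra h
  have hx1 : σ x ≠ x := by
    intro hh; exact h (by rw [hh, hh])
  have hx2 : σ (σ x) ≠ σ x := fun hh => hx1 (σ.injective hh)
  have hsub : ({x, σ x, σ (σ x)} : Finset (Fin n)) ⊆ B := by
    intro j hj
    simp only [mem_insert, mem_singleton] at hj
    simp only [hBdef, mem_filter, mem_univ, true_and]
    rcases hj with rfl | rfl | rfl
    · exact Equiv.Perm.SameCycle.refl σ j
    · exact sameCycle_apply_self' σ x
    · exact sameCycle_apply_apply_self σ x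
  have h3 : ({x, σ x, σ (σ x)} : Finset (Fin n)).card = 3 :=
    Finset.card_eq_three.mpr ⟨x, σ x, σ (σ x), fun hh => hx1 hh.symm, fun hh => h hh.symm,
      fun hh => hx2 hh.symm, rfl⟩
  have := Finset.card_le_card hsub
  omega

open Finset Equiv Equiv.Perm in
lemma cycleBlocks_of_invol {n : ℕ} {σ : Perm (Fin n)} (hσ : ∀ x, σ (σ x) = x) :
    cycleBlocks σ = Finset.univ.image fun i => ({i, σ i} : Finset (Fin n)) := by
  unfold cycleBlocks
  refine Finset.image_congr ?_
  intro i _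
  exact block_eq_pair hσ i

/-- If `P` has width two (every antichain has at most 2 elements), then every `P`-transverse
partition has all blocks of cardinality 1 or 2, and taking cycle partitions is a bijection
from `P`-transverse permutations onto `P`-transverse partitions. -/
theorem stmt14 (n : ℕ) (P : PartialOrder (Fin n))
    (hwidth : ∀ s : Finset (Fin n),
      (∀ i ∈ s, ∀ j ∈ s, P.le i j → i = j) → s.card ≤ 2) :
    (∀ π : Finpartition (Finset.univ : Finset (Fin n)),
      PTransverseParts P π.parts → ∀ B ∈ π.parts, B.card = 1 ∨ B.card = 2) ∧
    Set.BijOn (fun σ : Equiv.Perm (Fin n) => cycleBlocks σ)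
      {σ : Equiv.Perm (Fin n) | PTransverseParts P (cycleBlocks σ)}
      {s : Finset (Finset (Fin n)) |
        (∃ π : Finpartition (Finset.univ : Finset (Fin n)), π.parts = s) ∧
        PTransverseParts P s} := by
  constructor
  · intro π hT B hB
    have h1 : 1 ≤ B.card := Finset.card_pos.mpr (π.nonempty_of_mem_parts hB)
    have h2 : B.card ≤ 2 := hwidth B (hT.1 B hB)
    omega
  constructor
  · -- MapsTo
    intro σ hσ
    classical
    let st : Setoid (Fin n) := ⟨σ.SameCycle,
        ⟨Equiv.Perm.SameCycle.refl σ, Equiv.Perm.SameCycle.symm, Equiv.Perm.SameCycle.trans⟩⟩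
    have hdec : DecidableRel st.r := fun a b => inferInstanceAs (Decidable (σ.SameCycle a b))
    refine ⟨⟨@Finpartition.ofSetoid (Fin n) _ _ st hdec, ?_⟩, hσ⟩
    ext B
    simp only [Finpartition.ofSetoid, Finpartition.ofSetSetoid_parts, cycleBlocks, Finset.mem_image, Finset.mem_univ, true_and]
    constructor
    · rintro ⟨a, rfl⟩
      exact ⟨a, by ext b; simp [st]; exact Iff.rfl⟩
    · rintro ⟨a, rfl⟩
      exact ⟨a, by ext b; simp [st]; exact Iff.rfl⟩
  constructor
  · -- InjOn
    intro σ hσ τ hτ hst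
    have hσi := invol_of_trans hwidth hσ
    have hτi := invol_of_trans hwidth hτ
    simp only at hst
    rw [cycleBlocks_of_invol hσi, cycleBlocks_of_invol hτi] at hst
    ext i : 1
    have hmem : ({i, σ i} : Finset (Fin n)) ∈ Finset.univ.image
        fun j => ({j, τ j} : Finset (Fin n)) := by
      rw [← hst]; exact Finset.mem_image_of_mem _ (Finset.mem_univ i)
    obtain ⟨j, -, hj⟩ := Finset.mem_image.mp hmem
    have hij : i ∈ ({j, τ j} : Finset (Fin n)) := by
      rw [hj]; exact Finset.mem_insert_self _ _
    have hpair : ({i, σ i} : Finset (Fin n)) = {i, τ i} := by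
      rw [← hj]
      simp only [Finset.mem_insert, Finset.mem_singleton] at hij
      rcases hij with rfl | rfl
      · rfl
      · rw [hτi]
        exact Finset.pair_comm _ _
    have : σ i ∈ ({i, τ i} : Finset (Fin n)) := by
      rw [← hpair]; exact Finset.mem_insert_of_mem (Finset.mem_singleton_self _)
    simp only [Finset.mem_insert, Finset.mem_singleton] at this
    rcases this with h | h
    · -- σ i = i, show τ i = i too
      have h2 : τ i ∈ ({i, σ i} : Finset (Fin n)) := by
        rw [hpair]; exact Finset.mem_insert_of_mem (Finset.mem_singleton_self _)
      simp only [Finset.mem_insert, Finset.mem_singleton, h] at h2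
      rw [h]
      rcases h2 with h' | h' <;> exact h'.symm
    · exact h
  · -- SurjOn
    intro s hs
    obtain ⟨⟨π, rfl⟩, hT⟩ := hs
    classical
    have hcard : ∀ i : Fin n, (π.part i).card ≤ 2 := fun i =>
      hwidth _ (hT.1 _ (π.part_mem.mpr (Finset.mem_univ i)))
    set f : Fin n → Fin n := fun i =>
      if h : ((π.part i).erase i).Nonempty then h.choose else i with hfdef
    have hf_mem : ∀ i, f i ∈ π.part i := by
      intro i
      by_cases h : ((π.part i).erase i).Nonempty
      · simp only [hfdef, dif_pos h]
        exact Finset.mem_of_mem_erase h.choose_spec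
      · simp only [hfdef, dif_neg h]
        exact π.mem_part (Finset.mem_univ i)
    have hpart_eq : ∀ i, π.part (f i) = π.part i := fun i =>
      π.part_eq_of_mem (π.part_mem.mpr (Finset.mem_univ i)) (hf_mem i)
    have hpair : ∀ i, π.part i = {i, f i} := by
      intro i
      by_cases h : ((π.part i).erase i).Nonempty
      · have hfi : f i = h.choose := by simp only [hfdef, dif_pos h]
        have hne : f i ≠ i := by rw [hfi]; exact Finset.ne_of_mem_erase h.choose_spec
        have hsub : ({i, f i} : Finset (Fin n)) ⊆ π.part i := by
          intro x hx
          simp only [Finset.mem_insert, Finset.mem_singleton] at hx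
          rcases hx with rfl | rfl
          · exact π.mem_part (Finset.mem_univ x)
          · exact hf_mem i
        have hc2 : ({i, f i} : Finset (Fin n)).card = 2 := by
          rw [Finset.card_insert_of_notMem (by simpa using fun hh => hne hh.symm)]
          rfl
        exact (Finset.eq_of_subset_of_card_le hsub (by rw [hc2]; exact hcard i)).symm
      · have hfi : f i = i := by simp only [hfdef, dif_neg h]
        rw [hfi]
        rw [Finset.insert_eq_self.mpr (Finset.mem_singleton_self i)]
        apply Finset.Subset.antisymm
        · intro x hx
          rcases eq_or_ne x i with rfl | hne
          · simp
          · exact absurd ⟨x, Finset.mem_erase.mpr ⟨hne, hx⟩⟩ h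
        · intro x hx
          simp only [Finset.mem_insert, Finset.mem_singleton, or_self] at hx
          rw [hx]; exact π.mem_part (Finset.mem_univ i)
    have hinv : Function.Involutive f := by
      intro i
      rcases eq_or_ne (f i) i with h | h
      · rw [h, h]
      · -- f i ≠ i; part (f i) = part i = {i, f i}
        have h1 : π.part (f i) = {i, f i} := by rw [hpart_eq, hpair]
        have h2 : f (f i) ∈ ({i, f i} : Finset (Fin n)) := by rw [← h1]; exact hf_mem (f i)
        simp only [Finset.mem_insert, Finset.mem_singleton] at h2
        rcases h2 with h2 | h2
        · exact h2
        · -- f (f i) = f i: impossible since part (f i) has the two elements; show f(f i) ≠ f i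
          exfalso
          have hne' : ((π.part (f i)).erase (f i)).Nonempty := by
            rw [h1]
            exact ⟨i, Finset.mem_erase.mpr ⟨fun hh => h hh.symm, Finset.mem_insert_self _ _⟩⟩
          have : f (f i) ≠ f i := by
            rw [show f (f i) = hne'.choose from dif_pos hne']
            exact Finset.ne_of_mem_erase hne'.choose_spec
          exact this h2
    set σ : Equiv.Perm (Fin n) := hinv.toPerm f with hσdef
    have hσapp : ∀ i, σ i = f i := fun i => rfl
    have hσinv : ∀ x, σ (σ x) = x := fun x => hinv x
    have hblocks : cycleBlocks σ = π.parts := by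
      rw [cycleBlocks_of_invol hσinv]
      apply Finset.Subset.antisymm
      · intro B hB
        obtain ⟨i, -, rfl⟩ := Finset.mem_image.mp hB
        rw [hσapp, ← hpair]
        exact π.part_mem.mpr (Finset.mem_univ i)
      · intro B hB
        obtain ⟨i, hi⟩ := π.nonempty_of_mem_parts hB
        have : π.part i = B := π.part_eq_of_mem hB hi
        rw [← this, hpair]
        exact Finset.mem_image_of_mem _ (Finset.mem_univ i)
    exact ⟨σ, by simp only [Set.mem_setOf_eq, hblocks]; exact hT, hblocks⟩
end

section
/- Let P = P₁ ∪ P₂ be a finite poset of width two, decomposed into two disjoint chains P₁, P₂, such that P₁ is an order ideal of P. Label P naturally so that P₁ gets labels 1,...,n₁ and P₂ gets labels n₁+1,...,n (compatibly with the chain orders). Then for every linear extension σ of P, the set {i : σ_i ∈ P₂, σ_{i+1} ∈ P₁, σ_i and σ_{i+1} incomparable in P} equals the ordinary descent set {i : σ_i > σ_{i+1}} of σ. -/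
/-- Let `P` be a width-two poset on `Fin n` decomposed into two disjoint chains
`P₁ = {i : i < n₁}` and `P₂ = {i : n₁ ≤ i}`, naturally labeled so that labels within each
chain increase along the chain (`hchain1`, `hchain2`) and such that `P₁` is an order ideal
(`hideal`).  Then for every linear extension `σ` of `P` (listed as `σ 0, σ 1, …`), the set
`{i : σ_i ∈ P₂, σ_{i+1} ∈ P₁, σ_i and σ_{i+1} incomparable in P}` equals the ordinary
descent set `{i : σ_i > σ_{i+1}}`. -/
theorem stmt16 (n n1 : ℕ) (P : PartialOrder (Fin n))
    (hchain1 : ∀ i j : Fin n, i.1 < n1 → j.1 < n1 → (P.le i j ↔ i ≤ j))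
    (hchain2 : ∀ i j : Fin n, n1 ≤ i.1 → n1 ≤ j.1 → (P.le i j ↔ i ≤ j))
    (hideal : ∀ i j : Fin n, P.le i j → j.1 < n1 → i.1 < n1) :
    ∀ σ : Equiv.Perm (Fin n),
      (∀ i j : Fin n, P.le (σ i) (σ j) → i ≤ j) →
      ∀ (i : Fin n) (h : i.1 + 1 < n),
        ((n1 ≤ (σ i).1 ∧ (σ ⟨i.1 + 1, h⟩).1 < n1 ∧
            ¬ P.le (σ i) (σ ⟨i.1 + 1, h⟩) ∧ ¬ P.le (σ ⟨i.1 + 1, h⟩) (σ i))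
          ↔ σ ⟨i.1 + 1, h⟩ < σ i) := by
  intro σ hσ i h
  set a := σ i with ha
  set b := σ ⟨i.1 + 1, h⟩ with hb
  have hnle : ¬ P.le b a := by
    intro hle
    have := hσ _ _ hle
    simp [Fin.le_def] at this
  constructor
  · rintro ⟨h1, h2, -, -⟩
    exact Fin.lt_def.mpr (lt_of_lt_of_le h2 h1)
  · intro hba
    have hba' : b.1 < a.1 := Fin.lt_def.mp hba
    have hbale : b ≤ a := Fin.le_def.mpr (Nat.le_of_lt hba')
    by_cases hA : n1 ≤ a.1
    · by_cases hB : b.1 < n1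
      · refine ⟨hA, hB, fun hle => absurd (hideal _ _ hle hB) (Nat.not_lt.mpr hA), hnle⟩
      · exact absurd ((hchain2 b a (Nat.le_of_not_lt hB) hA).mpr hbale) hnle
    · have hB : b.1 < n1 := lt_of_lt_of_le hba' (Nat.le_of_lt (Nat.lt_of_not_le hA))
      exact absurd ((hchain1 b a hB (Nat.lt_of_not_le hA)).mpr hbale) hnle
end

section
/- Let P₁, P₂ be posets on disjoint finite sets and P₁ ⊕ P₂ their ordinal sum. A set partition π of the union is (P₁ ⊕ P₂)-transverse if and only if every block of π is contained entirely in P₁ or entirely in P₂, with the induced partitions of P₁ and P₂ being P₁-transverse and P₂-transverse respectively. -/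
/-- The underlying relation of the ordinal sum `P₁ ⊕ P₂`: `x ≤ y` iff `x, y` lie in the same
summand and are related there, or `x ∈ P₁` and `y ∈ P₂`. -/
def ordSumLe {A B : Type*} (P1 : PartialOrder A) (P2 : PartialOrder B) :
    A ⊕ B → A ⊕ B → Prop
  | Sum.inl a, Sum.inl a' => P1.le a a'
  | Sum.inl _, Sum.inr _ => True
  | Sum.inr _, Sum.inl _ => False
  | Sum.inr b, Sum.inr b' => P2.le b b'

/-- The ordinal sum `P₁ ⊕ P₂` of two posets, as a poset on the disjoint union. -/
def ordinalSum {A B : Type*} (P1 : PartialOrder A) (P2 : PartialOrder B) :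
    PartialOrder (A ⊕ B) where
  le := ordSumLe P1 P2
  lt x y := ordSumLe P1 P2 x y ∧ ¬ ordSumLe P1 P2 y x
  le_refl x := by cases x with
    | inl a => exact P1.le_refl a
    | inr b => exact P2.le_refl b
  le_trans x y z h1 h2 := by
    cases x <;> cases y <;> cases z <;>
      simp only [ordSumLe] at * <;>
      first
        | trivial
        | exact P1.le_trans _ _ _ h1 h2
        | exact P2.le_trans _ _ _ h1 h2
  le_antisymm x y h1 h2 := by
    cases x <;> cases y <;> simp only [ordSumLe] at * <;>
      first
        | trivial
        | exact congrArg _ (P1.le_antisymm _ _ h1 h2)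
        | exact congrArg _ (P2.le_antisymm _ _ h1 h2)

section Stmt18Aux

variable {A B : Type*} [DecidableEq A] [DecidableEq B]

lemma imgpreL (s : Finset (A ⊕ B)) (h : ∀ x ∈ s, ∃ a : A, x = Sum.inl a) :
    (s.preimage Sum.inl Sum.inl_injective.injOn).image Sum.inl = s := by
  ext x
  simp only [Finset.mem_image, Finset.mem_preimage]
  constructor
  · rintro ⟨a, ha, rfl⟩; exact ha
  · intro hx; obtain ⟨a, rfl⟩ := h x hx; exact ⟨a, hx, rfl⟩

lemma imgpreR (s : Finset (A ⊕ B)) (h : ∀ x ∈ s, ∃ b : B, x = Sum.inr b) :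
    (s.preimage Sum.inr Sum.inr_injective.injOn).image Sum.inr = s := by
  ext x
  simp only [Finset.mem_image, Finset.mem_preimage]
  constructor
  · rintro ⟨b, hb, rfl⟩; exact hb
  · intro hx; obtain ⟨b, rfl⟩ := h x hx; exact ⟨b, hx, rfl⟩

end Stmt18Aux

/-- A set partition of the disjoint union is `(P₁ ⊕ P₂)`-transverse iff every block lies
entirely in `P₁` or entirely in `P₂`, and the induced partitions of `P₁` and `P₂` are
`P₁`-transverse and `P₂`-transverse respectively. -/
theorem stmt18 {A B : Type*} [Fintype A] [Fintype B] [DecidableEq A] [DecidableEq B]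
    (P1 : PartialOrder A) (P2 : PartialOrder B)
    (π : Finpartition (Finset.univ : Finset (A ⊕ B))) :
    PTransverseParts (ordinalSum P1 P2) π.parts ↔
      ((∀ s ∈ π.parts, (∀ x ∈ s, ∃ a : A, x = Sum.inl a) ∨
          (∀ x ∈ s, ∃ b : B, x = Sum.inr b)) ∧
        PTransverseParts P1
          (((π.parts.filter fun s => ∀ x ∈ s, ∃ a : A, x = Sum.inl a)).image
            fun s => s.preimage Sum.inl Sum.inl_injective.injOn) ∧
        PTransverseParts P2
          (((π.parts.filter fun s => ∀ x ∈ s, ∃ b : B, x = Sum.inr b)).image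
            fun s => s.preimage Sum.inr Sum.inr_injective.injOn)) := by
  classical
  constructor
  · rintro ⟨hanti, hquot⟩
    have hpure : ∀ s ∈ π.parts, (∀ x ∈ s, ∃ a : A, x = Sum.inl a) ∨
        (∀ x ∈ s, ∃ b : B, x = Sum.inr b) := by
      intro s hs
      by_cases h : ∀ x ∈ s, ∃ a : A, x = Sum.inl a
      · exact Or.inl h
      · right
        push_neg at h
        obtain ⟨y, hy, hy'⟩ := h
        obtain ⟨b, rfl⟩ : ∃ b, y = Sum.inr b := by
          cases y with
          | inl a => exact absurd rfl (hy' a)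
          | inr b => exact ⟨b, rfl⟩
        intro x hx
        cases x with
        | inr b' => exact ⟨b', rfl⟩
        | inl a =>
          have : Sum.inl a = Sum.inr b :=
            hanti s hs (Sum.inl a) hx (Sum.inr b) hy trivial
          simp at this
    refine ⟨hpure, ⟨?_, ?_⟩, ⟨?_, ?_⟩⟩
    · -- P1 antichain
      intro s hs i hi j hj hle
      obtain ⟨t, ht, rfl⟩ := Finset.mem_image.mp hs
      have := hanti t (Finset.mem_filter.mp ht).1 (Sum.inl i)
        (Finset.mem_preimage.mp hi) (Sum.inl j) (Finset.mem_preimage.mp hj) hle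
      exact Sum.inl.inj this
    · -- P1 quotient antisymmetry
      intro s t h1 h2
      have lift1 : ∀ X Y : Finset A,
          QRel P1 (((π.parts.filter fun s => ∀ x ∈ s, ∃ a : A, x = Sum.inl a)).image
            fun s => s.preimage Sum.inl Sum.inl_injective.injOn) X Y →
          QRel (ordinalSum P1 P2) π.parts (X.image Sum.inl) (Y.image Sum.inl) := by
        intro X Y h
        unfold QRel at h ⊢
        refine Relation.TransGen.lift (fun s : Finset A => s.image (Sum.inl : A → A ⊕ B)) ?_ _ _ h
        rintro X Y ⟨hX, hY, a, ha, a', ha', hle⟩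
        obtain ⟨u, hu, rfl⟩ := Finset.mem_image.mp hX
        obtain ⟨v, hv, rfl⟩ := Finset.mem_image.mp hY
        refine ⟨?_, ?_, Sum.inl a, Finset.mem_image_of_mem _ ha,
          Sum.inl a', Finset.mem_image_of_mem _ ha', hle⟩
        · simp only [imgpreL u (Finset.mem_filter.mp hu).2]; exact (Finset.mem_filter.mp hu).1
        · simp only [imgpreL v (Finset.mem_filter.mp hv).2]; exact (Finset.mem_filter.mp hv).1
      have := hquot _ _ (lift1 _ _ h1) (lift1 _ _ h2)
      exact Finset.image_injective Sum.inl_injective this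
    · -- P2 antichain
      intro s hs i hi j hj hle
      obtain ⟨t, ht, rfl⟩ := Finset.mem_image.mp hs
      have := hanti t (Finset.mem_filter.mp ht).1 (Sum.inr i)
        (Finset.mem_preimage.mp hi) (Sum.inr j) (Finset.mem_preimage.mp hj) hle
      exact Sum.inr.inj this
    · -- P2 quotient antisymmetry
      intro s t h1 h2
      have lift2 : ∀ X Y : Finset B,
          QRel P2 (((π.parts.filter fun s => ∀ x ∈ s, ∃ b : B, x = Sum.inr b)).image
            fun s => s.preimage Sum.inr Sum.inr_injective.injOn) X Y →
          QRel (ordinalSum P1 P2) π.parts (X.image Sum.inr) (Y.image Sum.inr) := by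
        intro X Y h
        unfold QRel at h ⊢
        refine Relation.TransGen.lift (fun s : Finset B => s.image (Sum.inr : B → A ⊕ B)) ?_ _ _ h
        rintro X Y ⟨hX, hY, b, hb, b', hb', hle⟩
        obtain ⟨u, hu, rfl⟩ := Finset.mem_image.mp hX
        obtain ⟨v, hv, rfl⟩ := Finset.mem_image.mp hY
        refine ⟨?_, ?_, Sum.inr b, Finset.mem_image_of_mem _ hb,
          Sum.inr b', Finset.mem_image_of_mem _ hb', hle⟩
        · simp only [imgpreR u (Finset.mem_filter.mp hu).2]; exact (Finset.mem_filter.mp hu).1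
        · simp only [imgpreR v (Finset.mem_filter.mp hv).2]; exact (Finset.mem_filter.mp hv).1
      have := hquot _ _ (lift2 _ _ h1) (lift2 _ _ h2)
      exact Finset.image_injective Sum.inr_injective this
  · rintro ⟨hpure, ⟨ha1, hq1⟩, ⟨ha2, hq2⟩⟩
    constructor
    · -- antichain
      intro s hs i hi j hj hle
      rcases hpure s hs with hL | hR
      · obtain ⟨a, rfl⟩ := hL i hi
        obtain ⟨a', rfl⟩ := hL j hj
        have hmem : s ∈ π.parts.filter fun s => ∀ x ∈ s, ∃ a : A, x = Sum.inl a :=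
          Finset.mem_filter.mpr ⟨hs, hL⟩
        have := ha1 _ (Finset.mem_image_of_mem _ hmem) a (Finset.mem_preimage.mpr hi)
          a' (Finset.mem_preimage.mpr hj) hle
        exact congrArg Sum.inl this
      · obtain ⟨b, rfl⟩ := hR i hi
        obtain ⟨b', rfl⟩ := hR j hj
        have hmem : s ∈ π.parts.filter fun s => ∀ x ∈ s, ∃ b : B, x = Sum.inr b :=
          Finset.mem_filter.mpr ⟨hs, hR⟩
        have := ha2 _ (Finset.mem_image_of_mem _ hmem) b (Finset.mem_preimage.mpr hi)
          b' (Finset.mem_preimage.mpr hj) hle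
        exact congrArg Sum.inr this
    · -- quotient antisymmetry
      set R := fun s t : Finset (A ⊕ B) => s ∈ π.parts ∧ t ∈ π.parts ∧
        ∃ p ∈ s, ∃ q ∈ t, (ordinalSum P1 P2).le p q with hR
      have stepR : ∀ u v, R u v → (∀ x ∈ u, ∃ b : B, x = Sum.inr b) →
          (∀ x ∈ v, ∃ b : B, x = Sum.inr b) := by
        rintro u v ⟨hu, hv, p, hp, q, hq, hle⟩ hRu
        obtain ⟨b, rfl⟩ := hRu p hp
        rcases hpure v hv with hL | hRv
        · obtain ⟨a, rfl⟩ := hL q hq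
          exact hle.elim
        · exact hRv
      have stepL : ∀ u v, R u v → (∀ x ∈ v, ∃ a : A, x = Sum.inl a) →
          (∀ x ∈ u, ∃ a : A, x = Sum.inl a) := by
        rintro u v ⟨hu, hv, p, hp, q, hq, hle⟩ hLv
        obtain ⟨a, rfl⟩ := hLv q hq
        rcases hpure u hu with hLu | hRu
        · exact hLu
        · obtain ⟨b, rfl⟩ := hRu p hp
          exact hle.elim
      have memparts : ∀ u v, Relation.TransGen R u v → u ∈ π.parts ∧ v ∈ π.parts := by
        intro u v h
        induction h with
        | single h => exact ⟨h.1, h.2.1⟩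
        | tail hab hbc ih => exact ⟨ih.1, hbc.2.1⟩
      have monoR : ∀ u v, Relation.TransGen R u v →
          (∀ x ∈ u, ∃ b : B, x = Sum.inr b) → (∀ x ∈ v, ∃ b : B, x = Sum.inr b) := by
        intro u v h
        induction h with
        | single h => exact stepR _ _ h
        | tail hab hbc ih => exact fun hu => stepR _ _ hbc (ih hu)
      have monoL : ∀ u v, Relation.TransGen R u v →
          (∀ x ∈ v, ∃ a : A, x = Sum.inl a) → (∀ x ∈ u, ∃ a : A, x = Sum.inl a) := by
        intro u v h
        induction h with
        | single h => exact stepL _ _ h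
        | tail hab hbc ih => exact fun hv => ih (stepL _ _ hbc hv)
      have baseL : ∀ u v, R u v → (∀ x ∈ u, ∃ a : A, x = Sum.inl a) →
          (∀ x ∈ v, ∃ a : A, x = Sum.inl a) →
          (fun X Y => X ∈ ((π.parts.filter fun s => ∀ x ∈ s, ∃ a : A, x = Sum.inl a)).image
                (fun s => s.preimage Sum.inl Sum.inl_injective.injOn) ∧
              Y ∈ ((π.parts.filter fun s => ∀ x ∈ s, ∃ a : A, x = Sum.inl a)).image
                (fun s => s.preimage Sum.inl Sum.inl_injective.injOn) ∧
              ∃ p ∈ X, ∃ q ∈ Y, P1.le p q)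
            (u.preimage Sum.inl Sum.inl_injective.injOn)
            (v.preimage Sum.inl Sum.inl_injective.injOn) := by
        rintro u v ⟨hu, hv, p, hp, q, hq, hle⟩ hLu hLv
        obtain ⟨a, rfl⟩ := hLu p hp
        obtain ⟨a', rfl⟩ := hLv q hq
        exact ⟨Finset.mem_image_of_mem _ (Finset.mem_filter.mpr ⟨hu, hLu⟩),
          Finset.mem_image_of_mem _ (Finset.mem_filter.mpr ⟨hv, hLv⟩),
          a, Finset.mem_preimage.mpr hp, a', Finset.mem_preimage.mpr hq, hle⟩
      have baseR : ∀ u v, R u v → (∀ x ∈ u, ∃ b : B, x = Sum.inr b) →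
          (∀ x ∈ v, ∃ b : B, x = Sum.inr b) →
          (fun X Y => X ∈ ((π.parts.filter fun s => ∀ x ∈ s, ∃ b : B, x = Sum.inr b)).image
                (fun s => s.preimage Sum.inr Sum.inr_injective.injOn) ∧
              Y ∈ ((π.parts.filter fun s => ∀ x ∈ s, ∃ b : B, x = Sum.inr b)).image
                (fun s => s.preimage Sum.inr Sum.inr_injective.injOn) ∧
              ∃ p ∈ X, ∃ q ∈ Y, P2.le p q)
            (u.preimage Sum.inr Sum.inr_injective.injOn)
            (v.preimage Sum.inr Sum.inr_injective.injOn) := by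
        rintro u v ⟨hu, hv, p, hp, q, hq, hle⟩ hRu hRv
        obtain ⟨b, rfl⟩ := hRu p hp
        obtain ⟨b', rfl⟩ := hRv q hq
        exact ⟨Finset.mem_image_of_mem _ (Finset.mem_filter.mpr ⟨hu, hRu⟩),
          Finset.mem_image_of_mem _ (Finset.mem_filter.mpr ⟨hv, hRv⟩),
          b, Finset.mem_preimage.mpr hp, b', Finset.mem_preimage.mpr hq, hle⟩
      have descendL : ∀ u v, Relation.TransGen R u v →
          (∀ x ∈ v, ∃ a : A, x = Sum.inl a) →
          QRel P1 (((π.parts.filter fun s => ∀ x ∈ s, ∃ a : A, x = Sum.inl a)).image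
            fun s => s.preimage Sum.inl Sum.inl_injective.injOn)
            (u.preimage Sum.inl Sum.inl_injective.injOn)
            (v.preimage Sum.inl Sum.inl_injective.injOn) := by
        intro u v h
        induction h with
        | single h =>
          intro hLv
          exact Relation.TransGen.single (baseL _ _ h (stepL _ _ h hLv) hLv)
        | tail hab hbc ih =>
          intro hLv
          have hLb := stepL _ _ hbc hLv
          exact (ih hLb).tail (baseL _ _ hbc hLb hLv)
      have descendR : ∀ u v, Relation.TransGen R u v →
          (∀ x ∈ u, ∃ b : B, x = Sum.inr b) →
          QRel P2 (((π.parts.filter fun s => ∀ x ∈ s, ∃ b : B, x = Sum.inr b)).image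
            fun s => s.preimage Sum.inr Sum.inr_injective.injOn)
            (u.preimage Sum.inr Sum.inr_injective.injOn)
            (v.preimage Sum.inr Sum.inr_injective.injOn) := by
        intro u v h
        induction h with
        | single h =>
          intro hRu
          exact Relation.TransGen.single (baseR _ _ h hRu (stepR _ _ h hRu))
        | tail hab hbc ih =>
          intro hRu
          have hRb := monoR _ _ hab hRu
          exact (ih hRu).tail (baseR _ _ hbc hRb (stepR _ _ hbc hRb))
      intro s t h1 h2
      have h1' : Relation.TransGen R s t := h1
      have h2' : Relation.TransGen R t s := h2
      have hs := (memparts _ _ h1').1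
      rcases hpure s hs with hLs | hRs
      · have hLt := monoL _ _ h2' hLs
        have heq := hq1 _ _ (descendL _ _ h1' hLt) (descendL _ _ h2' hLs)
        calc s = (s.preimage Sum.inl Sum.inl_injective.injOn).image Sum.inl :=
              (imgpreL s hLs).symm
          _ = (t.preimage Sum.inl Sum.inl_injective.injOn).image Sum.inl := by rw [heq]
          _ = t := imgpreL t hLt
      · have hRt := monoR _ _ h1' hRs
        have heq := hq2 _ _ (descendR _ _ h1' hRs) (descendR _ _ h2' hRt)
        calc s = (s.preimage Sum.inr Sum.inr_injective.injOn).image Sum.inr :=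
              (imgpreR s hRs).symm
          _ = (t.preimage Sum.inr Sum.inr_injective.injOn).image Sum.inr := by rw [heq]
          _ = t := imgpreR t hRt
end

section
/- Let A_ℓ(t) denote the coefficient of x₁x₂···x_ℓ in the formal power series (1 − ∑_{j=1}^{∞} e_j(x)·(t−1)(2t−1)···((j−1)t−1))^{−1}, where e_j is the j-th elementary symmetric function in infinitely many variables. Then A_{ℓ+1}(t) = (1 + ℓt)·A_ℓ(t) for all ℓ ≥ 1, and hence A_ℓ(t) = 1·(1+t)(1+2t)···(1+(ℓ−1)t). -/
open scoped Classical

noncomputable section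

/-- `⟨t⟩_j = (t−1)(2t−1)⋯((j−1)t−1)`, a polynomial in `t` with `j − 1` factors. -/
def bracket (j : ℕ) : Polynomial ℤ :=
  ∏ i ∈ Finset.range (j - 1), (Polynomial.C ((i : ℤ) + 1) * Polynomial.X - 1)

/-- The formal power series `∑_{j=1}^{∞} e_j(x)·⟨t⟩_j` in the variables `x₀, x₁, x₂, …`
(indexed by `ℕ`), with coefficients in `ℤ[t]`: since `e_j` is the sum of all squarefree
monomials of degree `j`, the coefficient of a monomial `d` is `⟨t⟩_{|supp d|}` if `d` is
squarefree and nonzero, and `0` otherwise. -/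
def eSeries : MvPowerSeries ℕ (Polynomial ℤ) := fun d =>
  if (∀ i ∈ d.support, d i = 1) ∧ d.support.Nonempty then bracket d.support.card else 0

/-- The exponent vector of the squarefree monomial `x₀x₁⋯x_{ℓ−1}` (the first `ℓ` variables). -/
def sqfree (ℓ : ℕ) : ℕ →₀ ℕ := ∑ i ∈ Finset.range ℓ, Finsupp.single i 1

section Aux
open Finset Polynomial

def ind (S : Finset ℕ) : ℕ →₀ ℕ := ∑ i ∈ S, Finsupp.single i 1

lemma ind_apply (S : Finset ℕ) (j : ℕ) : ind S j = if j ∈ S then 1 else 0 := by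
  classical
  rw [ind, Finsupp.finset_sum_apply]
  simp [Finsupp.single_apply]

lemma ind_support (S : Finset ℕ) : (ind S).support = S := by
  ext j
  simp [Finsupp.mem_support_iff, ind_apply]

def P (n : ℕ) : Polynomial ℤ := ∏ i ∈ Finset.range n, (1 + Polynomial.C (i : ℤ) * Polynomial.X)

lemma bracket_succ (j : ℕ) (hj : 1 ≤ j) :
    bracket (j + 1) = bracket j * (Polynomial.C (j : ℤ) * Polynomial.X - 1) := by
  obtain ⟨m, rfl⟩ := Nat.exists_eq_add_of_le hj
  rw [bracket, bracket, Nat.add_sub_cancel_left]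
  rw [show 1 + m = m + 1 by omega, Nat.succ_sub_one, Finset.prod_range_succ]
  push_cast; ring

lemma bracket_one : bracket 1 = 1 := by simp [bracket]

lemma P_succ (n : ℕ) : P (n + 1) = P n * (1 + Polynomial.C (n : ℤ) * Polynomial.X) := by
  rw [P, P, Finset.prod_range_succ]

lemma key : ∀ n : ℕ, 1 ≤ n →
    ∑ j ∈ Finset.range (n + 1),
      (n.choose j) • (if j = 0 then (0 : Polynomial ℤ) else bracket j * P (n - j)) = P n := by
  intro n hn
  induction n, hn using Nat.le_induction with
  | base => simp [Finset.sum_range_succ, bracket_one, P]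
  | succ n hn IH =>
    rw [Finset.sum_range_succ'] 
    simp only [reduceIte, smul_zero, add_zero]
    have hstep : ∀ k ∈ Finset.range (n + 1),
        ((n+1).choose (k+1)) • (if k + 1 = 0 then (0 : Polynomial ℤ) else bracket (k+1) * P (n + 1 - (k+1)))
        = (n.choose k) • (bracket (k+1) * P (n - k)) + (n.choose (k+1)) • (bracket (k+1) * P (n - k)) := by
      intro k hk
      rw [if_neg (by omega), Nat.choose_succ_succ, add_smul, show n + 1 - (k+1) = n - k by omega]
    rw [Finset.sum_congr rfl hstep, Finset.sum_add_distrib]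
    have hIH : ∑ k ∈ Finset.range n, (n.choose (k+1)) • (bracket (k+1) * P (n - (k+1))) = P n := by
      rw [Finset.sum_range_succ'] at IH
      simpa using IH
    have hsplit1 : ∑ k ∈ Finset.range (n+1), (n.choose k) • (bracket (k+1) * P (n - k))
        = (∑ k ∈ Finset.range n, (n.choose (k+1)) • (bracket (k+2) * P (n - (k+1)))) + P n := by
      rw [Finset.sum_range_succ']
      simp [bracket_one]
    have hsplit2 : ∑ k ∈ Finset.range (n+1), (n.choose (k+1)) • (bracket (k+1) * P (n - k))
        = ∑ k ∈ Finset.range n, (n.choose (k+1)) • (bracket (k+1) * P (n - k)) := by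
      rw [Finset.sum_range_succ]
      simp
    rw [hsplit1, hsplit2, add_right_comm, ← Finset.sum_add_distrib]
    have hpt : ∀ k ∈ Finset.range n,
        (n.choose (k+1)) • (bracket (k+2) * P (n - (k+1))) + (n.choose (k+1)) • (bracket (k+1) * P (n - k))
        = (n.choose (k+1)) • (Polynomial.C (n:ℤ) * Polynomial.X * (bracket (k+1) * P (n - (k+1)))) := by
      intro k hk
      rw [Finset.mem_range] at hk
      rw [← smul_add]
      congr 1
      rw [bracket_succ (k+1) (by omega), show n - k = (n - (k+1)) + 1 by omega, P_succ]
      have hcast : ((n - (k+1) : ℕ) : ℤ) = (n : ℤ) - ((k:ℤ) + 1) := by push_cast; omega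
      rw [hcast]
      simp only [map_sub, map_add, map_one, map_natCast]
      push_cast
      ring
    rw [Finset.sum_congr rfl hpt]
    have hout : ∑ k ∈ Finset.range n,
        (n.choose (k+1)) • (Polynomial.C (n:ℤ) * Polynomial.X * (bracket (k+1) * P (n - (k+1))))
        = Polynomial.C (n:ℤ) * Polynomial.X * P n := by
      rw [← hIH, Finset.mul_sum]
      exact Finset.sum_congr rfl fun k _ => (mul_smul_comm _ _ _).symm
    rw [hout, P_succ]
    ring

lemma pair_eq {S : Finset ℕ} {p : (ℕ →₀ ℕ) × (ℕ →₀ ℕ)} (hp : p.1 + p.2 = ind S) :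
    p.1 = ind p.1.support ∧ p.2 = ind (S \ p.1.support) := by
  classical
  have h : ∀ j, p.1 j + p.2 j = ind S j := fun j => by
    rw [← Finsupp.add_apply, hp]
  constructor
  · ext j
    have hj := h j
    rw [ind_apply] at hj
    simp only [ind_apply, Finsupp.mem_support_iff, ne_eq, ite_not]
    split_ifs at * <;> omega
  · ext j
    have hj := h j
    rw [ind_apply] at hj
    simp only [ind_apply, Finset.mem_sdiff, Finsupp.mem_support_iff, ne_eq, not_not]
    by_cases hS : j ∈ S
    · rw [if_pos hS] at hj
      by_cases h1 : p.1 j = 0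
      · rw [if_pos ⟨hS, h1⟩]; omega
      · rw [if_neg (by tauto)]; omega
    · rw [if_neg hS] at hj
      rw [if_neg (by tauto)]; omega

lemma coeff_mul_ind (S : Finset ℕ) (f g : MvPowerSeries ℕ (Polynomial ℤ)) :
    MvPowerSeries.coeff (R := Polynomial ℤ) (ind S) (f * g) =
      ∑ T ∈ S.powerset,
        MvPowerSeries.coeff (R := Polynomial ℤ) (ind T) f *
          MvPowerSeries.coeff (R := Polynomial ℤ) (ind (S \ T)) g := by
  classical
  rw [MvPowerSeries.coeff_mul]
  refine Finset.sum_bij' (fun p _ => p.1.support) (fun T _ => (ind T, ind (S \ T)))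
    ?_ ?_ ?_ ?_ ?_
  · intro p hp
    rw [Finset.HasAntidiagonal.mem_antidiagonal] at hp
    rw [Finset.mem_powerset]
    intro j hj
    rw [Finsupp.mem_support_iff] at hj
    have h : p.1 j + p.2 j = ind S j := by rw [← Finsupp.add_apply, hp]
    rw [ind_apply] at h
    by_contra hjS
    rw [if_neg hjS] at h
    omega
  · intro T hT
    rw [Finset.mem_powerset] at hT
    rw [Finset.HasAntidiagonal.mem_antidiagonal]
    ext j
    simp only [Finsupp.add_apply, ind_apply, Finset.mem_sdiff]
    by_cases h1 : j ∈ T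
    · rw [if_pos h1, if_neg (by tauto), if_pos (hT h1)]
    · by_cases h2 : j ∈ S <;> simp [h1, h2]
  · intro p hp
    rw [Finset.HasAntidiagonal.mem_antidiagonal] at hp
    obtain ⟨h1, h2⟩ := pair_eq hp
    exact Prod.ext h1.symm h2.symm
  · intro T _
    exact ind_support T
  · intro p hp
    rw [Finset.HasAntidiagonal.mem_antidiagonal] at hp
    obtain ⟨h1, h2⟩ := pair_eq hp
    rw [← h1, ← h2]

lemma eSeries_ind (T : Finset ℕ) :
    MvPowerSeries.coeff (R := Polynomial ℤ) (ind T) eSeries =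
      if T.Nonempty then bracket T.card else 0 := by
  have : MvPowerSeries.coeff (R := Polynomial ℤ) (ind T) eSeries = eSeries (ind T) := rfl
  rw [this, eSeries, ind_support]
  congr 1
  simp only [eq_iff_iff, and_iff_right_iff_imp]
  intro _ i hi
  rw [ind_apply, if_pos hi]

lemma coeff_ind (G : MvPowerSeries ℕ (Polynomial ℤ)) (hG : (1 - eSeries) * G = 1) :
    ∀ n : ℕ, ∀ S : Finset ℕ, S.card = n →
      MvPowerSeries.coeff (R := Polynomial ℤ) (ind S) G = P n := by
  intro n
  induction n using Nat.strong_induction_on with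
  | _ n IH =>
    intro S hS
    rcases Nat.eq_zero_or_pos n with h0 | hpos
    · subst h0
      rw [Finset.card_eq_zero] at hS
      subst hS
      have h0' : ind ∅ = 0 := by ext j; simp [ind_apply]
      rw [h0', MvPowerSeries.coeff_zero_eq_constantCoeff]
      have hc := congrArg (MvPowerSeries.constantCoeff (σ := ℕ) (R := Polynomial ℤ)) hG
      rw [map_mul, map_sub, map_one] at hc
      have he : MvPowerSeries.constantCoeff (σ := ℕ) (R := Polynomial ℤ) eSeries = 0 := by
        show eSeries 0 = 0
        simp [eSeries]
      rw [he, sub_zero, one_mul] at hc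
      rw [hc]
      simp [P]
    · have hG' : G = 1 + eSeries * G := by
        have h := hG
        rw [sub_mul, one_mul, sub_eq_iff_eq_add] at h
        exact h
      have hSne : S.Nonempty := by rw [← Finset.card_pos, hS]; exact hpos
      have hne : ind S ≠ 0 := by
        intro h
        have h2 := ind_apply S hSne.choose
        rw [h] at h2
        simp [hSne.choose_spec] at h2
      conv_lhs => rw [hG']
      rw [map_add, MvPowerSeries.coeff_one, if_neg hne, zero_add, coeff_mul_ind]
      have hterm : ∀ T ∈ S.powerset,
          MvPowerSeries.coeff (R := Polynomial ℤ) (ind T) eSeries *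
            MvPowerSeries.coeff (R := Polynomial ℤ) (ind (S \ T)) G
          = if T = ∅ then 0 else bracket T.card * P (n - T.card) := by
        intro T hT
        rw [Finset.mem_powerset] at hT
        rw [eSeries_ind]
        by_cases hTe : T = ∅
        · subst hTe; simp
        · have hTne : T.Nonempty := Finset.nonempty_iff_ne_empty.mpr hTe
          have hle : T.card ≤ n := hS ▸ Finset.card_le_card hT
          have hlt : n - T.card < n := by
            have := Finset.card_pos.mpr hTne; omega
          rw [if_pos hTne, if_neg hTe]
          congr 1
          exact IH (n - T.card) hlt _ (by rw [Finset.card_sdiff_of_subset hT, hS])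
      rw [Finset.sum_congr rfl hterm, Finset.sum_powerset, hS]
      have hinner : ∀ j ∈ Finset.range (n + 1),
          (∑ T ∈ Finset.powersetCard j S, (if T = ∅ then (0 : Polynomial ℤ) else bracket T.card * P (n - T.card)))
          = (n.choose j) • (if j = 0 then (0 : Polynomial ℤ) else bracket j * P (n - j)) := by
        intro j _
        have hconst : ∀ T ∈ Finset.powersetCard j S,
            (if T = ∅ then (0 : Polynomial ℤ) else bracket T.card * P (n - T.card))
            = (if j = 0 then (0 : Polynomial ℤ) else bracket j * P (n - j)) := by
          intro T hT
          rw [Finset.mem_powersetCard] at hT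
          obtain ⟨_, hcard⟩ := hT
          rw [← hcard]
          by_cases hTe : T = ∅
          · rw [if_pos hTe, if_pos (by simp [hTe])]
          · rw [if_neg hTe, if_neg (fun h => hTe (Finset.card_eq_zero.mp h))]
        rw [Finset.sum_congr rfl hconst, Finset.sum_const, Finset.card_powersetCard, hS]
      rw [Finset.sum_congr rfl hinner]
      exact key n hpos

end Aux

/-- Let `A_ℓ(t)` be the coefficient of `x₁x₂⋯x_ℓ` in the formal power series
`(1 − ∑_{j≥1} e_j(x)·(t−1)(2t−1)⋯((j−1)t−1))^{−1}` (in infinitely many variables).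
Then `A_{ℓ+1}(t) = (1 + ℓt)·A_ℓ(t)` for all `ℓ ≥ 1`, and hence
`A_ℓ(t) = 1·(1+t)(1+2t)⋯(1+(ℓ−1)t)`. -/
theorem stmt19 (G : MvPowerSeries ℕ (Polynomial ℤ))
    (hG : (1 - eSeries) * G = 1) :
    (∀ ℓ : ℕ, 1 ≤ ℓ →
      MvPowerSeries.coeff (R := Polynomial ℤ) (sqfree (ℓ + 1)) G =
        (1 + Polynomial.C (ℓ : ℤ) * Polynomial.X) *
          MvPowerSeries.coeff (R := Polynomial ℤ) (sqfree ℓ) G) ∧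
    (∀ ℓ : ℕ, 1 ≤ ℓ →
      MvPowerSeries.coeff (R := Polynomial ℤ) (sqfree ℓ) G =
        ∏ i ∈ Finset.range ℓ, (1 + Polynomial.C (i : ℤ) * Polynomial.X)) := by
  have hs : ∀ ℓ : ℕ, MvPowerSeries.coeff (R := Polynomial ℤ) (sqfree ℓ) G = P ℓ := by
    intro ℓ
    have h : sqfree ℓ = ind (Finset.range ℓ) := rfl
    rw [h]
    exact coeff_ind G hG ℓ (Finset.range ℓ) (Finset.card_range ℓ)
  constructor
  · intro ℓ _
    rw [hs, hs, P_succ]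
    ring
  · intro ℓ _
    rw [hs]
    rfl
end
end
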